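/- arXiv:1812.05453 — 8 statements merged into one kernel-verified Lean document; each statement's English description precedes it below -/
import Mathlib

section
/- Let k be an algebraically closed field and V a 2-dimensional k-vector space with basis {x, y}. For every 1-dimensional subspace R of V ⊗ V there exists g ∈ GL(V) such that (g ⊗ g)(R) is one of the following subspaces: span{x⊗x}; span{x⊗y + q·(y⊗x)} for some q ∈ k; span{x⊗x + x⊗y − y⊗x}. -/
open scoped TensorProduct

namespace Stmt0Aux

variable {k V : Type} [Field k] [AddCommGroup V] [Module k V]

/-- The tensor with coefficient matrix `[[a₁, a₂],[a₃, a₄]]` in the basis `b ⊗ b`. -/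
noncomputable def T (b : Module.Basis (Fin 2) k V) (a₁ a₂ a₃ a₄ : k) : V ⊗[k] V :=
  a₁ • (b 0 ⊗ₜ[k] b 0) + a₂ • (b 0 ⊗ₜ[k] b 1) + a₃ • (b 1 ⊗ₜ[k] b 0) + a₄ • (b 1 ⊗ₜ[k] b 1)

lemma smul_T (b : Module.Basis (Fin 2) k V) (μ a₁ a₂ a₃ a₄ : k) :
    μ • T b a₁ a₂ a₃ a₄ = T b (μ * a₁) (μ * a₂) (μ * a₃) (μ * a₄) := by
  simp [T, smul_add, smul_smul]

lemma T_eq (b : Module.Basis (Fin 2) k V) {x1 x2 x3 x4 y1 y2 y3 y4 : k}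
    (h1 : x1 = y1) (h2 : x2 = y2) (h3 : x3 = y3) (h4 : x4 = y4) :
    T b x1 x2 x3 x4 = T b y1 y2 y3 y4 := by rw [h1, h2, h3, h4]

/-- `t` can be moved (up to scalar) to one of the three normal forms. -/
def Nice (b : Module.Basis (Fin 2) k V) (t : V ⊗[k] V) : Prop :=
  ∃ g : V ≃ₗ[k] V, ∃ μ : k, μ ≠ 0 ∧
    (TensorProduct.map g.toLinearMap g.toLinearMap t = μ • T b 1 0 0 0 ∨
     (∃ q : k, TensorProduct.map g.toLinearMap g.toLinearMap t = μ • T b 0 1 q 0) ∨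
     TensorProduct.map g.toLinearMap g.toLinearMap t = μ • T b 1 1 (-1) 0)

/-- The linear automorphism of `V` with matrix `[[p, q],[r, s]]` (columns are images of basis). -/
noncomputable def mkGL (b : Module.Basis (Fin 2) k V) (p q r s : k) (h : p * s - q * r ≠ 0) :
    V ≃ₗ[k] V :=
  LinearEquiv.ofLinear
    (b.constr k ![p • b 0 + r • b 1, q • b 0 + s • b 1])
    (b.constr k ![(s / (p * s - q * r)) • b 0 + (-(r / (p * s - q * r))) • b 1,
        (-(q / (p * s - q * r))) • b 0 + (p / (p * s - q * r)) • b 1])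
    (by
      apply b.ext
      intro i
      fin_cases i <;>
        · simp only [Fin.zero_eta, Fin.mk_one, LinearMap.comp_apply, Module.Basis.constr_basis,
            Matrix.cons_val_zero, Matrix.cons_val_one, Matrix.head_cons, map_add, map_smul,
            LinearMap.id_apply]
          match_scalars <;> (field_simp; try ring) <;> rw [← sub_mul, mul_comm s p, mul_inv_cancel₀ h])
    (by
      apply b.ext
      intro i
      fin_cases i <;>
        · simp only [Fin.zero_eta, Fin.mk_one, LinearMap.comp_apply, Module.Basis.constr_basis,
            Matrix.cons_val_zero, Matrix.cons_val_one, Matrix.head_cons, map_add, map_smul,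
            LinearMap.id_apply]
          match_scalars <;> (field_simp; try ring))

lemma mkGL_apply0 (b : Module.Basis (Fin 2) k V) (p q r s : k) (h : p * s - q * r ≠ 0) :
    mkGL b p q r s h (b 0) = p • b 0 + r • b 1 := by
  simp [mkGL, Module.Basis.constr_basis]

lemma mkGL_apply1 (b : Module.Basis (Fin 2) k V) (p q r s : k) (h : p * s - q * r ≠ 0) :
    mkGL b p q r s h (b 1) = q • b 0 + s • b 1 := by
  simp [mkGL, Module.Basis.constr_basis]

lemma map_T (b : Module.Basis (Fin 2) k V) (p q r s : k) (h : p * s - q * r ≠ 0) (a₁ a₂ a₃ a₄ : k) :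
    TensorProduct.map (mkGL b p q r s h).toLinearMap (mkGL b p q r s h).toLinearMap
        (T b a₁ a₂ a₃ a₄) =
      T b (p * (a₁ * p + a₂ * q) + q * (a₃ * p + a₄ * q))
        (p * (a₁ * r + a₂ * s) + q * (a₃ * r + a₄ * s))
        (r * (a₁ * p + a₂ * q) + s * (a₃ * p + a₄ * q))
        (r * (a₁ * r + a₂ * s) + s * (a₃ * r + a₄ * s)) := by
  simp only [T, map_add, map_smul, TensorProduct.map_tmul, LinearEquiv.coe_coe,
    mkGL_apply0, mkGL_apply1, TensorProduct.add_tmul, TensorProduct.tmul_add, smul_add,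
    ← TensorProduct.smul_tmul', ← TensorProduct.tmul_smul, smul_smul]
  simp only [TensorProduct.tmul_smul]
  module

lemma Nice.refl_case (b : Module.Basis (Fin 2) k V) (t : V ⊗[k] V) (μ : k) (hμ : μ ≠ 0)
    (h : t = μ • T b 1 0 0 0 ∨ (∃ q : k, t = μ • T b 0 1 q 0) ∨ t = μ • T b 1 1 (-1) 0) :
    Nice b t := by
  refine ⟨LinearEquiv.refl k V, μ, hμ, ?_⟩
  simpa using h

lemma Nice.step (b : Module.Basis (Fin 2) k V) {a₁ a₂ a₃ a₄ : k} (p q r s μ A B C D : k)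
    (hdet : p * s - q * r ≠ 0) (hμ : μ ≠ 0)
    (hA : μ * (p * (a₁ * p + a₂ * q) + q * (a₃ * p + a₄ * q)) = A)
    (hB : μ * (p * (a₁ * r + a₂ * s) + q * (a₃ * r + a₄ * s)) = B)
    (hC : μ * (r * (a₁ * p + a₂ * q) + s * (a₃ * p + a₄ * q)) = C)
    (hD : μ * (r * (a₁ * r + a₂ * s) + s * (a₃ * r + a₄ * s)) = D)
    (h : Nice b (T b A B C D)) : Nice b (T b a₁ a₂ a₃ a₄) := by
  obtain ⟨g, ν, hν, hg⟩ := h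
  have hcomp : ∀ t : V ⊗[k] V,
      TensorProduct.map ((mkGL b p q r s hdet).trans g).toLinearMap
        ((mkGL b p q r s hdet).trans g).toLinearMap t =
      TensorProduct.map g.toLinearMap g.toLinearMap
        (TensorProduct.map (mkGL b p q r s hdet).toLinearMap
          (mkGL b p q r s hdet).toLinearMap t) := by
    intro t
    have : ((mkGL b p q r s hdet).trans g).toLinearMap =
        g.toLinearMap.comp (mkGL b p q r s hdet).toLinearMap := rfl
    rw [this, TensorProduct.map_comp, LinearMap.comp_apply]
  have hT : TensorProduct.map (mkGL b p q r s hdet).toLinearMap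
      (mkGL b p q r s hdet).toLinearMap (T b a₁ a₂ a₃ a₄) = μ⁻¹ • T b A B C D := by
    rw [map_T, smul_T, ← hA, ← hB, ← hC, ← hD,
      inv_mul_cancel_left₀ hμ, inv_mul_cancel_left₀ hμ,
      inv_mul_cancel_left₀ hμ, inv_mul_cancel_left₀ hμ]
  refine ⟨(mkGL b p q r s hdet).trans g, μ⁻¹ * ν, by
    simp [hμ, hν, inv_eq_zero], ?_⟩
  rw [hcomp, hT, map_smul]
  rcases hg with h1 | ⟨q', h1⟩ | h1
  · left; rw [h1, smul_smul]
  · right; left; exact ⟨q', by rw [h1, smul_smul]⟩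
  · right; right; rw [h1, smul_smul]

/-- Case of zero diagonal: `[[0,B],[C,0]]` with `(B, C) ≠ 0`. -/
lemma nice_offdiag (b : Module.Basis (Fin 2) k V) (B C : k) (h : B ≠ 0 ∨ C ≠ 0) :
    Nice b (T b 0 B C 0) := by
  rcases h with hB | hC
  · refine Nice.refl_case b _ B hB (Or.inr (Or.inl ⟨C / B, ?_⟩))
    rw [smul_T]
    exact T_eq b (by ring) (by ring) (by field_simp) (by ring)
  · by_cases hB : B ≠ 0
    · refine Nice.refl_case b _ B hB (Or.inr (Or.inl ⟨C / B, ?_⟩))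
      rw [smul_T]
      exact T_eq b (by ring) (by ring) (by field_simp) (by ring)
    · push_neg at hB
      subst hB
      -- swap the basis vectors
      refine Nice.step b 0 1 1 0 1 0 C 0 0 (by norm_num) one_ne_zero
        (by ring) (by ring) (by ring) (by ring) ?_
      refine Nice.refl_case b _ C hC (Or.inr (Or.inl ⟨0, ?_⟩))
      rw [smul_T]
      exact T_eq b (by ring) (by ring) (by ring) (by ring)

end Stmt0Aux

namespace Stmt0Aux

variable {k V : Type} [Field k] [IsAlgClosed k] [AddCommGroup V] [Module k V]

/-- Main case: `a₁ ≠ 0`. -/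
lemma nice_main (b : Module.Basis (Fin 2) k V) (a₁ a₂ a₃ a₄ : k) (ha : a₁ ≠ 0) :
    Nice b (T b a₁ a₂ a₃ a₄) := by
  obtain ⟨t₁, ht₁⟩ := IsAlgClosed.exists_root
    (Polynomial.C a₁ * Polynomial.X ^ 2 + Polynomial.C (a₂ + a₃) * Polynomial.X
      + Polynomial.C a₄) (by rw [Polynomial.degree_quadratic ha]; norm_num)
  have hroot : a₁ * t₁ ^ 2 + (a₂ + a₃) * t₁ + a₄ = 0 := by
    simpa [Polynomial.IsRoot, Polynomial.eval_add, Polynomial.eval_mul] using ht₁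
  by_cases hdisc : (a₂ + a₃) ^ 2 - 4 * (a₁ * a₄) = 0
  · -- discriminant zero: double root, hence `2 a₁ t₁ + (a₂+a₃) = 0`
    have hsq : (2 * a₁ * t₁ + (a₂ + a₃)) ^ 2 = 0 := by
      linear_combination 4 * a₁ * hroot + hdisc
    have hE : 2 * a₁ * t₁ + (a₂ + a₃) = 0 := by
      exact pow_eq_zero_iff (n := 2) (by norm_num) |>.mp hsq
    -- congruence by [[1,0],[t₁,1]] kills the last coefficient
    refine Nice.step b 1 0 t₁ 1 1 a₁ (a₁ * t₁ + a₂) (-(a₁ * t₁ + a₂)) 0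
      (by norm_num) one_ne_zero (by ring) (by ring)
      (by linear_combination hE) (by linear_combination hroot) ?_
    by_cases hB : a₁ * t₁ + a₂ = 0
    · rw [hB, neg_zero]
      refine Nice.refl_case b _ a₁ ha (Or.inl ?_)
      rw [smul_T]
      exact T_eq b (by ring) (by ring) (by ring) (by ring)
    · -- rescale second basis vector to reach [[1,1],[-1,0]]
      refine Nice.step b 1 0 0 (a₁ / (a₁ * t₁ + a₂)) a₁⁻¹ 1 1 (-1) 0
        (by simpa using div_ne_zero ha hB) (inv_ne_zero ha) (by field_simp; ring)
        (by field_simp; ring) (by field_simp; ring) (by field_simp; ring) ?_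
      refine Nice.refl_case b _ 1 one_ne_zero (Or.inr (Or.inr ?_))
      rw [smul_T]
      exact T_eq b (by ring) (by ring) (by ring) (by ring)
  · -- discriminant nonzero: two distinct isotropic vectors
    obtain ⟨t₂, ht₂⟩ : ∃ t₂ : k, a₁ * t₂ = -(a₂ + a₃) - a₁ * t₁ :=
      ⟨(-(a₂ + a₃) - a₁ * t₁) / a₁, by field_simp⟩
    have hE : 2 * a₁ * t₁ + (a₂ + a₃) ≠ 0 := by
      intro h0
      apply hdisc
      linear_combination -(4 * a₁) * hroot + (2 * a₁ * t₁ + (a₂ + a₃)) * h0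
    have hdet : t₁ * 1 - 1 * t₂ ≠ 0 := by
      intro h0
      apply hE
      linear_combination a₁ * h0 + ht₂
    have hroot2 : a₁ * (t₂ * (a₁ * t₂ + a₂ * 1) + 1 * (a₃ * t₂ + a₄ * 1)) = 0 := by
      linear_combination (a₁ * (t₂ - t₁)) * ht₂ + a₁ * hroot
    have hD0 : t₂ * (a₁ * t₂ + a₂ * 1) + 1 * (a₃ * t₂ + a₄ * 1) = 0 := by
      rcases mul_eq_zero.mp hroot2 with h | h
      · exact absurd h ha
      · exact h
    refine Nice.step b t₁ 1 t₂ 1 1 0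
      (t₁ * (a₁ * t₂ + a₂ * 1) + 1 * (a₃ * t₂ + a₄ * 1))
      (t₂ * (a₁ * t₁ + a₂ * 1) + 1 * (a₃ * t₁ + a₄ * 1)) 0
      hdet one_ne_zero (by linear_combination hroot) (by ring) (by ring)
      (by linear_combination hD0) ?_
    have hBC : a₁ * ((t₁ * (a₁ * t₂ + a₂ * 1) + 1 * (a₃ * t₂ + a₄ * 1)) +
        (t₂ * (a₁ * t₁ + a₂ * 1) + 1 * (a₃ * t₁ + a₄ * 1))) =
        -((a₂ + a₃) ^ 2 - 4 * (a₁ * a₄)) := by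
      linear_combination (2 * a₁ * t₁ + (a₂ + a₃)) * ht₂ + (-2 * a₁) * hroot
    refine nice_offdiag b _ _ ?_
    by_contra h0
    push_neg at h0
    rw [h0.1, h0.2, add_zero, mul_zero] at hBC
    exact hdisc (by linear_combination hBC)
    

lemma classify (b : Module.Basis (Fin 2) k V) (a₁ a₂ a₃ a₄ : k)
    (h : ¬(a₁ = 0 ∧ a₂ = 0 ∧ a₃ = 0 ∧ a₄ = 0)) : Nice b (T b a₁ a₂ a₃ a₄) := by
  by_cases ha₁ : a₁ = 0
  · by_cases ha₄ : a₄ = 0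
    · subst ha₁; subst ha₄
      refine nice_offdiag b a₂ a₃ ?_
      by_contra h0
      push_neg at h0
      exact h ⟨rfl, h0.1, h0.2, rfl⟩
    · -- swap, then use the main case with `a₄ ≠ 0`
      refine Nice.step b 0 1 1 0 1 a₄ a₃ a₂ a₁ (by norm_num) one_ne_zero
        (by ring) (by ring) (by ring) (by ring) ?_
      exact nice_main b a₄ a₃ a₂ a₁ ha₄
  · exact nice_main b a₁ a₂ a₃ a₄ ha₁

end Stmt0Aux

open Stmt0Aux in
/-- Let `k` be an algebraically closed field and `V` a 2-dimensional
`k`-vector space with basis `{x, y}` (here `x = b 0`, `y = b 1`).  Every 1-dimensional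
subspace `R` of `V ⊗ V` can be moved by some `g ∈ GL(V)` (acting as `g ⊗ g`) onto one of:
`span{x⊗x}`, `span{x⊗y + q·(y⊗x)}` for some `q ∈ k`, or `span{x⊗x + x⊗y − y⊗x}`. -/
theorem stmt0 (k V : Type) [Field k] [IsAlgClosed k] [AddCommGroup V] [Module k V]
    (b : Module.Basis (Fin 2) k V) (R : Submodule k (V ⊗[k] V)) (hR : Module.finrank k R = 1) :
    ∃ g : V ≃ₗ[k] V,
      Submodule.map (TensorProduct.map g.toLinearMap g.toLinearMap) R =
          Submodule.span k {b 0 ⊗ₜ[k] b 0} ∨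
      (∃ q : k, Submodule.map (TensorProduct.map g.toLinearMap g.toLinearMap) R =
          Submodule.span k {b 0 ⊗ₜ[k] b 1 + q • (b 1 ⊗ₜ[k] b 0)}) ∨
      Submodule.map (TensorProduct.map g.toLinearMap g.toLinearMap) R =
          Submodule.span k {b 0 ⊗ₜ[k] b 0 + b 0 ⊗ₜ[k] b 1 - b 1 ⊗ₜ[k] b 0} := by
  classical
  -- extract a nonzero generator of `R`
  obtain ⟨v, hv0, hvgen⟩ := (finrank_eq_one_iff' (K := k) (V := R)).mp hR
  have hvne : (v : V ⊗[k] V) ≠ 0 := fun h => hv0 (Subtype.ext h)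
  have hspan : R = Submodule.span k {(v : V ⊗[k] V)} := by
    apply le_antisymm
    · intro w hw
      obtain ⟨c, hc⟩ := hvgen ⟨w, hw⟩
      have : c • (v : V ⊗[k] V) = w := congrArg Subtype.val hc
      rw [← this]
      exact Submodule.smul_mem _ _ (Submodule.mem_span_singleton_self _)
    · rw [Submodule.span_singleton_le_iff_mem]
      exact v.2
  -- coefficients of `v` in the tensor basis
  have hvT : (v : V ⊗[k] V) =
      T b ((b.tensorProduct b).repr v (0, 0)) ((b.tensorProduct b).repr v (0, 1))
        ((b.tensorProduct b).repr v (1, 0)) ((b.tensorProduct b).repr v (1, 1)) := by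
    conv_lhs => rw [← (b.tensorProduct b).sum_repr (v : V ⊗[k] V)]
    rw [Fintype.sum_prod_type]
    simp only [Fin.sum_univ_two, Module.Basis.tensorProduct_apply, T]
    abel
  have hne : ¬((b.tensorProduct b).repr v (0, 0) = 0 ∧ (b.tensorProduct b).repr v (0, 1) = 0 ∧
      (b.tensorProduct b).repr v (1, 0) = 0 ∧ (b.tensorProduct b).repr v (1, 1) = 0) := by
    rintro ⟨h1, h2, h3, h4⟩
    apply hvne
    rw [hvT, h1, h2, h3, h4]
    simp [T]
  have hnice : Nice b ((v : V ⊗[k] V)) := by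
    rw [hvT]; exact classify b _ _ _ _ hne
  obtain ⟨g, μ, hμ, hcases⟩ := hnice
  refine ⟨g, ?_⟩
  have hmap : ∀ t : V ⊗[k] V,
      TensorProduct.map g.toLinearMap g.toLinearMap (v : V ⊗[k] V) = t →
      Submodule.map (TensorProduct.map g.toLinearMap g.toLinearMap) R =
        Submodule.span k {t} := by
    intro t ht
    rw [hspan, Submodule.map_span, Set.image_singleton, ht]
  rcases hcases with h1 | ⟨q, h1⟩ | h1
  · left
    rw [hmap _ h1, Submodule.span_singleton_smul_eq (IsUnit.mk0 μ hμ)]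
    have : T b 1 0 0 0 = b 0 ⊗ₜ[k] b 0 := by simp [T]
    rw [this]
  · right; left
    refine ⟨q, ?_⟩
    rw [hmap _ h1, Submodule.span_singleton_smul_eq (IsUnit.mk0 μ hμ)]
    have : T b 0 1 q 0 = b 0 ⊗ₜ[k] b 1 + q • (b 1 ⊗ₜ[k] b 0) := by simp [T]
    rw [this]
  · right; right
    rw [hmap _ h1, Submodule.span_singleton_smul_eq (IsUnit.mk0 μ hμ)]
    have : T b 1 1 (-1) 0 = b 0 ⊗ₜ[k] b 0 + b 0 ⊗ₜ[k] b 1 - b 1 ⊗ₜ[k] b 0 := by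
      simp [T, sub_eq_add_neg]
    rw [this]
end

section
/- Let k be an algebraically closed field and V a 2-dimensional k-vector space with basis {x, y}. For every 2-dimensional subspace R of V ⊗ V there exists g ∈ GL(V) such that (g ⊗ g)(R) is one of the following subspaces: span{x⊗y, y⊗x}; span{x⊗x, y⊗y}; span{x⊗x, y⊗x}; span{x⊗x, x⊗y − q·(y⊗x)} for some q ∈ k; span{x⊗y, x⊗x − y⊗y}; span{x⊗y, x⊗x − y⊗x − q·(y⊗y)} for some q ∈ k. -/
open scoped TensorProduct
open Submodule Polynomial
open Module

namespace Stmt1Aux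

variable {k V : Type} [Field k] [AddCommGroup V] [Module k V]

noncomputable def cd (b : Basis (Fin 2) k V) (X : V ⊗[k] V) (i j : Fin 2) : k :=
  (b.tensorProduct b).repr X (i, j)

noncomputable def det0 (b : Basis (Fin 2) k V) (X : V ⊗[k] V) : k :=
  cd b X 0 0 * cd b X 1 1 - cd b X 0 1 * cd b X 1 0

noncomputable def mx (b : Basis (Fin 2) k V) (X Y : V ⊗[k] V) : k :=
  cd b X 0 0 * cd b Y 1 1 + cd b Y 0 0 * cd b X 1 1 - cd b X 0 1 * cd b Y 1 0 -
    cd b Y 0 1 * cd b X 1 0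

noncomputable def wg (b : Basis (Fin 2) k V) (p q : V) : k :=
  b.repr p 0 * b.repr q 1 - b.repr p 1 * b.repr q 0

@[simp] lemma cd_tmul (b : Basis (Fin 2) k V) (p q : V) (i j : Fin 2) :
    cd b (p ⊗ₜ[k] q) i j = b.repr p i * b.repr q j := by
  simp [cd, Basis.tensorProduct_repr_tmul_apply]; ring

@[simp] lemma cd_add (b : Basis (Fin 2) k V) (X Y : V ⊗[k] V) (i j : Fin 2) :
    cd b (X + Y) i j = cd b X i j + cd b Y i j := by simp [cd]

@[simp] lemma cd_smul (b : Basis (Fin 2) k V) (s : k) (X : V ⊗[k] V) (i j : Fin 2) :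
    cd b (s • X) i j = s * cd b X i j := by simp [cd]

@[simp] lemma cd_sub (b : Basis (Fin 2) k V) (X Y : V ⊗[k] V) (i j : Fin 2) :
    cd b (X - Y) i j = cd b X i j - cd b Y i j := by simp [cd]

lemma V_ext (b : Basis (Fin 2) k V) {x y : V} (h0 : b.repr x 0 = b.repr y 0)
    (h1 : b.repr x 1 = b.repr y 1) : x = y := by
  apply b.repr.injective
  ext i
  fin_cases i <;> assumption

lemma T_ext (b : Basis (Fin 2) k V) {X Y : V ⊗[k] V}
    (h : ∀ i j, cd b X i j = cd b Y i j) : X = Y := by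
  apply (b.tensorProduct b).repr.injective
  ext ⟨i, j⟩
  exact h i j

lemma expandV (b : Basis (Fin 2) k V) (p : V) :
    p = b.repr p 0 • b 0 + b.repr p 1 • b 1 := by
  have h := b.sum_repr p
  rw [Fin.sum_univ_two] at h
  exact h.symm

lemma expandT (b : Basis (Fin 2) k V) (X : V ⊗[k] V) :
    X = cd b X 0 0 • (b 0 ⊗ₜ[k] b 0) + cd b X 0 1 • (b 0 ⊗ₜ[k] b 1) +
        cd b X 1 0 • (b 1 ⊗ₜ[k] b 0) + cd b X 1 1 • (b 1 ⊗ₜ[k] b 1) := by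
  apply T_ext b
  intro i j
  fin_cases i <;> fin_cases j <;>
    simp [Basis.repr_self, Finsupp.single_apply]

@[simp] lemma repr_combo0 (b : Basis (Fin 2) k V) (a c : k) :
    b.repr (a • b 0 + c • b 1) 0 = a := by
  simp [Basis.repr_self, Finsupp.single_apply]

@[simp] lemma repr_combo1 (b : Basis (Fin 2) k V) (a c : k) :
    b.repr (a • b 0 + c • b 1) 1 = c := by
  simp [Basis.repr_self, Finsupp.single_apply]

lemma zero_of_combo (b : Basis (Fin 2) k V) {a c : k} (h : a • b 0 + c • b 1 = 0) :
    a = 0 ∧ c = 0 := by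
  have h0 := congrArg (fun x => b.repr x 0) h
  have h1 := congrArg (fun x => b.repr x 1) h
  simp [Finsupp.single_apply] at h0 h1
  exact ⟨h0, h1⟩

lemma V_ne_zero (b : Basis (Fin 2) k V) {p : V} (h : b.repr p 0 ≠ 0 ∨ b.repr p 1 ≠ 0) :
    p ≠ 0 := by
  rintro rfl
  simp at h

lemma coord_ne_zero (b : Basis (Fin 2) k V) {p : V} (h : p ≠ 0) :
    b.repr p 0 ≠ 0 ∨ b.repr p 1 ≠ 0 := by
  by_contra hc
  push_neg at hc
  exact h (by rw [expandV b p, hc.1, hc.2]; simp)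



lemma wg_smul_left (b : Basis (Fin 2) k V) (a : k) (p q : V) :
    wg b (a • p) q = a * wg b p q := by simp [wg]; ring

lemma wg_smul_right (b : Basis (Fin 2) k V) (a : k) (p q : V) :
    wg b p (a • q) = a * wg b p q := by simp [wg]; ring

lemma wg_anti (b : Basis (Fin 2) k V) (p q : V) : wg b q p = -wg b p q := by
  simp [wg]; ring

lemma wg_self_smul (b : Basis (Fin 2) k V) (a : k) (p : V) : wg b p (a • p) = 0 := by
  simp [wg]; ring

/-- if the wedge vanishes and `p ≠ 0`, then `q` is a multiple of `p`. -/
lemma par_of_wg (b : Basis (Fin 2) k V) {p q : V} (h : wg b p q = 0) (hp : p ≠ 0) :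
    ∃ c : k, q = c • p := by
  rcases coord_ne_zero b hp with h0 | h1
  · refine ⟨b.repr q 0 / b.repr p 0, V_ext b ?_ ?_⟩ <;> simp [wg] at h ⊢ <;>
      field_simp <;> linear_combination h
  · refine ⟨b.repr q 1 / b.repr p 1, V_ext b ?_ ?_⟩ <;> simp [wg] at h ⊢ <;>
      field_simp <;> linear_combination -h

lemma wg_ne_of_npar (b : Basis (Fin 2) k V) {p q : V} (hp : p ≠ 0)
    (h : ∀ c : k, q ≠ c • p) : wg b p q ≠ 0 := by
  intro h0
  rcases par_of_wg b h0 hp with ⟨c, hc⟩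
  exact h c hc

/-- Cramer decomposition of `r` in the basis `p, q`. -/
lemma cramer (b : Basis (Fin 2) k V) {p q : V} (h : wg b p q ≠ 0) (r : V) :
    r = (wg b r q / wg b p q) • p + (wg b p r / wg b p q) • q := by
  apply V_ext b <;> simp only [map_add, map_smul, Finsupp.add_apply, Finsupp.smul_apply, smul_eq_mul] <;>
    field_simp <;> simp only [wg] <;> ring

/-- rank-one factorization of a tensor with vanishing determinant. -/
lemma factor (b : Basis (Fin 2) k V) {X : V ⊗[k] V} (hX : X ≠ 0) (hd : det0 b X = 0) :
    ∃ u v : V, u ≠ 0 ∧ v ≠ 0 ∧ X = u ⊗ₜ[k] v := by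
  have hd' : cd b X 0 0 * cd b X 1 1 - cd b X 0 1 * cd b X 1 0 = 0 := hd
  have hXe := expandT b X
  by_cases h00 : cd b X 0 0 ≠ 0
  · refine ⟨b 0 + (cd b X 1 0 / cd b X 0 0) • b 1, cd b X 0 0 • b 0 + cd b X 0 1 • b 1,
      V_ne_zero b (by simp), V_ne_zero b (by simp [h00]), ?_⟩
    rw [hXe]
    apply T_ext b
    intro i j
    fin_cases i <;> fin_cases j <;>
      simp [TensorProduct.add_tmul, TensorProduct.tmul_add, TensorProduct.smul_tmul',
        TensorProduct.tmul_smul, Basis.repr_self, Finsupp.single_apply, smul_smul] <;>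
      field_simp <;>
      first
        | linear_combination hd'
        | linear_combination -hd'
  · push_neg at h00
    by_cases h01 : cd b X 0 1 ≠ 0
    · have h10 : cd b X 1 0 = 0 := by
        have h2 : cd b X 0 1 * cd b X 1 0 = 0 := by linear_combination -hd' + cd b X 1 1 * h00
        exact (mul_eq_zero.1 h2).resolve_left h01
      refine ⟨cd b X 0 1 • b 0 + cd b X 1 1 • b 1, b 1,
        V_ne_zero b (by simp [h01]), V_ne_zero b (by simp), ?_⟩
      rw [hXe, h00, h10]
      apply T_ext b
      intro i j
      fin_cases i <;> fin_cases j <;>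
        simp [TensorProduct.add_tmul, TensorProduct.smul_tmul',
          Basis.repr_self, Finsupp.single_apply]
    · push_neg at h01
      by_cases h10 : cd b X 1 0 ≠ 0
      · refine ⟨b 1, cd b X 1 0 • b 0 + cd b X 1 1 • b 1,
          V_ne_zero b (by simp), V_ne_zero b (by simp [h10]), ?_⟩
        rw [hXe, h00, h01]
        apply T_ext b
        intro i j
        fin_cases i <;> fin_cases j <;>
          simp [TensorProduct.tmul_add, TensorProduct.tmul_smul,
            Basis.repr_self, Finsupp.single_apply]
      · push_neg at h10
        have h11 : cd b X 1 1 ≠ 0 := by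
          intro h11
          exact hX (by rw [hXe, h00, h01, h10, h11]; simp)
        refine ⟨cd b X 1 1 • b 1, b 1, V_ne_zero b (by simp [h11]), V_ne_zero b (by simp), ?_⟩
        rw [hXe, h00, h01, h10]
        apply T_ext b
        intro i j
        fin_cases i <;> fin_cases j <;>
          simp [TensorProduct.smul_tmul', Basis.repr_self, Finsupp.single_apply]

lemma pencil (b : Basis (Fin 2) k V) (s : k) (X Y : V ⊗[k] V) :
    det0 b (s • X + Y) = s ^ 2 * det0 b X + s * mx b X Y + det0 b Y := by
  simp [det0, mx]; ring

lemma det0_add (b : Basis (Fin 2) k V) (X Y : V ⊗[k] V) :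
    det0 b (X + Y) = det0 b X + mx b X Y + det0 b Y := by
  simp [det0, mx]; ring

lemma det0_tmul (b : Basis (Fin 2) k V) (p q : V) : det0 b (p ⊗ₜ[k] q) = 0 := by
  simp [det0]; ring

lemma mx_smul_left (b : Basis (Fin 2) k V) (c : k) (X Y : V ⊗[k] V) :
    mx b (c • X) Y = c * mx b X Y := by
  simp [mx]; ring

lemma det0_tmul_add_tmul (b : Basis (Fin 2) k V) (u v w z : V) :
    det0 b (u ⊗ₜ[k] v + w ⊗ₜ[k] z) = wg b u w * wg b v z := by
  simp [det0, wg]; ring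

lemma exists_root_quad (k : Type) [Field k] [IsAlgClosed k] {a : k} (p q : k) (ha : a ≠ 0) :
    ∃ s : k, a * s ^ 2 + p * s + q = 0 := by
  obtain ⟨x, hx⟩ := IsAlgClosed.exists_root (C a * X ^ 2 + C p * X + C q)
    (by rw [Polynomial.degree_quadratic ha]; exact (by norm_num))
  refine ⟨x, ?_⟩
  have := hx
  simpa [Polynomial.IsRoot] using this



section SpanLemmas

variable {M : Type} [AddCommGroup M] [Module k M]

lemma mem2 {x y z : M} (s t : k) (h : s • x + t • y = z) : z ∈ span k {x, y} :=
  mem_span_pair.2 ⟨s, t, h⟩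

lemma span_pair_le {x y x' y' : M} (h1 : x' ∈ span k {x, y}) (h2 : y' ∈ span k {x, y}) :
    span k {x', y'} ≤ span k {x, y} := by
  rw [Submodule.span_le, Set.insert_subset_iff, Set.singleton_subset_iff]
  exact ⟨h1, h2⟩

lemma span_smul_smul {x y : M} {c d : k} (hc : c ≠ 0) (hd : d ≠ 0) :
    span k {c • x, d • y} = span k {x, y} := by
  refine le_antisymm (span_pair_le (mem2 c 0 (by module)) (mem2 0 d (by module)))
    (span_pair_le (mem2 c⁻¹ 0 ?_) (mem2 0 d⁻¹ ?_)) <;>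
    · match_scalars <;> field_simp <;> simp

lemma span_smul_left {x y : M} {c : k} (hc : c ≠ 0) :
    span k {c • x, y} = span k {x, y} := by
  have := span_smul_smul (x := x) (y := y) hc one_ne_zero
  simpa using this

lemma span_smul_right {x y : M} {c : k} (hc : c ≠ 0) :
    span k {x, c • y} = span k {x, y} := by
  have := span_smul_smul (x := x) (y := y) one_ne_zero hc
  simpa using this

lemma span_shear {x y : M} (a : k) {c : k} (hc : c ≠ 0) :
    span k {x, a • x + c • y} = span k {x, y} := by
  refine le_antisymm (span_pair_le (mem2 1 0 (by module)) (mem2 a c (by module)))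
    (span_pair_le (mem2 1 0 (by module)) (mem2 (-a/c) c⁻¹ ?_))
  match_scalars <;> field_simp <;> ring

variable (k) in
/-- linear independence as an elementwise predicate -/
def Ind (x y : M) : Prop := ∀ s t : k, s • x + t • y = 0 → s = 0 ∧ t = 0

lemma Ind.ne0l {x y : M} (h : Ind k x y) : x ≠ 0 := by
  intro h0
  simpa using (h 1 0 (by rw [h0]; module)).1

lemma Ind.ne0r {x y : M} (h : Ind k x y) : y ≠ 0 := by
  intro h0
  simpa using (h 0 1 (by rw [h0]; module)).2

lemma Ind.symm {x y : M} (h : Ind k x y) : Ind k y x := by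
  intro s t hst
  have := h t s (by rw [← hst]; module)
  exact ⟨this.2, this.1⟩

lemma Ind.nsmul {x y : M} (h : Ind k x y) (c : k) : y ≠ c • x := by
  intro hc
  simpa using (h (-c) 1 (by rw [hc]; module)).2

lemma Ind.shear {x y : M} (h : Ind k x y) (a : k) {c : k} (hc : c ≠ 0) :
    Ind k x (a • x + c • y) := by
  intro s t hst
  have h2 : (s + t * a) • x + (t * c) • y = 0 := by rw [← hst]; module
  obtain ⟨h3, h4⟩ := h _ _ h2
  have ht : t = 0 := by
    rcases mul_eq_zero.1 h4 with h | h
    · exact h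
    · exact absurd h hc
  subst ht
  simp at h3 ⊢
  exact h3

lemma Ind.map {N : Type} [AddCommGroup N] [Module k N] {x y : M} (h : Ind k x y)
    (f : M →ₗ[k] N) (hf : Function.Injective f) : Ind k (f x) (f y) := by
  intro s t hst
  refine h s t (hf ?_)
  simpa [map_add, map_smul] using hst

end SpanLemmas

lemma map_span_pair {M N : Type} [AddCommGroup M] [Module k M] [AddCommGroup N] [Module k N]
    (f : M →ₗ[k] N) (x y : M) :
    Submodule.map f (span k {x, y}) = span k {f x, f y} := by
  rw [Submodule.map_span, Set.image_insert_eq, Set.image_singleton]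



lemma wg_nz_l (b : Basis (Fin 2) k V) {p q : V} (h : wg b p q ≠ 0) : p ≠ 0 := by
  intro h0
  exact h (by simp [wg, h0])

lemma wg_nz_r (b : Basis (Fin 2) k V) {p q : V} (h : wg b p q ≠ 0) : q ≠ 0 := by
  intro h0
  exact h (by simp [wg, h0])

lemma li_of_wg (b : Basis (Fin 2) k V) {p q : V} (h : wg b p q ≠ 0) :
    LinearIndependent k ![p, q] := by
  rw [LinearIndependent.pair_iff]
  intro s t hst
  have h0 := congrArg (fun x => b.repr x 0) hst
  have h1 := congrArg (fun x => b.repr x 1) hst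
  simp [map_add, map_smul] at h0 h1
  constructor
  · have hs : s * wg b p q = 0 := by
      simp only [wg]
      linear_combination b.repr q 1 * h0 - b.repr q 0 * h1
    exact (mul_eq_zero.1 hs).resolve_right h
  · have ht : t * wg b p q = 0 := by
      simp only [wg]
      linear_combination b.repr p 0 * h1 - b.repr p 1 * h0
    exact (mul_eq_zero.1 ht).resolve_right h

lemma hfr (b : Basis (Fin 2) k V) : Module.finrank k V = 2 := by
  rw [Module.finrank_eq_card_basis b, Fintype.card_fin]

noncomputable def bOf (b : Basis (Fin 2) k V) {p q : V} (h : wg b p q ≠ 0) :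
    Basis (Fin 2) k V :=
  basisOfLinearIndependentOfCardEqFinrank (li_of_wg b h) (by rw [hfr b, Fintype.card_fin])

@[simp] lemma bOf_zero (b : Basis (Fin 2) k V) {p q : V} (h : wg b p q ≠ 0) :
    bOf b h 0 = p := by
  simp [bOf, coe_basisOfLinearIndependentOfCardEqFinrank]

@[simp] lemma bOf_one (b : Basis (Fin 2) k V) {p q : V} (h : wg b p q ≠ 0) :
    bOf b h 1 = q := by
  simp [bOf, coe_basisOfLinearIndependentOfCardEqFinrank]

noncomputable def gOf (b : Basis (Fin 2) k V) {p q : V} (h : wg b p q ≠ 0) : V ≃ₗ[k] V :=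
  (bOf b h).equiv b (Equiv.refl _)

@[simp] lemma gOf_fst (b : Basis (Fin 2) k V) {p q : V} (h : wg b p q ≠ 0) :
    gOf b h p = b 0 := by
  have h2 := Basis.equiv_apply (b' := b) (bOf b h) 0 (Equiv.refl _)
  rw [bOf_zero b h] at h2
  simpa [gOf] using h2

@[simp] lemma gOf_snd (b : Basis (Fin 2) k V) {p q : V} (h : wg b p q ≠ 0) :
    gOf b h q = b 1 := by
  have h2 := Basis.equiv_apply (b' := b) (bOf b h) 1 (Equiv.refl _)
  rw [bOf_one b h] at h2
  simpa [gOf] using h2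

@[simp] lemma wg_basis (b : Basis (Fin 2) k V) : wg b (b 0) (b 1) = 1 := by
  simp [wg, Basis.repr_self, Finsupp.single_apply]

/-- wedge nonvanishing transfers through a linear equivalence. -/
lemma wg_map_ne (b : Basis (Fin 2) k V) (g : V ≃ₗ[k] V) {p q : V} (h : wg b p q ≠ 0) :
    wg b (g p) (g q) ≠ 0 := by
  have hp : p ≠ 0 := wg_nz_l b h
  apply wg_ne_of_npar b (by simpa using hp)
  intro c hc
  have : q = c • p := g.injective (by simpa [map_smul] using hc)
  exact h (by rw [this, wg_self_smul])

/-- the "determinant" of `g` relative to `b`. -/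
noncomputable def dg (b : Basis (Fin 2) k V) (g : V ≃ₗ[k] V) : k := wg b (g (b 0)) (g (b 1))

lemma dg_ne (b : Basis (Fin 2) k V) (g : V ≃ₗ[k] V) : dg b g ≠ 0 :=
  wg_map_ne b g (by simp)

lemma det0_map (b : Basis (Fin 2) k V) (g : V ≃ₗ[k] V) (X : V ⊗[k] V) :
    det0 b (TensorProduct.map g.toLinearMap g.toLinearMap X) = dg b g ^ 2 * det0 b X := by
  rw [expandT b X]
  simp only [map_add, map_smul, TensorProduct.map_tmul, LinearEquiv.coe_coe]
  simp only [det0, dg, wg, cd_add, cd_smul, cd_tmul, Basis.repr_self, Finsupp.single_apply]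
  norm_num
  ring

lemma mx_map (b : Basis (Fin 2) k V) (g : V ≃ₗ[k] V) (X Y : V ⊗[k] V) :
    mx b (TensorProduct.map g.toLinearMap g.toLinearMap X)
      (TensorProduct.map g.toLinearMap g.toLinearMap Y) = dg b g ^ 2 * mx b X Y := by
  rw [expandT b X, expandT b Y]
  simp only [map_add, map_smul, TensorProduct.map_tmul, LinearEquiv.coe_coe]
  simp only [mx, dg, wg, cd_add, cd_smul, cd_tmul, Basis.repr_self, Finsupp.single_apply]
  norm_num
  ring

/-- rows: `span {x ⊗ p, x ⊗ q} = span {x ⊗ b0, x ⊗ b1}` when `p, q` span. -/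
lemma span_row (b : Basis (Fin 2) k V) (x : V) {p q : V} (h : wg b p q ≠ 0) :
    span k {x ⊗ₜ[k] p, x ⊗ₜ[k] q} = span k {x ⊗ₜ[k] b 0, x ⊗ₜ[k] b 1} := by
  have key : ∀ r : V, ∀ s t : k, s • p + t • q = r →
      x ⊗ₜ[k] r ∈ span k {x ⊗ₜ[k] p, x ⊗ₜ[k] q} := by
    intro r s t hr
    refine mem2 s t ?_
    rw [← hr]
    simp [TensorProduct.tmul_add, TensorProduct.tmul_smul]
  have key2 : ∀ r : V, ∀ s t : k, s • b 0 + t • b 1 = r →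
      x ⊗ₜ[k] r ∈ span k {x ⊗ₜ[k] b 0, x ⊗ₜ[k] b 1} := by
    intro r s t hr
    refine mem2 s t ?_
    rw [← hr]
    simp [TensorProduct.tmul_add, TensorProduct.tmul_smul]
  refine le_antisymm (span_pair_le ?_ ?_) (span_pair_le ?_ ?_)
  · exact key2 p (b.repr p 0) (b.repr p 1) (expandV b p).symm
  · exact key2 q (b.repr q 0) (b.repr q 1) (expandV b q).symm
  · exact key (b 0) (wg b (b 0) q / wg b p q) (wg b p (b 0) / wg b p q) (cramer b h (b 0)).symm
  · exact key (b 1) (wg b (b 1) q / wg b p q) (wg b p (b 1) / wg b p q) (cramer b h (b 1)).symm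

/-- columns: `span {p ⊗ x, q ⊗ x} = span {b0 ⊗ x, b1 ⊗ x}` when `p, q` span. -/
lemma span_col (b : Basis (Fin 2) k V) (x : V) {p q : V} (h : wg b p q ≠ 0) :
    span k {p ⊗ₜ[k] x, q ⊗ₜ[k] x} = span k {b 0 ⊗ₜ[k] x, b 1 ⊗ₜ[k] x} := by
  have key : ∀ r : V, ∀ s t : k, s • p + t • q = r →
      r ⊗ₜ[k] x ∈ span k {p ⊗ₜ[k] x, q ⊗ₜ[k] x} := by
    intro r s t hr
    refine mem2 s t ?_
    rw [← hr]
    simp [TensorProduct.add_tmul, TensorProduct.smul_tmul']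
  have key2 : ∀ r : V, ∀ s t : k, s • b 0 + t • b 1 = r →
      r ⊗ₜ[k] x ∈ span k {b 0 ⊗ₜ[k] x, b 1 ⊗ₜ[k] x} := by
    intro r s t hr
    refine mem2 s t ?_
    rw [← hr]
    simp [TensorProduct.add_tmul, TensorProduct.smul_tmul']
  refine le_antisymm (span_pair_le ?_ ?_) (span_pair_le ?_ ?_)
  · exact key2 p (b.repr p 0) (b.repr p 1) (expandV b p).symm
  · exact key2 q (b.repr q 0) (b.repr q 1) (expandV b q).symm
  · exact key (b 0) (wg b (b 0) q / wg b p q) (wg b p (b 0) / wg b p q) (cramer b h (b 0)).symm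
  · exact key (b 1) (wg b (b 1) q / wg b p q) (wg b p (b 1) / wg b p q) (cramer b h (b 1)).symm



lemma exists_compl (b : Basis (Fin 2) k V) {u : V} (hu : u ≠ 0) :
    ∃ x : V, wg b u x ≠ 0 := by
  rcases coord_ne_zero b hu with h | h
  · exact ⟨b 1, by simp [wg, Basis.repr_self, Finsupp.single_apply, h]⟩
  · exact ⟨b 0, by simp [wg, Basis.repr_self, Finsupp.single_apply, h]⟩

lemma smul_cancel {c : k} (hc : c ≠ 0) {x y : V} (h : c • x = y) : x = c⁻¹ • y := by
  rw [← h, smul_smul, inv_mul_cancel₀ hc, one_smul]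

variable (b : Basis (Fin 2) k V)

/-- the target property. -/
def Conc (S : Submodule k (V ⊗[k] V)) : Prop :=
  ∃ g : V ≃ₗ[k] V,
      Submodule.map (TensorProduct.map g.toLinearMap g.toLinearMap) S =
          Submodule.span k {b 0 ⊗ₜ[k] b 1, b 1 ⊗ₜ[k] b 0} ∨
      Submodule.map (TensorProduct.map g.toLinearMap g.toLinearMap) S =
          Submodule.span k {b 0 ⊗ₜ[k] b 0, b 1 ⊗ₜ[k] b 1} ∨
      Submodule.map (TensorProduct.map g.toLinearMap g.toLinearMap) S =
          Submodule.span k {b 0 ⊗ₜ[k] b 0, b 1 ⊗ₜ[k] b 0} ∨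
      (∃ q : k, Submodule.map (TensorProduct.map g.toLinearMap g.toLinearMap) S =
          Submodule.span k {b 0 ⊗ₜ[k] b 0, b 0 ⊗ₜ[k] b 1 - q • (b 1 ⊗ₜ[k] b 0)}) ∨
      Submodule.map (TensorProduct.map g.toLinearMap g.toLinearMap) S =
          Submodule.span k {b 0 ⊗ₜ[k] b 1, b 0 ⊗ₜ[k] b 0 - b 1 ⊗ₜ[k] b 1} ∨
      (∃ q : k, Submodule.map (TensorProduct.map g.toLinearMap g.toLinearMap) S =
          Submodule.span k {b 0 ⊗ₜ[k] b 1, b 0 ⊗ₜ[k] b 0 - b 1 ⊗ₜ[k] b 0 - q • (b 1 ⊗ₜ[k] b 1)})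

/-- generic two-distinct-rank-one case: lands in family 6. -/
lemma lemIIg {u v w z : V} (huw : wg b u w ≠ 0) (hwv : wg b w v ≠ 0)
    (huv : wg b u v ≠ 0) (hzv : wg b z v ≠ 0) :
    Conc b (span k {u ⊗ₜ[k] v, w ⊗ₜ[k] z}) := by
  set D := wg b u v with hD
  set γ := wg b w v / D with hγ
  set δ := wg b u w / D with hδ
  have hγne : γ ≠ 0 := div_ne_zero hwv huv
  have hδne : δ ≠ 0 := div_ne_zero huw huv
  have hwdec : w = γ • u + δ • v := cramer b huv w
  set σ := wg b z v / D with hσ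
  set τ := wg b u z / D with hτ
  have hσne : σ ≠ 0 := div_ne_zero hzv huv
  have hzdec : z = σ • u + τ • v := cramer b huv z
  have hwed : wg b (γ • u) ((-δ) • v) ≠ 0 := by
    rw [wg_smul_left, wg_smul_right]
    exact mul_ne_zero hγne (mul_ne_zero (neg_ne_zero.2 hδne) huv)
  set g := gOf b hwed with hg
  have hgu : g u = γ⁻¹ • b 0 := smul_cancel hγne (by rw [← map_smul]; exact gOf_fst b hwed)
  have hgv : g v = (-δ)⁻¹ • b 1 := smul_cancel (neg_ne_zero.2 hδne)
    (by rw [← map_smul]; exact gOf_snd b hwed)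
  have hgw : g w = b 0 - b 1 := by
    rw [hwdec, map_add, map_smul, map_smul, hgu, hgv, smul_smul, smul_smul,
      mul_inv_cancel₀ hγne]
    have : δ * (-δ)⁻¹ = -1 := by field_simp
    rw [this]
    module
  have hgz : g z = (σ / γ) • b 0 + (-(τ / δ)) • b 1 := by
    rw [hzdec, map_add, map_smul, map_smul, hgu, hgv, smul_smul, smul_smul]
    have h1 : σ * γ⁻¹ = σ / γ := by ring
    have h2 : τ * (-δ)⁻¹ = -(τ / δ) := by rw [inv_neg, mul_neg, div_eq_mul_inv]
    rw [h1, h2]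
  set c0 := σ / γ with hc0
  set c1 := -(τ / δ) with hc1
  have hc0ne : c0 ≠ 0 := div_ne_zero hσne hγne
  refine ⟨g, Or.inr (Or.inr (Or.inr (Or.inr (Or.inr ⟨c1 / c0, ?_⟩))))⟩
  rw [map_span_pair]
  have e1 : TensorProduct.map g.toLinearMap g.toLinearMap (u ⊗ₜ[k] v) =
      ((-δ)⁻¹ * γ⁻¹) • (b 0 ⊗ₜ[k] b 1) := by
    simp only [TensorProduct.map_tmul, LinearEquiv.coe_coe, hgu, hgv,
      TensorProduct.smul_tmul', TensorProduct.tmul_smul, smul_smul]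
  have e2 : TensorProduct.map g.toLinearMap g.toLinearMap (w ⊗ₜ[k] z) =
      c1 • (b 0 ⊗ₜ[k] b 1) +
        c0 • (b 0 ⊗ₜ[k] b 0 - b 1 ⊗ₜ[k] b 0 - (c1 / c0) • (b 1 ⊗ₜ[k] b 1)) := by
    simp only [TensorProduct.map_tmul, LinearEquiv.coe_coe, hgw, hgz]
    simp only [TensorProduct.sub_tmul, TensorProduct.tmul_add, TensorProduct.tmul_smul,
      smul_sub, smul_add, smul_smul]
    match_scalars <;> field_simp
  rw [e1, e2, span_smul_left (mul_ne_zero (inv_ne_zero (neg_ne_zero.2 hδne)) (inv_ne_zero hγne)),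
    span_shear c1 hc0ne]

/-- case of two distinct rank-one rays. -/
lemma lemII {u v w z : V} (hu : u ≠ 0) (hv : v ≠ 0) (hw : w ≠ 0) (hz : z ≠ 0)
    (hind : Ind k (u ⊗ₜ[k] v) (w ⊗ₜ[k] z)) (huw : wg b u w ≠ 0) (hvz : wg b v z ≠ 0) :
    Conc b (span k {u ⊗ₜ[k] v, w ⊗ₜ[k] z}) := by
  by_cases h1 : wg b u v = 0
  · obtain ⟨c, hc⟩ := par_of_wg b h1 hu
    have hcne : c ≠ 0 := by rintro rfl; rw [zero_smul] at hc; exact hv hc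
    by_cases h2 : wg b w z = 0
    · obtain ⟨c', hc'⟩ := par_of_wg b h2 hw
      have hc'ne : c' ≠ 0 := by rintro rfl; rw [zero_smul] at hc'; exact hz hc'
      set g := gOf b huw with hg
      refine ⟨g, Or.inr (Or.inl ?_)⟩
      rw [map_span_pair]
      have e1 : TensorProduct.map g.toLinearMap g.toLinearMap (u ⊗ₜ[k] v) =
          c • (b 0 ⊗ₜ[k] b 0) := by
        simp only [TensorProduct.map_tmul, LinearEquiv.coe_coe, hc, map_smul, hg,
          gOf_fst b huw, TensorProduct.tmul_smul]
      have e2 : TensorProduct.map g.toLinearMap g.toLinearMap (w ⊗ₜ[k] z) =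
          c' • (b 1 ⊗ₜ[k] b 1) := by
        simp only [TensorProduct.map_tmul, LinearEquiv.coe_coe, hc', map_smul, hg,
          gOf_snd b huw, TensorProduct.tmul_smul]
      rw [e1, e2, span_smul_smul hcne hc'ne]
    · have h3 : wg b u z ≠ 0 := by
        intro h0
        obtain ⟨e, he⟩ := par_of_wg b h0 hu
        apply hvz
        rw [hc, he, wg_smul_left, wg_smul_right]
        have : wg b u u = 0 := by simp [wg]; ring
        rw [this, mul_zero, mul_zero]
      have := lemIIg b (u := w) (v := z) (w := u) (z := v)
        (by rw [wg_anti]; exact neg_ne_zero.2 huw) h3 h2 hvz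
      rwa [Set.pair_comm] at this
  · by_cases h3 : wg b w v = 0
    · obtain ⟨a, ha⟩ := par_of_wg b h3 hw  -- v = a • w
      have hane : a ≠ 0 := by rintro rfl; rw [zero_smul] at ha; exact hv ha
      by_cases h4 : wg b u z = 0
      · obtain ⟨e, he⟩ := par_of_wg b h4 hu  -- z = e • u
        have hene : e ≠ 0 := by rintro rfl; rw [zero_smul] at he; exact hz he
        set g := gOf b huw with hg
        refine ⟨g, Or.inl ?_⟩
        rw [map_span_pair]
        have e1 : TensorProduct.map g.toLinearMap g.toLinearMap (u ⊗ₜ[k] v) =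
            a • (b 0 ⊗ₜ[k] b 1) := by
          simp only [TensorProduct.map_tmul, LinearEquiv.coe_coe, ha, map_smul, hg,
            gOf_fst b huw, gOf_snd b huw, TensorProduct.tmul_smul]
        have e2 : TensorProduct.map g.toLinearMap g.toLinearMap (w ⊗ₜ[k] z) =
            e • (b 1 ⊗ₜ[k] b 0) := by
          simp only [TensorProduct.map_tmul, LinearEquiv.coe_coe, he, map_smul, hg,
            gOf_fst b huw, gOf_snd b huw, TensorProduct.tmul_smul]
        rw [e1, e2, span_smul_smul hane hene]
      · have h5 : wg b w z ≠ 0 := by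
          intro h0
          apply hvz
          rw [ha, wg_smul_left, h0, mul_zero]
        have := lemIIg b (u := w) (v := z) (w := u) (z := v)
          (by rw [wg_anti]; exact neg_ne_zero.2 huw) h4 h5 hvz
        rwa [Set.pair_comm] at this
    · exact lemIIg b huw h3 h1 (by rw [wg_anti]; exact neg_ne_zero.2 hvz)

/-- degenerate pencil case: common row or column. -/
lemma lemI {u v w z : V} (hu : u ≠ 0) (hv : v ≠ 0) (hw : w ≠ 0) (hz : z ≠ 0)
    (hind : Ind k (u ⊗ₜ[k] v) (w ⊗ₜ[k] z)) (hpar : wg b u w = 0 ∨ wg b v z = 0) :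
    Conc b (span k {u ⊗ₜ[k] v, w ⊗ₜ[k] z}) := by
  rcases hpar with h0 | h0
  · obtain ⟨c, hc⟩ := par_of_wg b h0 hu  -- w = c • u
    have hcne : c ≠ 0 := by rintro rfl; rw [zero_smul] at hc; exact hw hc
    have hvz : wg b v z ≠ 0 := by
      intro h1
      obtain ⟨e, he⟩ := par_of_wg b h1 hv  -- z = e • v
      have hene : e ≠ 0 := by rintro rfl; rw [zero_smul] at he; exact hz he
      refine hind.nsmul (c * e) ?_
      rw [hc, he]
      simp [TensorProduct.smul_tmul', smul_smul, mul_comm]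
    obtain ⟨u', hcomp⟩ := exists_compl b hu
    set g := gOf b hcomp with hg
    refine ⟨g, Or.inr (Or.inr (Or.inr (Or.inl ⟨0, ?_⟩)))⟩
    rw [map_span_pair]
    have e1 : TensorProduct.map g.toLinearMap g.toLinearMap (u ⊗ₜ[k] v) =
        b 0 ⊗ₜ[k] (g v) := by
      simp only [TensorProduct.map_tmul, LinearEquiv.coe_coe, hg, gOf_fst b hcomp]
    have e2 : TensorProduct.map g.toLinearMap g.toLinearMap (w ⊗ₜ[k] z) =
        b 0 ⊗ₜ[k] (c • g z) := by
      simp only [TensorProduct.map_tmul, LinearEquiv.coe_coe, hc, map_smul, hg,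
        gOf_fst b hcomp]
      rw [TensorProduct.smul_tmul, TensorProduct.tmul_smul]
    have hwg : wg b (g v) (c • g z) ≠ 0 := by
      rw [wg_smul_right]
      exact mul_ne_zero hcne (wg_map_ne b g hvz)
    rw [e1, e2, span_row b (b 0) hwg]
    simp
  · obtain ⟨e, he⟩ := par_of_wg b h0 hv  -- z = e • v
    have hene : e ≠ 0 := by rintro rfl; rw [zero_smul] at he; exact hz he
    have huw : wg b u w ≠ 0 := by
      intro h1
      obtain ⟨c, hc⟩ := par_of_wg b h1 hu  -- w = c • u
      refine hind.nsmul (c * e) ?_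
      rw [hc, he]
      simp [TensorProduct.smul_tmul', smul_smul, mul_comm]
    obtain ⟨v', hcomp⟩ := exists_compl b hv
    set g := gOf b hcomp with hg
    refine ⟨g, Or.inr (Or.inr (Or.inl ?_))⟩
    rw [map_span_pair]
    have e1 : TensorProduct.map g.toLinearMap g.toLinearMap (u ⊗ₜ[k] v) =
        (g u) ⊗ₜ[k] b 0 := by
      simp only [TensorProduct.map_tmul, LinearEquiv.coe_coe, hg, gOf_fst b hcomp]
    have e2 : TensorProduct.map g.toLinearMap g.toLinearMap (w ⊗ₜ[k] z) =
        (e • g w) ⊗ₜ[k] b 0 := by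
      simp only [TensorProduct.map_tmul, LinearEquiv.coe_coe, he, map_smul, hg,
        gOf_fst b hcomp]
      rw [TensorProduct.tmul_smul, TensorProduct.smul_tmul']
    have hwg : wg b (g u) (e • g w) ≠ 0 := by
      rw [wg_smul_right]
      exact mul_ne_zero hene (wg_map_ne b g huw)
    rw [e1, e2, span_col b (b 0) hwg]



lemma main2 [IsAlgClosed k] {P B : V ⊗[k] V} (hind : Ind k P B) (hdP : det0 b P = 0) :
    Conc b (span k {P, B}) := by
  obtain ⟨u, v, hu, hv, hP⟩ := factor b hind.ne0l hdP
  subst hP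
  by_cases hm : mx b (u ⊗ₜ[k] v) B = 0
  · by_cases hd : det0 b B = 0
    · -- Case I : degenerate pencil
      obtain ⟨w, z, hw, hz, hB⟩ := factor b hind.ne0r hd
      subst hB
      have hsum : wg b u w * wg b v z = 0 := by
        rw [← det0_tmul_add_tmul b u v w z, det0_add, det0_tmul, hm, hd]
        ring
      exact lemI b hu hv hw hz hind (mul_eq_zero.1 hsum)
    · -- Case III : double root
      by_cases huv : wg b u v = 0
      · -- III-a : lands in family 4
        obtain ⟨c, hc⟩ := par_of_wg b huv hu
        have hcne : c ≠ 0 := fun h => hv (by rw [hc, h, zero_smul])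
        obtain ⟨u', hcomp⟩ := exists_compl b hu
        set g := gOf b hcomp with hg
        set F := TensorProduct.map g.toLinearMap g.toLinearMap with hF
        have e1 : F (u ⊗ₜ[k] v) = c • (b 0 ⊗ₜ[k] b 0) := by
          simp only [hF, TensorProduct.map_tmul, LinearEquiv.coe_coe, hc, map_smul, hg,
            gOf_fst b hcomp, TensorProduct.tmul_smul]
        have hmm := mx_map b g (u ⊗ₜ[k] v) B
        rw [← hF, e1, mx_smul_left, hm, mul_zero] at hmm
        have hmE : mx b (b 0 ⊗ₜ[k] b 0) (F B) = cd b (F B) 1 1 := by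
          simp [mx, Basis.repr_self, Finsupp.single_apply]
        have hy11 : cd b (F B) 1 1 = 0 := by
          rw [← hmE]
          exact (mul_eq_zero.1 hmm).resolve_left hcne
        have hdd := det0_map b g B
        rw [← hF] at hdd
        have hdne : det0 b (F B) ≠ 0 := by
          rw [hdd]
          exact mul_ne_zero (pow_ne_zero _ (dg_ne b g)) hd
        have hprod : cd b (F B) 0 1 * cd b (F B) 1 0 ≠ 0 := by
          intro h
          apply hdne
          rw [det0, hy11]
          linear_combination -h
        have hy01 : cd b (F B) 0 1 ≠ 0 := left_ne_zero_of_mul hprod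
        have hy10 : cd b (F B) 1 0 ≠ 0 := right_ne_zero_of_mul hprod
        set q4 := -cd b (F B) 1 0 / cd b (F B) 0 1 with hq4
        have hB1e : F B = cd b (F B) 0 0 • (b 0 ⊗ₜ[k] b 0) +
            cd b (F B) 0 1 • (b 0 ⊗ₜ[k] b 1 - q4 • (b 1 ⊗ₜ[k] b 0)) := by
          apply T_ext b
          intro i j
          fin_cases i <;> fin_cases j <;>
            simp [hq4, Basis.repr_self, Finsupp.single_apply, hy11] <;> field_simp
        refine ⟨g, Or.inr (Or.inr (Or.inr (Or.inl ⟨q4, ?_⟩)))⟩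
        rw [← hF, map_span_pair, e1, span_smul_left hcne, hB1e,
          span_shear _ hy01]
      · -- III-b : lands in family 5
        set g := gOf b huv with hg
        set F := TensorProduct.map g.toLinearMap g.toLinearMap with hF
        have e1 : F (u ⊗ₜ[k] v) = b 0 ⊗ₜ[k] b 1 := by
          simp only [hF, TensorProduct.map_tmul, LinearEquiv.coe_coe, hg,
            gOf_fst b huv, gOf_snd b huv]
        have hmm := mx_map b g (u ⊗ₜ[k] v) B
        rw [← hF, e1, hm, mul_zero] at hmm
        have hmE : mx b (b 0 ⊗ₜ[k] b 1) (F B) = -cd b (F B) 1 0 := by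
          simp [mx, Basis.repr_self, Finsupp.single_apply]
        have hy10 : cd b (F B) 1 0 = 0 := neg_eq_zero.1 (hmE.symm.trans hmm)
        have hdd := det0_map b g B
        rw [← hF] at hdd
        have hdne : det0 b (F B) ≠ 0 := by
          rw [hdd]
          exact mul_ne_zero (pow_ne_zero _ (dg_ne b g)) hd
        have hprod : cd b (F B) 0 0 * cd b (F B) 1 1 ≠ 0 := by
          intro h
          apply hdne
          rw [det0, hy10]
          linear_combination h
        have hy00 : cd b (F B) 0 0 ≠ 0 := left_ne_zero_of_mul hprod
        have hy11 : cd b (F B) 1 1 ≠ 0 := right_ne_zero_of_mul hprod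
        obtain ⟨r, hr⟩ := IsAlgClosed.exists_pow_nat_eq
          (-(cd b (F B) 0 0 / cd b (F B) 1 1)) (n := 2) (by norm_num)
        have hrne : r ≠ 0 := by
          intro h0
          apply hy00
          have h6 : cd b (F B) 0 0 / cd b (F B) 1 1 = 0 := by
            rw [← neg_eq_zero, ← hr, h0]
            norm_num
          exact (div_eq_zero_iff.1 h6).resolve_right hy11
        have hw2 : wg b (b 0) (r⁻¹ • b 1) ≠ 0 := by
          rw [wg_smul_right, wg_basis, mul_one]
          exact inv_ne_zero hrne
        set g3 := gOf b hw2 with hg3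
        have hg30 : g3 (b 0) = b 0 := gOf_fst b hw2
        have hg31 : g3 (b 1) = r • b 1 := by
          have h1 := gOf_snd b hw2
          rw [map_smul] at h1
          have h2 := smul_cancel (inv_ne_zero hrne) h1
          rwa [inv_inv] at h2
        refine ⟨g ≪≫ₗ g3, Or.inr (Or.inr (Or.inr (Or.inr (Or.inl ?_))))⟩
        have hcomp2 : (g ≪≫ₗ g3).toLinearMap = g3.toLinearMap ∘ₗ g.toLinearMap := rfl
        rw [hcomp2, TensorProduct.map_comp, Submodule.map_comp, ← hF, map_span_pair, e1]
        have hB2e : F B = cd b (F B) 0 1 • (b 0 ⊗ₜ[k] b 1) +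
            (1:k) • (cd b (F B) 0 0 • (b 0 ⊗ₜ[k] b 0) + cd b (F B) 1 1 • (b 1 ⊗ₜ[k] b 1)) := by
          apply T_ext b
          intro i j
          fin_cases i <;> fin_cases j <;>
            simp [Basis.repr_self, Finsupp.single_apply, hy10]
        rw [hB2e, span_shear _ one_ne_zero, map_span_pair]
        have f1 : TensorProduct.map g3.toLinearMap g3.toLinearMap (b 0 ⊗ₜ[k] b 1) =
            r • (b 0 ⊗ₜ[k] b 1) := by
          simp only [TensorProduct.map_tmul, LinearEquiv.coe_coe, hg30, hg31,
            TensorProduct.tmul_smul]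
        have hcoef : cd b (F B) 1 1 * (r * r) = -cd b (F B) 0 0 := by
          have h3 : r ^ 2 * cd b (F B) 1 1 = -cd b (F B) 0 0 := by
            rw [hr]
            field_simp
          linear_combination h3
        have f2 : TensorProduct.map g3.toLinearMap g3.toLinearMap
            (cd b (F B) 0 0 • (b 0 ⊗ₜ[k] b 0) + cd b (F B) 1 1 • (b 1 ⊗ₜ[k] b 1)) =
            cd b (F B) 0 0 • (b 0 ⊗ₜ[k] b 0 - b 1 ⊗ₜ[k] b 1) := by
          apply T_ext b
          intro i j
          fin_cases i <;> fin_cases j <;>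
            simp [TensorProduct.map_tmul, hg30, hg31, Basis.repr_self, Finsupp.single_apply,
              TensorProduct.smul_tmul', TensorProduct.tmul_smul, smul_smul] <;>
            linear_combination hcoef
        rw [f1, f2, span_smul_smul hrne hy00]
  · -- Case II : two distinct rank-one rays
    have hA'' : det0 b ((-(det0 b B / mx b (u ⊗ₜ[k] v) B)) • (u ⊗ₜ[k] v) + B) = 0 := by
      rw [pencil, det0_tmul]
      field_simp
      ring
    have hind2 : Ind k (u ⊗ₜ[k] v)
        ((-(det0 b B / mx b (u ⊗ₜ[k] v) B)) • (u ⊗ₜ[k] v) + B) := by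
      have h1 := hind.shear (-(det0 b B / mx b (u ⊗ₜ[k] v) B)) one_ne_zero
      rwa [one_smul] at h1
    obtain ⟨w, z, hw, hz, hA⟩ := factor b hind2.ne0r hA''
    have hdet : wg b u w * wg b v z = mx b (u ⊗ₜ[k] v) B := by
      rw [← det0_tmul_add_tmul b u v w z, ← hA]
      have h2 : u ⊗ₜ[k] v + ((-(det0 b B / mx b (u ⊗ₜ[k] v) B)) • (u ⊗ₜ[k] v) + B) =
          (1 - det0 b B / mx b (u ⊗ₜ[k] v) B) • (u ⊗ₜ[k] v) + B := by
        module
      rw [h2, pencil, det0_tmul]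
      field_simp
      ring
    have huw : wg b u w ≠ 0 := left_ne_zero_of_mul (by rw [hdet]; exact hm)
    have hvz : wg b v z ≠ 0 := right_ne_zero_of_mul (by rw [hdet]; exact hm)
    have hspan : span k {u ⊗ₜ[k] v, B} = span k {u ⊗ₜ[k] v, w ⊗ₜ[k] z} := by
      have h3 := span_shear (x := u ⊗ₜ[k] v) (y := B)
        (-(det0 b B / mx b (u ⊗ₜ[k] v) B)) one_ne_zero
      rw [one_smul] at h3
      rw [← h3, hA]
    rw [hspan]
    exact lemII b hu hv hw hz (hA ▸ hind2) huw hvz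



end Stmt1Aux

open Stmt1Aux Submodule

theorem stmt1 (k V : Type) [Field k] [IsAlgClosed k] [AddCommGroup V] [Module k V]
    (b : Module.Basis (Fin 2) k V) (R : Submodule k (V ⊗[k] V)) (hR : Module.finrank k R = 2) :
    ∃ g : V ≃ₗ[k] V,
      Submodule.map (TensorProduct.map g.toLinearMap g.toLinearMap) R =
          Submodule.span k {b 0 ⊗ₜ[k] b 1, b 1 ⊗ₜ[k] b 0} ∨
      Submodule.map (TensorProduct.map g.toLinearMap g.toLinearMap) R =
          Submodule.span k {b 0 ⊗ₜ[k] b 0, b 1 ⊗ₜ[k] b 1} ∨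
      Submodule.map (TensorProduct.map g.toLinearMap g.toLinearMap) R =
          Submodule.span k {b 0 ⊗ₜ[k] b 0, b 1 ⊗ₜ[k] b 0} ∨
      (∃ q : k, Submodule.map (TensorProduct.map g.toLinearMap g.toLinearMap) R =
          Submodule.span k {b 0 ⊗ₜ[k] b 0, b 0 ⊗ₜ[k] b 1 - q • (b 1 ⊗ₜ[k] b 0)}) ∨
      Submodule.map (TensorProduct.map g.toLinearMap g.toLinearMap) R =
          Submodule.span k {b 0 ⊗ₜ[k] b 1, b 0 ⊗ₜ[k] b 0 - b 1 ⊗ₜ[k] b 1} ∨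
      (∃ q : k, Submodule.map (TensorProduct.map g.toLinearMap g.toLinearMap) R =
          Submodule.span k {b 0 ⊗ₜ[k] b 1, b 0 ⊗ₜ[k] b 0 - b 1 ⊗ₜ[k] b 0 - q • (b 1 ⊗ₜ[k] b 1)}) := by
  classical
  have hfd : FiniteDimensional k V := Module.Finite.of_basis b
  let bR := Module.finBasisOfFinrankEq k R hR
  set A : V ⊗[k] V := (bR 0 : V ⊗[k] V) with hA
  set B : V ⊗[k] V := (bR 1 : V ⊗[k] V) with hB
  have hli := bR.linearIndependent.map' R.subtype (Submodule.ker_subtype R)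
  have hind : Ind k A B := by
    intro s t hst
    have hz : ∑ i, ![s, t] i • (R.subtype ∘ bR) i = 0 := by
      rw [Fin.sum_univ_two]
      simpa [hA, hB] using hst
    have h2 := Fintype.linearIndependent_iff.1 hli ![s, t] hz
    exact ⟨h2 0, h2 1⟩
  have hRspan : R = Submodule.span k {A, B} := by
    conv_lhs => rw [← Submodule.map_subtype_top R, ← bR.span_eq]
    rw [Submodule.map_span]
    congr 1
    ext x
    constructor
    · rintro ⟨y, ⟨i, rfl⟩, rfl⟩
      fin_cases i
      · exact Set.mem_insert _ _
      · exact Set.mem_insert_iff.2 (Or.inr rfl)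
    · rintro (rfl | rfl)
      · exact ⟨bR 0, ⟨0, rfl⟩, rfl⟩
      · exact ⟨bR 1, ⟨1, rfl⟩, rfl⟩
  rw [hRspan]
  by_cases hdA : det0 b A = 0
  · exact main2 b hind hdA
  · obtain ⟨s₀, hs⟩ := exists_root_quad k (mx b A B) (det0 b B) hdA
    have hd' : det0 b (s₀ • A + B) = 0 := by
      rw [pencil]
      linear_combination hs
    have hspan2 : Submodule.span k {A, B} = Submodule.span k {s₀ • A + B, A} := by
      have h3 := span_shear (k := k) (x := A) (y := B) s₀ one_ne_zero
      rw [one_smul] at h3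
      rw [← h3, Set.pair_comm]
    have hind2 : Ind k (s₀ • A + B) A := by
      have h4 := hind.shear s₀ one_ne_zero
      rw [one_smul] at h4
      exact h4.symm
    rw [hspan2]
    exact main2 b hind2 hd'
end

section
/- Let k be an algebraically closed field and V a 2-dimensional k-vector space with basis {x, y}. For every 3-dimensional subspace R of V ⊗ V there exists g ∈ GL(V) such that (g ⊗ g)(R) is one of the following subspaces: span{x⊗x, x⊗y, y⊗x}; span{x⊗x, y⊗y, x⊗y − q·(y⊗x)} for some q ∈ k; span{x⊗x, x⊗y + y⊗x, x⊗y + y⊗y}. -/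
open Matrix TensorProduct
open scoped TensorProduct

section Classification
open Matrix

variable {k : Type} [Field k] [IsAlgClosed k]

omit [IsAlgClosed k] in
lemma transpose2 (a b c d : k) : !![a,b;c,d]ᵀ = !![a,c;b,d] := by
  ext i j; fin_cases i <;> fin_cases j <;> simp

omit [IsAlgClosed k] in
lemma smul2 (s a b c d : k) : s • !![a,b;c,d] = !![s*a,s*b;s*c,s*d] := by
  ext i j; fin_cases i <;> fin_cases j <;> simp [Matrix.smul_apply, mul_comm]

omit [IsAlgClosed k] in
lemma mk2_eq {a b c d a' b' c' d' : k} (h1 : a = a') (h2 : b = b') (h3 : c = c')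
    (h4 : d = d') : !![a,b;c,d] = !![a',b';c',d'] := by rw [h1, h2, h3, h4]

/-- Conclusion predicate of the congruence classification. -/
def Concl (F : Matrix (Fin 2) (Fin 2) k) : Prop :=
  ∃ (Q : Matrix (Fin 2) (Fin 2) k) (c : k), IsUnit Q.det ∧ c ≠ 0 ∧
    (Qᵀ * F * Q = c • !![(0:k),0;0,1] ∨
     (∃ q : k, Qᵀ * F * Q = c • !![0,q;1,0]) ∨
     Qᵀ * F * Q = c • !![0,1;-1,-1])

omit [IsAlgClosed k] in
lemma concl_congr {F : Matrix (Fin 2) (Fin 2) k} (Q1 : Matrix (Fin 2) (Fin 2) k)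
    (h1 : IsUnit Q1.det) (h : Concl (Q1ᵀ * F * Q1)) : Concl F := by
  obtain ⟨Q2, c, h2, hc, hcase⟩ := h
  refine ⟨Q1 * Q2, c, by simpa using h1.mul h2, hc, ?_⟩
  have key : (Q1 * Q2)ᵀ * F * (Q1 * Q2) = Q2ᵀ * (Q1ᵀ * F * Q1) * Q2 := by
    rw [Matrix.transpose_mul]; noncomm_ring
  rw [key]; exact hcase

omit [IsAlgClosed k] in
lemma concl_of_eq {F F' : Matrix (Fin 2) (Fin 2) k} (h : F = F') (hC : Concl F') :
    Concl F := h ▸ hC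

/-- Case when the (2,2) entry is nonzero. -/
lemma concl_corner (a b c e : k) (he : e ≠ 0) : Concl !![a,b;c,e] := by
  obtain ⟨s, hs⟩ : ∃ s : k, e*s^2 + (b+c)*s + a = 0 := by
    obtain ⟨s, hs⟩ := IsAlgClosed.exists_root
      (p := Polynomial.C e * Polynomial.X^2 + Polynomial.C (b+c) * Polynomial.X + Polynomial.C a)
      (by rw [Polynomial.degree_quadratic he]; exact two_ne_zero)
    exact ⟨s, by simpa using hs⟩
  apply concl_congr !![1,0;s,1] (by simp [Matrix.det_fin_two_of])
  apply concl_of_eq (F' := !![0, b+s*e; c+s*e, e])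
  · rw [transpose2, Matrix.mul_fin_two, Matrix.mul_fin_two]
    exact mk2_eq (by linear_combination hs) (by ring) (by ring) (by ring)
  set b' := b + s*e
  set c' := c + s*e
  clear_value b' c'
  by_cases hbc : b' + c' = 0
  · -- c' = -b'
    have hc' : c' = -b' := by linear_combination hbc
    subst hc'
    by_cases hb0 : b' = 0
    · refine ⟨1, e, by simp, he, Or.inl ?_⟩
      rw [Matrix.transpose_one, Matrix.one_mul, Matrix.mul_one, smul2, hb0]
      exact mk2_eq (by ring) (by ring) (by ring) (by ring)
    · refine ⟨!![e,0;0,-b'], -(e*b'^2),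
        by rw [Matrix.det_fin_two_of]; simpa [isUnit_iff_ne_zero] using mul_ne_zero he (neg_ne_zero.mpr hb0),
        neg_ne_zero.mpr (mul_ne_zero he (pow_ne_zero 2 hb0)), Or.inr (Or.inr ?_)⟩
      rw [transpose2, Matrix.mul_fin_two, Matrix.mul_fin_two, smul2]
      exact mk2_eq (by ring) (by ring) (by ring) (by ring)
  · -- kill the corner
    apply concl_congr !![1, -e/(b'+c'); 0, 1] (by simp [Matrix.det_fin_two_of])
    apply concl_of_eq (F' := !![0, b'; c', 0])
    · rw [transpose2, Matrix.mul_fin_two, Matrix.mul_fin_two]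
      exact mk2_eq (by ring) (by ring) (by ring) (by field_simp; ring)
    by_cases hc0 : c' = 0
    · -- b' ≠ 0, swap
      have hb0 : b' ≠ 0 := by intro h; exact hbc (by rw [h, hc0, add_zero])
      apply concl_congr !![0,1;1,0] (by simp [Matrix.det_fin_two_of])
      refine ⟨1, b', by simp, hb0, Or.inr (Or.inl ⟨0, ?_⟩)⟩
      rw [Matrix.transpose_one, Matrix.one_mul, Matrix.mul_one, transpose2,
        Matrix.mul_fin_two, Matrix.mul_fin_two, smul2, hc0]
      exact mk2_eq (by ring) (by ring) (by ring) (by ring)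
    · refine ⟨1, c', by simp, hc0, Or.inr (Or.inl ⟨b'/c', ?_⟩)⟩
      rw [Matrix.transpose_one, Matrix.one_mul, Matrix.mul_one, smul2]
      exact mk2_eq (by ring) (by field_simp) (by ring) (by ring)

lemma concl_all (F : Matrix (Fin 2) (Fin 2) k) (hF : F ≠ 0) : Concl F := by
  have hF2 : F = !![F 0 0, F 0 1; F 1 0, F 1 1] := Matrix.eta_fin_two F
  set a := F 0 0; set b := F 0 1; set c := F 1 0; set d := F 1 1
  clear_value a b c d
  subst hF2
  by_cases hd : d ≠ 0
  · exact concl_corner a b c d hd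
  push_neg at hd; subst hd
  by_cases ha : a ≠ 0
  · apply concl_congr !![0,1;1,0] (by simp [Matrix.det_fin_two_of])
    apply concl_of_eq (F' := !![0,c;b,a])
    · rw [transpose2, Matrix.mul_fin_two, Matrix.mul_fin_two]
      exact mk2_eq (by ring) (by ring) (by ring) (by ring)
    exact concl_corner 0 c b a ha
  push_neg at ha; subst ha
  by_cases hbc : b + c ≠ 0
  · apply concl_congr !![1,1;0,1] (by simp [Matrix.det_fin_two_of])
    apply concl_of_eq (F' := !![0,b;c,b+c])
    · rw [transpose2, Matrix.mul_fin_two, Matrix.mul_fin_two]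
      exact mk2_eq (by ring) (by ring) (by ring) (by ring)
    exact concl_corner 0 b c (b+c) hbc
  push_neg at hbc
  have hc : c = -b := by linear_combination hbc
  subst hc
  have hb : b ≠ 0 := by
    intro h
    subst h
    exact hF (by ext i j; fin_cases i <;> fin_cases j <;> simp)
  refine ⟨1, -b, by simp, neg_ne_zero.mpr hb, Or.inr (Or.inl ⟨-1, ?_⟩)⟩
  rw [Matrix.transpose_one, Matrix.one_mul, Matrix.mul_one, smul2]
  exact mk2_eq (by ring) (by ring) (by ring) (by ring)

end Classification

section Glue

variable {k V : Type} [Field k] [AddCommGroup V] [Module k V] (b : Module.Basis (Fin 2) k V)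

noncomputable def fm (M : Matrix (Fin 2) (Fin 2) k) : V ⊗[k] V →ₗ[k] k :=
  TensorProduct.lift (Matrix.toLinearMap₂ b b M)

lemma fm_apply (M : Matrix (Fin 2) (Fin 2) k) (i j : Fin 2) :
    fm b M (b i ⊗ₜ[k] b j) = M i j := by
  simp [fm, Matrix.toLinearMap₂_apply, Finsupp.single_apply,
    Fin.sum_univ_two]

lemma expand (t : V ⊗[k] V) :
    t = ((b.tensorProduct b).repr t (0,0)) • (b 0 ⊗ₜ[k] b 0)
      + ((b.tensorProduct b).repr t (0,1)) • (b 0 ⊗ₜ[k] b 1)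
      + ((b.tensorProduct b).repr t (1,0)) • (b 1 ⊗ₜ[k] b 0)
      + ((b.tensorProduct b).repr t (1,1)) • (b 1 ⊗ₜ[k] b 1) := by
  have h := Module.Basis.sum_repr (b.tensorProduct b) t
  conv_lhs => rw [← h]
  rw [Fintype.sum_prod_type, Fin.sum_univ_two]
  simp only [Fin.sum_univ_two, Module.Basis.tensorProduct_apply]
  abel

lemma mem3 {x y z : V ⊗[k] V} (c1 c2 c3 : k) :
    c1 • x + c2 • y + c3 • z ∈ Submodule.span k {x, y, z} := by
  refine Submodule.add_mem _ (Submodule.add_mem _ ?_ ?_) ?_ <;>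
    exact Submodule.smul_mem _ _ (Submodule.subset_span (by simp))

lemma ker_case1 :
    LinearMap.ker (fm b !![(0:k),0;0,1]) =
      Submodule.span k {b 0 ⊗ₜ[k] b 0, b 0 ⊗ₜ[k] b 1, b 1 ⊗ₜ[k] b 0} := by
  apply le_antisymm
  · intro t ht
    rw [LinearMap.mem_ker] at ht
    have hexp := expand b t
    set c00 := (b.tensorProduct b).repr t (0,0)
    set c01 := (b.tensorProduct b).repr t (0,1)
    set c10 := (b.tensorProduct b).repr t (1,0)
    set c11 := (b.tensorProduct b).repr t (1,1)
    rw [hexp] at ht ⊢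
    simp only [map_add, _root_.map_smul, fm_apply, smul_eq_mul] at ht
    have h11 : c11 = 0 := by
      simpa using ht
    rw [h11, zero_smul, add_zero]
    exact mem3 c00 c01 c10
  · rw [Submodule.span_le]
    rintro x hx
    simp only [Set.mem_insert_iff, Set.mem_singleton_iff] at hx
    rcases hx with rfl | rfl | rfl <;>
      simp [SetLike.mem_coe, LinearMap.mem_ker, fm_apply]

lemma ker_case2 (q : k) :
    LinearMap.ker (fm b !![(0:k),q;1,0]) =
      Submodule.span k {b 0 ⊗ₜ[k] b 0, b 1 ⊗ₜ[k] b 1,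
        b 0 ⊗ₜ[k] b 1 - q • (b 1 ⊗ₜ[k] b 0)} := by
  apply le_antisymm
  · intro t ht
    rw [LinearMap.mem_ker] at ht
    have hexp := expand b t
    set c00 := (b.tensorProduct b).repr t (0,0)
    set c01 := (b.tensorProduct b).repr t (0,1)
    set c10 := (b.tensorProduct b).repr t (1,0)
    set c11 := (b.tensorProduct b).repr t (1,1)
    rw [hexp] at ht ⊢
    simp only [map_add, _root_.map_smul, fm_apply, smul_eq_mul] at ht
    have h10 : c10 = -(q * c01) := by
      simp at ht; linear_combination ht
    have : c00 • (b 0 ⊗ₜ[k] b 0) + c01 • (b 0 ⊗ₜ[k] b 1) + c10 • (b 1 ⊗ₜ[k] b 0)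
        + c11 • (b 1 ⊗ₜ[k] b 1)
        = c00 • (b 0 ⊗ₜ[k] b 0) + c11 • (b 1 ⊗ₜ[k] b 1)
          + c01 • (b 0 ⊗ₜ[k] b 1 - q • (b 1 ⊗ₜ[k] b 0)) := by
      rw [h10]
      module
    rw [this]
    exact mem3 c00 c11 c01
  · rw [Submodule.span_le]
    rintro x hx
    simp only [Set.mem_insert_iff, Set.mem_singleton_iff] at hx
    rcases hx with rfl | rfl | rfl <;>
      simp [SetLike.mem_coe, LinearMap.mem_ker, fm_apply]

lemma ker_case3 :
    LinearMap.ker (fm b !![(0:k),1;-1,-1]) =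
      Submodule.span k {b 0 ⊗ₜ[k] b 0, b 0 ⊗ₜ[k] b 1 + b 1 ⊗ₜ[k] b 0,
        b 0 ⊗ₜ[k] b 1 + b 1 ⊗ₜ[k] b 1} := by
  apply le_antisymm
  · intro t ht
    rw [LinearMap.mem_ker] at ht
    have hexp := expand b t
    set c00 := (b.tensorProduct b).repr t (0,0)
    set c01 := (b.tensorProduct b).repr t (0,1)
    set c10 := (b.tensorProduct b).repr t (1,0)
    set c11 := (b.tensorProduct b).repr t (1,1)
    rw [hexp] at ht ⊢
    simp only [map_add, _root_.map_smul, fm_apply, smul_eq_mul] at ht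
    have h01 : c01 = c10 + c11 := by
      simp at ht; linear_combination ht
    have : c00 • (b 0 ⊗ₜ[k] b 0) + c01 • (b 0 ⊗ₜ[k] b 1) + c10 • (b 1 ⊗ₜ[k] b 0)
        + c11 • (b 1 ⊗ₜ[k] b 1)
        = c00 • (b 0 ⊗ₜ[k] b 0) + c10 • (b 0 ⊗ₜ[k] b 1 + b 1 ⊗ₜ[k] b 0)
          + c11 • (b 0 ⊗ₜ[k] b 1 + b 1 ⊗ₜ[k] b 1) := by
      rw [h01]
      module
    rw [this]
    exact mem3 c00 c10 c11
  · rw [Submodule.span_le]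
    rintro x hx
    simp only [Set.mem_insert_iff, Set.mem_singleton_iff] at hx
    rcases hx with rfl | rfl | rfl <;>
      simp [SetLike.mem_coe, LinearMap.mem_ker, fm_apply]

lemma comp_eq (f : V ⊗[k] V →ₗ[k] k) (e : V ≃ₗ[k] V) :
    f ∘ₗ TensorProduct.map e.toLinearMap e.toLinearMap
      = TensorProduct.lift
          (((TensorProduct.mk k V V).compr₂ f).compl₁₂ e.toLinearMap e.toLinearMap) := by
  apply TensorProduct.ext'
  intro v w
  simp [TensorProduct.map_tmul, TensorProduct.lift.tmul, LinearMap.compl₁₂_apply]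

lemma key (f : V ⊗[k] V →ₗ[k] k) (Q : Matrix (Fin 2) (Fin 2) k) (hQ : IsUnit Q.det)
    (c : k) (hc : c ≠ 0) (F₀ : Matrix (Fin 2) (Fin 2) k)
    (h : Qᵀ * LinearMap.toMatrix₂ b b ((TensorProduct.mk k V V).compr₂ f) * Q = c • F₀) :
    ∃ g : V ≃ₗ[k] V,
      Submodule.map (TensorProduct.map g.toLinearMap g.toLinearMap) (LinearMap.ker f)
        = LinearMap.ker (fm b F₀) := by
  set B := (TensorProduct.mk k V V).compr₂ f with hBdef
  let e : V ≃ₗ[k] V := LinearEquiv.ofLinear (Matrix.toLin b b Q) (Matrix.toLin b b Q⁻¹)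
    (by rw [← Matrix.toLin_mul, Matrix.mul_nonsing_inv _ hQ, Matrix.toLin_one])
    (by rw [← Matrix.toLin_mul, Matrix.nonsing_inv_mul _ hQ, Matrix.toLin_one])
  have hmat : LinearMap.toMatrix b b e.toLinearMap = Q := by
    show LinearMap.toMatrix b b (Matrix.toLin b b Q) = Q
    rw [LinearMap.toMatrix_toLin]
  have h1 : f ∘ₗ TensorProduct.map e.toLinearMap e.toLinearMap = c • fm b F₀ := by
    rw [comp_eq]
    have hBmat : LinearMap.toMatrix₂ b b (B.compl₁₂ e.toLinearMap e.toLinearMap) = c • F₀ := by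
      rw [LinearMap.toMatrix₂_compl₁₂ b b b b, hmat]
      exact h
    have hB : B.compl₁₂ e.toLinearMap e.toLinearMap = c • Matrix.toLinearMap₂ b b F₀ := by
      apply (LinearMap.toMatrix₂ b b).injective
      rw [hBmat, _root_.map_smul, LinearMap.toMatrix₂_toLinearMap₂]
    rw [hB]
    apply TensorProduct.ext'
    intro v w
    simp [fm, TensorProduct.lift.tmul]
  refine ⟨e.symm, ?_⟩
  have hcongr : TensorProduct.map e.symm.toLinearMap e.symm.toLinearMap
      = (TensorProduct.congr e.symm e.symm).toLinearMap := rfl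
  rw [hcongr, Submodule.map_equiv_eq_comap_symm, TensorProduct.congr_symm,
    LinearEquiv.symm_symm]
  have heq : (TensorProduct.congr e e : V ⊗[k] V →ₗ[k] V ⊗[k] V)
      = TensorProduct.map e.toLinearMap e.toLinearMap := rfl
  rw [heq, ← LinearMap.ker_comp, h1, LinearMap.ker_smul _ _ hc]

include b in
lemma exists_ker (R : Submodule k (V ⊗[k] V)) (hR : Module.finrank k R = 3) :
    ∃ f : V ⊗[k] V →ₗ[k] k, f ≠ 0 ∧ LinearMap.ker f = R := by
  haveI := Module.Finite.of_basis b
  have hdim : Module.finrank k (V ⊗[k] V) = 4 := by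
    rw [Module.finrank_tensorProduct, Module.finrank_eq_card_basis b]
    norm_num
  have hne : R ≠ ⊤ := by
    intro h
    rw [h, finrank_top, hdim] at hR
    omega
  have hq : Module.finrank k (V ⊗[k] V ⧸ R) = 1 := by
    have := Submodule.finrank_quotient_add_finrank R
    omega
  let ψ : (V ⊗[k] V ⧸ R) ≃ₗ[k] k := LinearEquiv.ofFinrankEq _ _ (by
    rw [hq, Module.finrank_self])
  refine ⟨ψ.toLinearMap ∘ₗ R.mkQ, ?_, ?_⟩
  · intro h
    apply hne
    have : LinearMap.ker (ψ.toLinearMap ∘ₗ R.mkQ) = R := by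
      rw [LinearMap.ker_comp, LinearEquiv.ker, Submodule.comap_bot, Submodule.ker_mkQ]
    rw [← this, h, LinearMap.ker_zero]
  · rw [LinearMap.ker_comp, LinearEquiv.ker, Submodule.comap_bot, Submodule.ker_mkQ]

end Glue

/-- Let `k` be an algebraically closed field and `V` a 2-dimensional
`k`-vector space with basis `{x, y}` (here `x = b 0`, `y = b 1`).  Every 3-dimensional
subspace `R` of `V ⊗ V` can be moved by some `g ∈ GL(V)` (acting as `g ⊗ g`) onto one of:
`span{x⊗x, x⊗y, y⊗x}`, `span{x⊗x, y⊗y, x⊗y − q·(y⊗x)}` for some `q ∈ k`, or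
`span{x⊗x, x⊗y + y⊗x, x⊗y + y⊗y}`. -/
theorem stmt2 (k V : Type) [Field k] [IsAlgClosed k] [AddCommGroup V] [Module k V]
    (b : Module.Basis (Fin 2) k V) (R : Submodule k (V ⊗[k] V)) (hR : Module.finrank k R = 3) :
    ∃ g : V ≃ₗ[k] V,
      Submodule.map (TensorProduct.map g.toLinearMap g.toLinearMap) R =
          Submodule.span k {b 0 ⊗ₜ[k] b 0, b 0 ⊗ₜ[k] b 1, b 1 ⊗ₜ[k] b 0} ∨
      (∃ q : k, Submodule.map (TensorProduct.map g.toLinearMap g.toLinearMap) R =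
          Submodule.span k {b 0 ⊗ₜ[k] b 0, b 1 ⊗ₜ[k] b 1, b 0 ⊗ₜ[k] b 1 - q • (b 1 ⊗ₜ[k] b 0)}) ∨
      Submodule.map (TensorProduct.map g.toLinearMap g.toLinearMap) R =
          Submodule.span k {b 0 ⊗ₜ[k] b 0, b 0 ⊗ₜ[k] b 1 + b 1 ⊗ₜ[k] b 0,
            b 0 ⊗ₜ[k] b 1 + b 1 ⊗ₜ[k] b 1} := by
  obtain ⟨f, hf0, hker⟩ := exists_ker b R hR
  have hF : LinearMap.toMatrix₂ b b ((TensorProduct.mk k V V).compr₂ f) ≠ 0 := by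
    intro h
    apply hf0
    have hB : (TensorProduct.mk k V V).compr₂ f = 0 :=
      (LinearMap.toMatrix₂ b b).map_eq_zero_iff.mp h
    refine TensorProduct.ext' fun v w => ?_
    simpa using LinearMap.congr_fun (LinearMap.congr_fun hB v) w
  obtain ⟨Q, c, hQ, hc, hcase⟩ := concl_all _ hF
  rcases hcase with h | ⟨q, h⟩ | h
  · obtain ⟨g, hg⟩ := key b f Q hQ c hc _ h
    rw [hker] at hg
    exact ⟨g, Or.inl (by rw [hg, ker_case1])⟩
  · obtain ⟨g, hg⟩ := key b f Q hQ c hc _ h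
    rw [hker] at hg
    exact ⟨g, Or.inr (Or.inl ⟨q, by rw [hg, ker_case2]⟩)⟩
  · obtain ⟨g, hg⟩ := key b f Q hQ c hc _ h
    rw [hker] at hg
    exact ⟨g, Or.inr (Or.inr (by rw [hg, ker_case3]))⟩
end

section
/- Let k be an algebraically closed field and V a 2-dimensional k-vector space with basis {x, y}. For q, q' ∈ k, there exists g ∈ GL(V) with (g ⊗ g)(span{x⊗x, x⊗y − q·(y⊗x)}) = span{x⊗x, x⊗y − q'·(y⊗x)} if and only if q = q'. (Equivalently, the quadratic algebras A⁷(q) = k⟨x,y⟩/(x², xy − q·yx) are pairwise non-isomorphic as graded algebras for distinct q.) -/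
open scoped TensorProduct

/-- Let `k` be an algebraically closed field and `V` a 2-dimensional
`k`-vector space with basis `{x, y}` (here `x = b 0`, `y = b 1`).  For `q, q' ∈ k`
there is `g ∈ GL(V)` with `(g ⊗ g)(span{x⊗x, x⊗y − q·(y⊗x)}) = span{x⊗x, x⊗y − q'·(y⊗x)}`
iff `q = q'` (i.e. the algebras `A⁷(q)` are pairwise non-isomorphic as graded algebras). -/
theorem stmt3 (k V : Type) [Field k] [IsAlgClosed k] [AddCommGroup V] [Module k V]
    (b : Module.Basis (Fin 2) k V) (q q' : k) :
    (∃ g : V ≃ₗ[k] V,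
        Submodule.map (TensorProduct.map g.toLinearMap g.toLinearMap)
            (Submodule.span k {b 0 ⊗ₜ[k] b 0, b 0 ⊗ₜ[k] b 1 - q • (b 1 ⊗ₜ[k] b 0)}) =
          Submodule.span k {b 0 ⊗ₜ[k] b 0, b 0 ⊗ₜ[k] b 1 - q' • (b 1 ⊗ₜ[k] b 0)}) ↔ q = q' := by
  constructor
  · rintro ⟨g, hg⟩
    -- the image of `x ⊗ x` lies in the target span
    have h1 : g (b 0) ⊗ₜ[k] g (b 0) ∈
        Submodule.span k {b 0 ⊗ₜ[k] b 0, b 0 ⊗ₜ[k] b 1 - q' • (b 1 ⊗ₜ[k] b 0)} := by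
      have hm : b 0 ⊗ₜ[k] b 0 ∈
          Submodule.span k {b 0 ⊗ₜ[k] b 0, b 0 ⊗ₜ[k] b 1 - q • (b 1 ⊗ₜ[k] b 0)} :=
        Submodule.subset_span (Or.inl rfl)
      have := Submodule.mem_map_of_mem
        (f := TensorProduct.map g.toLinearMap g.toLinearMap) hm
      rw [hg] at this
      simpa using this
    -- the image of `x ⊗ y − q·y ⊗ x` lies in the target span
    have h2 : g (b 0) ⊗ₜ[k] g (b 1) - q • (g (b 1) ⊗ₜ[k] g (b 0)) ∈
        Submodule.span k {b 0 ⊗ₜ[k] b 0, b 0 ⊗ₜ[k] b 1 - q' • (b 1 ⊗ₜ[k] b 0)} := by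
      have hm : b 0 ⊗ₜ[k] b 1 - q • (b 1 ⊗ₜ[k] b 0) ∈
          Submodule.span k {b 0 ⊗ₜ[k] b 0, b 0 ⊗ₜ[k] b 1 - q • (b 1 ⊗ₜ[k] b 0)} :=
        Submodule.subset_span (Or.inr rfl)
      have := Submodule.mem_map_of_mem
        (f := TensorProduct.map g.toLinearMap g.toLinearMap) hm
      rw [hg] at this
      simpa [map_sub, map_smul] using this
    rw [Submodule.mem_span_pair] at h1 h2
    obtain ⟨α, β, e1⟩ := h1
    obtain ⟨γ, δ, e2⟩ := h2
    -- coordinate `(1,1)` of `e1` gives `c² = 0`, i.e. `c = 0`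
    have t1 := congrArg (fun z => ((b.tensorProduct b).repr z) ((1 : Fin 2), (1 : Fin 2))) e1
    simp only [map_add, map_smul, map_sub, Finsupp.coe_add, Finsupp.coe_smul, Pi.add_apply,
      Pi.smul_apply, Finsupp.coe_sub, Pi.sub_apply, Module.Basis.tensorProduct_repr_tmul_apply,
      Module.Basis.repr_self, smul_eq_mul] at t1
    simp [Finsupp.single_apply] at t1
    -- coordinates `(0,1)` and `(1,0)` of `e2`
    have t2 := congrArg (fun z => ((b.tensorProduct b).repr z) ((0 : Fin 2), (1 : Fin 2))) e2
    have t3 := congrArg (fun z => ((b.tensorProduct b).repr z) ((1 : Fin 2), (0 : Fin 2))) e2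
    simp only [map_add, map_smul, map_sub, Finsupp.coe_add, Finsupp.coe_smul, Pi.add_apply,
      Pi.smul_apply, Finsupp.coe_sub, Pi.sub_apply, Module.Basis.tensorProduct_repr_tmul_apply,
      Module.Basis.repr_self, smul_eq_mul] at t2 t3
    simp [Finsupp.single_apply] at t2 t3
    rw [t1] at t2 t3
    set A := b.repr (g (b 0)) 0 with hA
    set B' := b.repr (g (b 1)) 0 with hB'
    set D := b.repr (g (b 1)) 1 with hD
    -- nonvanishing of the diagonal entries of the matrix of `g`
    have hgx : g (b 0) = A • b 0 := by
      have h := b.sum_repr (g (b 0))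
      rw [Fin.sum_univ_two, t1, zero_smul, add_zero] at h
      exact h.symm
    have hane : A ≠ 0 := by
      intro h0
      have : g (b 0) = 0 := by rw [hgx, h0, zero_smul]
      exact b.ne_zero 0 (g.injective (by simpa using this))
    have hdne : D ≠ 0 := by
      intro h0
      have hgy : g (b 1) = B' • b 0 := by
        have h := b.sum_repr (g (b 1))
        rw [Fin.sum_univ_two, ← hD, h0, zero_smul, add_zero] at h
        exact h.symm
      have hw : g (B' • b 0 - A • b 1) = 0 := by
        rw [map_sub, map_smul, map_smul, hgx, hgy, smul_smul, smul_smul, mul_comm, sub_self]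
      have heq : B' • b 0 - A • b 1 = 0 := g.injective (by rw [hw, map_zero])
      have := congrArg (fun v => b.repr v 1) heq
      simp [Module.Basis.repr_self, Finsupp.single_apply] at this
      exact hane this
    -- conclude `q' = q` by comparing coordinates
    have key : q' * (A * D) = q * (A * D) := by
      linear_combination -t3 - q' * t2
    exact (mul_right_cancel₀ (mul_ne_zero hane hdne) key).symm
  · rintro rfl
    exact ⟨LinearEquiv.refl k V, by simp [TensorProduct.map_id]⟩
end

section
/- Let k be an algebraically closed field and V a 2-dimensional k-vector space with basis {x, y}. For nonzero q, q' ∈ k, there exists g ∈ GL(V) with (g ⊗ g)(span{x⊗x, y⊗y, x⊗y − q·(y⊗x)}) = span{x⊗x, y⊗y, x⊗y − q'·(y⊗x)} if and only if q' = q or q·q' = 1. (Equivalently, for nonzero q and q', the quadratic algebras A²(q) = k⟨x,y⟩/(x², y², xy − q·yx) and A²(q') are isomorphic as graded algebras if and only if q' ∈ {q, q⁻¹}.) -/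
open scoped TensorProduct

section aux
variable {k V : Type} [Field k] [AddCommGroup V] [Module k V]

lemma memR_iff (b : Module.Basis (Fin 2) k V) (q : k) (w : V ⊗[k] V) :
    w ∈ Submodule.span k
        {b 0 ⊗ₜ[k] b 0, b 1 ⊗ₜ[k] b 1, b 0 ⊗ₜ[k] b 1 - q • (b 1 ⊗ₜ[k] b 0)} ↔
      (b.tensorProduct b).repr w (1, 0) + q * (b.tensorProduct b).repr w (0, 1) = 0 := by
  constructor
  · intro hw
    set f : V ⊗[k] V →ₗ[k] k :=
      (b.tensorProduct b).coord (1, 0) + q • (b.tensorProduct b).coord (0, 1) with hf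
    have hle : Submodule.span k
        {b 0 ⊗ₜ[k] b 0, b 1 ⊗ₜ[k] b 1, b 0 ⊗ₜ[k] b 1 - q • (b 1 ⊗ₜ[k] b 0)} ≤
        LinearMap.ker f := by
      rw [Submodule.span_le]
      rintro v (rfl | rfl | rfl) <;>
        simp [hf, Module.Basis.coord_apply, Module.Basis.tensorProduct_repr_tmul_apply,
          Finsupp.single_apply, mul_comm]
    have := hle hw
    simpa [hf, Module.Basis.coord_apply] using this
  · intro h
    have hw : w = ((b.tensorProduct b).repr w (0, 0)) • (b 0 ⊗ₜ[k] b 0)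
        + ((b.tensorProduct b).repr w (1, 1)) • (b 1 ⊗ₜ[k] b 1)
        + ((b.tensorProduct b).repr w (0, 1)) • (b 0 ⊗ₜ[k] b 1 - q • (b 1 ⊗ₜ[k] b 0)) := by
      apply (b.tensorProduct b).repr.injective
      ext ⟨i, j⟩
      fin_cases i <;> fin_cases j <;>
        simp [← Module.Basis.tensorProduct_apply, Finsupp.single_apply, Prod.ext_iff] <;>
        linear_combination h
    rw [hw]
    refine Submodule.add_mem _ (Submodule.add_mem _ ?_ ?_) ?_ <;>
      exact Submodule.smul_mem _ _ (Submodule.subset_span (by simp))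

end aux

/-- Let `k` be an algebraically closed field and `V` a 2-dimensional
`k`-vector space with basis `{x, y}` (here `x = b 0`, `y = b 1`).  For nonzero `q, q' ∈ k`
there is `g ∈ GL(V)` with
`(g ⊗ g)(span{x⊗x, y⊗y, x⊗y − q·(y⊗x)}) = span{x⊗x, y⊗y, x⊗y − q'·(y⊗x)}`
iff `q' = q` or `q·q' = 1` (i.e. `A²(q) ≅ A²(q')` as graded algebras iff `q' ∈ {q, q⁻¹}`). -/
theorem stmt4 (k V : Type) [Field k] [IsAlgClosed k] [AddCommGroup V] [Module k V]
    (b : Module.Basis (Fin 2) k V) (q q' : k) (hq : q ≠ 0) (hq' : q' ≠ 0) :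
    (∃ g : V ≃ₗ[k] V,
        Submodule.map (TensorProduct.map g.toLinearMap g.toLinearMap)
            (Submodule.span k
              {b 0 ⊗ₜ[k] b 0, b 1 ⊗ₜ[k] b 1, b 0 ⊗ₜ[k] b 1 - q • (b 1 ⊗ₜ[k] b 0)}) =
          Submodule.span k
            {b 0 ⊗ₜ[k] b 0, b 1 ⊗ₜ[k] b 1, b 0 ⊗ₜ[k] b 1 - q' • (b 1 ⊗ₜ[k] b 0)}) ↔
      (q' = q ∨ q * q' = 1) := by
  constructor
  · rintro ⟨g, hg⟩
    set a := b.repr (g (b 0)) 0 with ha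
    set c := b.repr (g (b 0)) 1 with hc
    set e := b.repr (g (b 1)) 0 with he
    set d := b.repr (g (b 1)) 1 with hd
    -- determinant nonzero
    have hdet : a * d - e * c ≠ 0 := by
      have hu := g.isUnit_det b b
      rw [Matrix.det_fin_two] at hu
      simp only [LinearMap.toMatrix_apply, LinearEquiv.coe_coe] at hu
      simpa [ha, hc, he, hd, isUnit_iff_ne_zero] using hu
    have key : ∀ w ∈ Submodule.span k
        {b 0 ⊗ₜ[k] b 0, b 1 ⊗ₜ[k] b 1, b 0 ⊗ₜ[k] b 1 - q • (b 1 ⊗ₜ[k] b 0)},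
        TensorProduct.map g.toLinearMap g.toLinearMap w ∈ Submodule.span k
          {b 0 ⊗ₜ[k] b 0, b 1 ⊗ₜ[k] b 1, b 0 ⊗ₜ[k] b 1 - q' • (b 1 ⊗ₜ[k] b 0)} := by
      intro w hw
      rw [← hg]
      exact Submodule.mem_map_of_mem hw
    have m1 := key (b 0 ⊗ₜ[k] b 0) (Submodule.subset_span (by simp))
    have m2 := key (b 1 ⊗ₜ[k] b 1) (Submodule.subset_span (by simp))
    have m3 := key (b 0 ⊗ₜ[k] b 1 - q • (b 1 ⊗ₜ[k] b 0)) (Submodule.subset_span (by simp))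
    rw [memR_iff] at m1 m2 m3
    simp only [TensorProduct.map_tmul, map_sub, map_smul, LinearEquiv.coe_coe,
      Module.Basis.tensorProduct_repr_tmul_apply, Finsupp.sub_apply, Finsupp.smul_apply,
      smul_eq_mul, ← ha, ← hc, ← he, ← hd] at m1 m2 m3
    by_cases h1 : q' = -1
    · left
      subst h1
      have h3 : (1 + q) * (e * c - a * d) = 0 := by linear_combination m3
      rcases mul_eq_zero.mp h3 with h | h
      · linear_combination -h
      · exact absurd (by linear_combination -h) hdet
    · have hq'1 : (1 : k) + q' ≠ 0 := fun h => h1 (by linear_combination h)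
      have hac : a * c = 0 := by
        rcases mul_eq_zero.mp (show (a * c) * (1 + q') = 0 by linear_combination m1) with h | h
        exacts [h, absurd h hq'1]
      have hed : e * d = 0 := by
        rcases mul_eq_zero.mp (show (e * d) * (1 + q') = 0 by linear_combination m2) with h | h
        exacts [h, absurd h hq'1]
      rcases mul_eq_zero.mp hac with h0 | h0
      · have hec : e * c ≠ 0 := fun h => hdet (by linear_combination d * h0 - h)
        have hd0 : d = 0 := by
          rcases mul_eq_zero.mp hed with h | h
          · exact absurd (by rw [h, zero_mul]) hec
          · exact h
        right
        have h4 : (e * c) * (1 - q * q') = 0 := by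
          linear_combination m3 + (q * d - q' * d) * h0
        rcases mul_eq_zero.mp h4 with h | h
        · exact absurd h hec
        · linear_combination -h
      · have had : a * d ≠ 0 := fun h => hdet (by linear_combination h - e * h0)
        have he0 : e = 0 := by
          rcases mul_eq_zero.mp hed with h | h
          · exact h
          · exact absurd (by rw [h, mul_zero]) had
        left
        have h4 : (a * d) * (q' - q) = 0 := by
          linear_combination m3 - (e - q' * q * e) * h0
        rcases mul_eq_zero.mp h4 with h | h
        · exact absurd h had
        · linear_combination h
  · rintro (rfl | hqq)
    · exact ⟨LinearEquiv.refl k V, by simp [TensorProduct.map_id]⟩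
    · refine ⟨b.equiv b (Equiv.swap 0 1), ?_⟩
      rw [Submodule.map_span]
      have himg : TensorProduct.map (b.equiv b (Equiv.swap 0 1)).toLinearMap
            (b.equiv b (Equiv.swap 0 1)).toLinearMap ''
            {b 0 ⊗ₜ[k] b 0, b 1 ⊗ₜ[k] b 1, b 0 ⊗ₜ[k] b 1 - q • (b 1 ⊗ₜ[k] b 0)} =
          {b 1 ⊗ₜ[k] b 1, b 0 ⊗ₜ[k] b 0, b 1 ⊗ₜ[k] b 0 - q • (b 0 ⊗ₜ[k] b 1)} := by
        simp [Set.image_insert_eq, TensorProduct.map_tmul, Module.Basis.equiv_apply,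
          Equiv.swap_apply_left, Equiv.swap_apply_right]
      rw [himg]
      apply le_antisymm
      · rw [Submodule.span_le]
        rintro v (rfl | rfl | rfl) <;>
          rw [SetLike.mem_coe, memR_iff] <;>
          simp [Module.Basis.tensorProduct_repr_tmul_apply, Finsupp.single_apply] <;>
          first
            | linear_combination hqq
            | linear_combination -hqq
      · rw [Submodule.span_le]
        rintro v (rfl | rfl | rfl)
        · exact Submodule.subset_span (by simp)
        · exact Submodule.subset_span (by simp)
        · have h3 : b 0 ⊗ₜ[k] b 1 - q' • (b 1 ⊗ₜ[k] b 0) =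
              (-q') • (b 1 ⊗ₜ[k] b 0 - q • (b 0 ⊗ₜ[k] b 1)) := by
            rw [smul_sub, smul_smul]
            match_scalars
            · linear_combination -hqq
            · ring
          rw [SetLike.mem_coe, h3]
          exact Submodule.smul_mem _ _ (Submodule.subset_span (by simp))
end

section
/- Let k be an algebraically closed field and V a 2-dimensional k-vector space. Every 2-dimensional subspace R of V ⊗ V contains a nonzero decomposable tensor, i.e., there exist u, v ∈ V with u ⊗ v ∈ R and u ⊗ v ≠ 0. -/
open scoped TensorProduct

theorem decomp_aux (k V : Type) [Field k] [AddCommGroup V] [Module k V]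
    (b : Module.Basis (Fin 2) k V) (c : Fin 2 → Fin 2 → k)
    (hdet : c 0 0 * c 1 1 = c 0 1 * c 1 0) :
    ∃ u v : V, u ⊗ₜ[k] v = c 0 0 • (b 0 ⊗ₜ[k] b 0) + c 0 1 • (b 0 ⊗ₜ[k] b 1)
      + c 1 0 • (b 1 ⊗ₜ[k] b 0) + c 1 1 • (b 1 ⊗ₜ[k] b 1) := by
  by_cases h00 : c 0 0 ≠ 0
  · refine ⟨c 0 0 • b 0 + c 1 0 • b 1, b 0 + (c 0 1 / c 0 0) • b 1, ?_⟩
    simp only [TensorProduct.add_tmul, TensorProduct.tmul_add, ← TensorProduct.smul_tmul',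
      TensorProduct.tmul_smul, smul_smul]
    match_scalars <;> field_simp <;> linear_combination -hdet
  · push_neg at h00
    by_cases h01 : c 0 1 ≠ 0
    · have h10 : c 1 0 = 0 := by
        rw [h00, zero_mul] at hdet
        rcases mul_eq_zero.mp hdet.symm with h | h
        · exact absurd h h01
        · exact h
      refine ⟨c 0 1 • b 0 + c 1 1 • b 1, b 1, ?_⟩
      simp only [TensorProduct.add_tmul, ← TensorProduct.smul_tmul', h00, h10, zero_smul]
      abel
    · push_neg at h01
      refine ⟨b 1, c 1 0 • b 0 + c 1 1 • b 1, ?_⟩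
      simp only [TensorProduct.tmul_add, TensorProduct.tmul_smul, h00, h01, zero_smul]
      abel


/-- Let `k` be an algebraically closed field and `V` a 2-dimensional
`k`-vector space.  Every 2-dimensional subspace `R` of `V ⊗ V` contains a nonzero
decomposable tensor `u ⊗ v`. -/
theorem stmt5 (k V : Type) [Field k] [IsAlgClosed k] [AddCommGroup V] [Module k V]
    (hV : Module.finrank k V = 2) (R : Submodule k (V ⊗[k] V))
    (hR : Module.finrank k R = 2) :
    ∃ u v : V, u ⊗ₜ[k] v ∈ R ∧ u ⊗ₜ[k] v ≠ 0 := by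
  have hVfd : FiniteDimensional k V := FiniteDimensional.of_finrank_pos (by omega)
  have hRfd : FiniteDimensional k R := FiniteDimensional.of_finrank_pos (by omega)
  -- basis of V and of R
  let b : Module.Basis (Fin 2) k V := Module.finBasisOfFinrankEq k V hV
  let bR : Module.Basis (Fin 2) k R := Module.finBasisOfFinrankEq k R hR
  let B : Module.Basis (Fin 2 × Fin 2) k (V ⊗[k] V) := b.tensorProduct b
  -- the two generators of R, as elements of V ⊗ V
  let r : Fin 2 → V ⊗[k] V := fun i => (bR i : V ⊗[k] V)
  have hrli : LinearIndependent k r :=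
    bR.linearIndependent.map' R.subtype R.ker_subtype
  -- coordinate matrices
  let A : Fin 2 → Fin 2 → k := fun i j => B.repr (r 0) (i, j)
  let C : Fin 2 → Fin 2 → k := fun i j => B.repr (r 1) (i, j)
  -- the quadratic form q(x,y) = det(x A + y C)
  let α : k := A 0 0 * A 1 1 - A 0 1 * A 1 0
  let β : k := A 0 0 * C 1 1 + C 0 0 * A 1 1 - A 0 1 * C 1 0 - C 0 1 * A 1 0
  let γ : k := C 0 0 * C 1 1 - C 0 1 * C 1 0
  -- find (x, y) ≠ 0 with q(x,y) = 0
  obtain ⟨x, y, hxy, hq⟩ : ∃ x y : k, ¬(x = 0 ∧ y = 0) ∧ α * x ^ 2 + β * (x * y) + γ * y ^ 2 = 0 := by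
    by_cases hα : α = 0
    · exact ⟨1, 0, by simp, by simp [hα]⟩
    · obtain ⟨t, ht⟩ := IsAlgClosed.exists_root
        (Polynomial.C α * Polynomial.X ^ 2 + Polynomial.C β * Polynomial.X + Polynomial.C γ)
        (by rw [Polynomial.degree_quadratic hα]; exact two_ne_zero)
      refine ⟨t, 1, by simp, ?_⟩
      have := ht
      simp only [Polynomial.IsRoot, Polynomial.eval_add, Polynomial.eval_mul,
        Polynomial.eval_pow, Polynomial.eval_C, Polynomial.eval_X] at this
      linear_combination this
  -- the element t = x • r 0 + y • r 1
  set t : V ⊗[k] V := x • r 0 + y • r 1 with ht_def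
  have htR : t ∈ R := by
    apply R.add_mem <;> exact R.smul_mem _ (Subtype.coe_prop _)
  have htne : t ≠ 0 := by
    intro h
    have := linearIndependent_iff'.mp hrli Finset.univ ![x, y] (by
      rw [Fin.sum_univ_two]; simpa using h)
    exact hxy ⟨by simpa using this 0 (Finset.mem_univ _), by simpa using this 1 (Finset.mem_univ _)⟩
  -- coordinates of t
  let c : Fin 2 → Fin 2 → k := fun i j => B.repr t (i, j)
  have hc : ∀ i j, c i j = x * A i j + y * C i j := by
    intro i j
    simp only [c, A, C, ht_def, map_add, map_smul, Finsupp.add_apply, Finsupp.smul_apply,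
      smul_eq_mul]
  have hdet : c 0 0 * c 1 1 = c 0 1 * c 1 0 := by
    simp only [hc]
    linear_combination hq
  have hrepr : t = c 0 0 • (b 0 ⊗ₜ[k] b 0) + c 0 1 • (b 0 ⊗ₜ[k] b 1)
      + c 1 0 • (b 1 ⊗ₜ[k] b 0) + c 1 1 • (b 1 ⊗ₜ[k] b 1) := by
    have := B.sum_repr t
    rw [Fintype.sum_prod_type] at this
    simp only [Fin.sum_univ_two, Module.Basis.tensorProduct_apply, B] at this
    rw [← this]
    abel
  obtain ⟨u, v, huv⟩ := decomp_aux k V b c hdet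
  exact ⟨u, v, by rw [huv, ← hrepr]; exact htR, by rw [huv, ← hrepr]; exact htne⟩
end

section
/- Let k be an algebraically closed field, s > 2, m ≥ 0, F = k⟨x₁,…,x_m,y⟩ the free associative k-algebra, and L the k-span of its generators. Let f ∈ L^{s−1} be homogeneous of degree s−1 such that y·f and f·y are linearly independent, and assume it is NOT the case that s = 2t and f = (g·y)^{t−1}·g for some integer t and some g ∈ L. Set W = span{y·f, f·y}. Then W·L^{s−1} ∩ L·(Σ_{i=0}^{s−2} L^i·W·L^{s−2−i}) ≠ (W·L ∩ L·W)·L^{s−2}, as subspaces of L^{2s−1} ⊆ F. -/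
noncomputable section

set_option linter.unusedSectionVars false
set_option linter.unusedVariables false

namespace Stmt12Aux

open MonoidAlgebra

variable {k : Type} [Field k] {X : Type} [DecidableEq X]

abbrev MA (k X : Type) [Field k] := MonoidAlgebra k (FreeMonoid X)

instance instCoeFunMA : CoeFun (MA k X) (fun _ => FreeMonoid X → k) := ⟨fun F => ⇑F.coeff⟩

def sing (k : Type) [Field k] {X : Type} (x : X) : MA k X :=
  MonoidAlgebra.single (FreeMonoid.of x) 1

lemma MAsingle_eq_same {a : FreeMonoid X} {b : k} : (single a b : MA k X) a = b :=
  Finsupp.single_eq_same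

lemma MAsingle_eq_of_ne' {a a' : FreeMonoid X} {b : k} (h : a ≠ a') : (single a b : MA k X) a' = 0 :=
  Finsupp.single_eq_of_ne' h

lemma cons_inj (x : X) : Function.Injective (fun w : FreeMonoid X => FreeMonoid.of x * w) := by
  intro a b h
  apply FreeMonoid.toList.injective
  have := congrArg FreeMonoid.toList h
  simpa using this

lemma snoc_inj (v : FreeMonoid X) : Function.Injective (fun w : FreeMonoid X => w * v) := by
  intro a b h
  exact mul_right_cancel h

/-- strip the first letter `x` -/
def lstrip (x : X) : MA k X →ₗ[k] MA k X :=
  (MonoidAlgebra.coeffLinearEquiv k).symm.toLinearMap ∘ₗ Finsupp.lcomapDomain _ (cons_inj x) ∘ₗ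
    (MonoidAlgebra.coeffLinearEquiv k).toLinearMap

/-- strip the suffix `v` -/
def rstrip (v : FreeMonoid X) : MA k X →ₗ[k] MA k X :=
  (MonoidAlgebra.coeffLinearEquiv k).symm.toLinearMap ∘ₗ Finsupp.lcomapDomain _ (snoc_inj v) ∘ₗ
    (MonoidAlgebra.coeffLinearEquiv k).toLinearMap

@[simp] lemma lstrip_apply (x : X) (F : MA k X) (w : FreeMonoid X) :
    lstrip x F w = F (FreeMonoid.of x * w) := rfl

@[simp] lemma rstrip_apply (v : FreeMonoid X) (F : MA k X) (w : FreeMonoid X) :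
    rstrip v F w = F (w * v) := rfl

lemma rstrip_one (F : MA k X) : rstrip 1 F = F := by
  ext w; simp

lemma rstrip_mul_strip (v : FreeMonoid X) (z : X) (F : MA k X) :
    rstrip (v * FreeMonoid.of z) F = rstrip v (rstrip (FreeMonoid.of z) F) := by
  ext w; simp [mul_assoc]

/-- homogeneity of degree n -/
def Hom (n : ℕ) (F : MA k X) : Prop := ∀ w : FreeMonoid X, F w ≠ 0 → w.length = n

lemma Hom.zero (n : ℕ) : Hom n (0 : MA k X) := fun w h => absurd rfl h

lemma Hom.add {n : ℕ} {F G : MA k X} (hF : Hom n F) (hG : Hom n G) : Hom n (F + G) := by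
  intro w h
  rcases ne_or_eq (F w) 0 with h1 | h1
  · exact hF w h1
  · refine hG w ?_
    intro h2
    exact h (show (F + G) w = 0 by rw [MonoidAlgebra.coeff_add, Finsupp.add_apply, h1, h2, add_zero])

lemma Hom.smul {n : ℕ} {c : k} {F : MA k X} (hF : Hom n F) : Hom n (c • F) := by
  intro w h
  refine hF w ?_
  intro h2
  exact h (show (c • F) w = 0 by rw [MonoidAlgebra.coeff_smul_apply, h2, smul_zero])

lemma Hom.single {w : FreeMonoid X} {c : k} : Hom w.length (single w c : MA k X) := by
  intro u h
  by_cases hu : w = u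
  · rw [hu]
  · simp [MonoidAlgebra.coeff_single, Finsupp.single_apply, hu] at h

lemma hom_sing (x : X) : Hom 1 (sing k x) := by
  have := Hom.single (k := k) (X := X) (w := FreeMonoid.of x) (c := 1)
  simpa [sing] using this

lemma Hom.mul {a b : ℕ} {F G : MA k X} (hF : Hom a F) (hG : Hom b G) : Hom (a + b) (F * G) := by
  intro w h
  have hw : w ∈ (F * G).coeff.support := Finsupp.mem_support_iff.2 h
  classical
  have := MonoidAlgebra.support_coeff_mul_subset F G hw
  rcases Finset.mem_mul.1 this with ⟨u, hu, v, hv, rfl⟩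
  rw [FreeMonoid.length_mul]
  rw [hF u (Finsupp.mem_support_iff.1 hu), hG v (Finsupp.mem_support_iff.1 hv)]

lemma Hom.apply_one {n : ℕ} {F : MA k X} (hF : Hom n F) (hn : n ≠ 0) : F 1 = 0 := by
  by_contra h
  exact hn (by simpa using (hF 1 h).symm)

lemma Hom.eq_smul_one {F : MA k X} (hF : Hom 0 F) : F = F 1 • (1 : MA k X) := by
  ext w
  by_cases hw : w = 1
  · subst hw; simp [MonoidAlgebra.one_def]
  · have : F w = 0 := by
      by_contra h
      exact hw (FreeMonoid.length_eq_zero.1 (hF w h))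
    rw [this]
    simp [MonoidAlgebra.one_def, MonoidAlgebra.coeff_single, Finsupp.single_apply, Ne.symm hw]

lemma Hom.lstrip {n : ℕ} {F : MA k X} (hF : Hom (n+1) F) (x : X) : Hom n (lstrip x F) := by
  intro w h
  have := hF _ h
  simp [FreeMonoid.length_mul] at this
  omega

lemma Hom.rstrip {n : ℕ} {F : MA k X} (hF : Hom (n+1) F) (z : X) :
    Hom n (rstrip (FreeMonoid.of z) F) := by
  intro w h
  have := hF _ h
  simp [FreeMonoid.length_mul] at this
  omega




lemma of_mul_ne_one (x : X) (w : FreeMonoid X) : FreeMonoid.of x * w ≠ 1 := by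
  intro h
  have := congrArg FreeMonoid.length h
  simp [FreeMonoid.length_mul] at this

lemma mul_of_ne_one (w : FreeMonoid X) (z : X) : w * FreeMonoid.of z ≠ 1 := by
  intro h
  have := congrArg FreeMonoid.length h
  simp [FreeMonoid.length_mul] at this

lemma of_mul_eq_of_mul_iff (x x' : X) (w w' : FreeMonoid X) :
    FreeMonoid.of x * w = FreeMonoid.of x' * w' ↔ x = x' ∧ w = w' := by
  constructor
  · intro h
    have h2 := congrArg FreeMonoid.toList h
    simp at h2
    refine ⟨h2.1, FreeMonoid.toList.injective h2.2⟩
  · rintro ⟨rfl, rfl⟩; rfl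

lemma mul_of_eq_mul_of_iff (w w' : FreeMonoid X) (z z' : X) :
    w * FreeMonoid.of z = w' * FreeMonoid.of z' ↔ w = w' ∧ z = z' := by
  constructor
  · intro h
    have h2 := congrArg FreeMonoid.toList h
    simp at h2
    exact h2
  · rintro ⟨rfl, rfl⟩; rfl

lemma lstrip_single_cons (x x' : X) (w : FreeMonoid X) (c : k) :
    lstrip x (single (FreeMonoid.of x' * w) c : MA k X) =
      if x' = x then single w c else 0 := by
  classical
  ext u
  by_cases h : x' = x
  · subst h
    rw [if_pos rfl, lstrip_apply]
    by_cases hw : w = u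
    · subst hw
      rw [MAsingle_eq_same, MAsingle_eq_same]
    · rw [MAsingle_eq_of_ne' (fun hc => hw ((of_mul_eq_of_mul_iff _ _ _ _).1 hc).2),
        MAsingle_eq_of_ne' hw]
  · rw [if_neg h, lstrip_apply,
      MAsingle_eq_of_ne' (fun hc => h ((of_mul_eq_of_mul_iff _ _ _ _).1 hc).1)]
    rfl

lemma lstrip_single_one (x : X) (c : k) : lstrip x (single 1 c : MA k X) = 0 := by
  ext u
  rw [lstrip_apply, MAsingle_eq_of_ne' (fun hc => of_mul_ne_one x u hc.symm)]
  rfl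

lemma rstrip_single_snoc (z z' : X) (w : FreeMonoid X) (c : k) :
    rstrip (FreeMonoid.of z) (single (w * FreeMonoid.of z') c : MA k X) =
      if z' = z then single w c else 0 := by
  classical
  ext u
  by_cases h : z' = z
  · subst h
    rw [if_pos rfl, rstrip_apply]
    by_cases hw : w = u
    · subst hw
      rw [MAsingle_eq_same, MAsingle_eq_same]
    · rw [MAsingle_eq_of_ne' (fun hc => hw ((mul_of_eq_mul_of_iff _ _ _ _).1 hc).1),
        MAsingle_eq_of_ne' hw]
  · rw [if_neg h, rstrip_apply,
      MAsingle_eq_of_ne' (fun hc => h ((mul_of_eq_mul_of_iff _ _ _ _).1 hc).2)]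
    rfl

lemma rstrip_single_one (z : X) (c : k) : rstrip (FreeMonoid.of z) (single 1 c : MA k X) = 0 := by
  ext u
  rw [rstrip_apply, MAsingle_eq_of_ne' (fun hc => mul_of_ne_one u z hc.symm)]
  rfl

lemma single_one_mul (c : k) (A : MA k X) : (single 1 c : MA k X) * A = c • A := by
  have h : (single 1 c : MA k X) = c • (1 : MA k X) := by
    rw [MonoidAlgebra.one_def, MonoidAlgebra.smul_single', mul_one]
  rw [h, smul_mul_assoc, one_mul]

lemma mul_single_one (c : k) (A : MA k X) : A * (single 1 c : MA k X) = c • A := by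
  have h : (single 1 c : MA k X) = c • (1 : MA k X) := by
    rw [MonoidAlgebra.one_def, MonoidAlgebra.smul_single', mul_one]
  rw [h, mul_smul_comm, mul_one]

/-- product rule for the left strip -/
lemma lstrip_mul (x : X) (F G : MA k X) :
    lstrip x (F * G) = lstrip x F * G + F 1 • lstrip x G := by
  induction F using MonoidAlgebra.induction_linear with
  | zero => simp
  | add F1 F2 h1 h2 =>
    rw [add_mul, map_add, h1, h2, map_add, add_mul, MonoidAlgebra.coeff_add, Finsupp.add_apply, add_smul]
    abel
  | single u c =>
    induction G using MonoidAlgebra.induction_linear with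
    | zero => simp
    | add G1 G2 h1 h2 =>
      rw [mul_add, map_add, h1, h2, map_add, mul_add, smul_add]
      abel
    | single v d =>
      rw [MonoidAlgebra.single_mul_single]
      induction u using FreeMonoid.casesOn with
      | one =>
        rw [one_mul, lstrip_single_one, zero_mul, zero_add, MAsingle_eq_same,
          ← map_smul, MonoidAlgebra.smul_single']
      | of_mul x' w =>
        rw [mul_assoc, lstrip_single_cons, lstrip_single_cons,
          MAsingle_eq_of_ne' (of_mul_ne_one x' w), zero_smul, add_zero]
        by_cases h : x' = x
        · rw [if_pos h, if_pos h, MonoidAlgebra.single_mul_single]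
        · rw [if_neg h, if_neg h, zero_mul]

/-- product rule for the right strip -/
lemma rstrip_mul (z : X) (F G : MA k X) :
    rstrip (FreeMonoid.of z) (F * G) =
      F * rstrip (FreeMonoid.of z) G + G 1 • rstrip (FreeMonoid.of z) F := by
  induction G using MonoidAlgebra.induction_linear with
  | zero => simp
  | add G1 G2 h1 h2 =>
    rw [mul_add, map_add, h1, h2, map_add, mul_add, MonoidAlgebra.coeff_add, Finsupp.add_apply, add_smul]
    abel
  | single v d =>
    induction F using MonoidAlgebra.induction_linear with
    | zero => simp
    | add F1 F2 h1 h2 =>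
      rw [add_mul, map_add, h1, h2, map_add, add_mul, smul_add]
      abel
    | single u c =>
      rw [MonoidAlgebra.single_mul_single]
      rcases (FreeMonoid.toList v).eq_nil_or_concat with hv | ⟨L, b, hb⟩
      · have hv1 : v = 1 := FreeMonoid.toList.injective (by simpa using hv)
        subst hv1
        rw [mul_one, rstrip_single_one, mul_zero, zero_add, MAsingle_eq_same,
          ← map_smul, MonoidAlgebra.smul_single', mul_comm d c]
      · have hv1 : v = FreeMonoid.ofList L * FreeMonoid.of b := by
          apply FreeMonoid.toList.injective
          simp [hb, List.concat_eq_append]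
        subst hv1
        rw [← mul_assoc, rstrip_single_snoc, rstrip_single_snoc,
          MAsingle_eq_of_ne' (mul_of_ne_one _ b), zero_smul, add_zero]
        by_cases h : b = z
        · rw [if_pos h, if_pos h, MonoidAlgebra.single_mul_single]
        · rw [if_neg h, if_neg h, mul_zero]


lemma hom1_lstrip {G : MA k X} (hG : Hom 1 G) (x : X) :
    lstrip x G = single 1 (G (FreeMonoid.of x)) := by
  classical
  ext u
  rw [lstrip_apply]
  by_cases hu : u = 1
  · subst hu
    rw [mul_one, MAsingle_eq_same]
  · rw [MAsingle_eq_of_ne' (Ne.symm hu)]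
    by_contra h
    have := hG _ h
    rw [FreeMonoid.length_mul, FreeMonoid.length_of] at this
    exact hu (FreeMonoid.length_eq_zero.1 (by omega))

lemma hom1_rstrip {G : MA k X} (hG : Hom 1 G) (z : X) :
    rstrip (FreeMonoid.of z) G = single 1 (G (FreeMonoid.of z)) := by
  classical
  ext u
  rw [rstrip_apply]
  by_cases hu : u = 1
  · subst hu
    rw [one_mul, MAsingle_eq_same]
  · rw [MAsingle_eq_of_ne' (Ne.symm hu)]
    by_contra h
    have := hG _ h
    rw [FreeMonoid.length_mul, FreeMonoid.length_of] at this
    exact hu (FreeMonoid.length_eq_zero.1 (by omega))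

/-- normal form : `sing x * G` is a `mapDomain` -/
lemma sing_mul_eq_mapDomain (x : X) (G : MA k X) :
    (sing k x * G).coeff = Finsupp.mapDomain (fun w => FreeMonoid.of x * w) G.coeff := by
  induction G using MonoidAlgebra.induction_linear with
  | zero => simp [Finsupp.mapDomain_zero]
  | add G1 G2 h1 h2 => rw [mul_add, MonoidAlgebra.coeff_add, h1, h2, MonoidAlgebra.coeff_add, Finsupp.mapDomain_add]
  | single v d =>
    rw [sing, MonoidAlgebra.single_mul_single, one_mul, MonoidAlgebra.coeff_single,
      MonoidAlgebra.coeff_single, Finsupp.mapDomain_single]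

lemma mul_sing_eq_mapDomain (z : X) (G : MA k X) :
    (G * sing k z).coeff = Finsupp.mapDomain (fun w => w * FreeMonoid.of z) G.coeff := by
  induction G using MonoidAlgebra.induction_linear with
  | zero => simp [Finsupp.mapDomain_zero]
  | add G1 G2 h1 h2 => rw [add_mul, MonoidAlgebra.coeff_add, h1, h2, MonoidAlgebra.coeff_add, Finsupp.mapDomain_add]
  | single v d =>
    rw [sing, MonoidAlgebra.single_mul_single, mul_one, MonoidAlgebra.coeff_single,
      MonoidAlgebra.coeff_single, Finsupp.mapDomain_single]

lemma sing_mul_apply_cons (x : X) (G : MA k X) (w : FreeMonoid X) :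
    (sing k x * G) (FreeMonoid.of x * w) = G w := by
  rw [sing_mul_eq_mapDomain, Finsupp.mapDomain_apply (cons_inj x)]

lemma sing_mul_apply_one (x : X) (G : MA k X) : (sing k x * G) 1 = 0 := by
  rw [sing_mul_eq_mapDomain]
  apply Finsupp.mapDomain_notin_range
  rintro ⟨w, hw⟩
  exact of_mul_ne_one x w hw

lemma sing_mul_apply_cons_ne (x x' : X) (hxx : x ≠ x') (G : MA k X) (w : FreeMonoid X) :
    (sing k x * G) (FreeMonoid.of x' * w) = 0 := by
  rw [sing_mul_eq_mapDomain]
  apply Finsupp.mapDomain_notin_range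
  rintro ⟨u, hu⟩
  exact hxx ((of_mul_eq_of_mul_iff _ _ _ _).1 hu).1

lemma mul_sing_apply_snoc (z : X) (G : MA k X) (w : FreeMonoid X) :
    (G * sing k z) (w * FreeMonoid.of z) = G w := by
  rw [mul_sing_eq_mapDomain, Finsupp.mapDomain_apply (snoc_inj _)]

variable [Fintype X]

/-- reconstruction from the left -/
lemma recon_left {F : MA k X} (hF : F 1 = 0) :
    F = ∑ x : X, sing k x * lstrip x F := by
  classical
  ext u
  rw [MonoidAlgebra.coeff_sum, Finsupp.finset_sum_apply]
  induction u using FreeMonoid.casesOn with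
  | one =>
    rw [hF]
    symm
    apply Finset.sum_eq_zero
    intro x _
    exact sing_mul_apply_one x _
  | of_mul x0 w =>
    rw [Finset.sum_eq_single x0]
    · rw [sing_mul_apply_cons, lstrip_apply]
    · intro x _ hx
      exact sing_mul_apply_cons_ne x x0 hx _ w
    · intro h
      exact absurd (Finset.mem_univ x0) h

/-- reconstruction from the right -/
lemma recon_right {F : MA k X} (hF : F 1 = 0) :
    F = ∑ z : X, rstrip (FreeMonoid.of z) F * sing k z := by
  classical
  ext u
  rw [MonoidAlgebra.coeff_sum, Finsupp.finset_sum_apply]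
  rcases (FreeMonoid.toList u).eq_nil_or_concat with hu | ⟨L, b, hb⟩
  · have hu1 : u = 1 := FreeMonoid.toList.injective (by simpa using hu)
    subst hu1
    rw [hF]
    symm
    apply Finset.sum_eq_zero
    intro z _
    rw [mul_sing_eq_mapDomain]
    apply Finsupp.mapDomain_notin_range
    rintro ⟨w, hw⟩
    exact mul_of_ne_one w z hw
  · have hu1 : u = FreeMonoid.ofList L * FreeMonoid.of b := by
      apply FreeMonoid.toList.injective
      simp [hb, List.concat_eq_append]
    subst hu1
    rw [Finset.sum_eq_single b]
    · rw [mul_sing_apply_snoc, rstrip_apply]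
    · intro z _ hz
      rw [mul_sing_eq_mapDomain]
      apply Finsupp.mapDomain_notin_range
      rintro ⟨w, hw⟩
      exact hz ((mul_of_eq_mul_of_iff _ _ _ _).1 hw).2
    · intro h
      exact absurd (Finset.mem_univ b) h

/-- reconstruction of homogeneous degree-1 elements -/
lemma hom1_recon {G : MA k X} (hG : Hom 1 G) :
    G = ∑ x : X, G (FreeMonoid.of x) • sing k x := by
  classical
  have h1 : G 1 = 0 := hG.apply_one one_ne_zero
  calc G = ∑ x : X, sing k x * lstrip x G := recon_left h1
    _ = ∑ x : X, G (FreeMonoid.of x) • sing k x := by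
        apply Finset.sum_congr rfl
        intro x _
        rw [hom1_lstrip hG, sing, MonoidAlgebra.single_mul_single, one_mul, mul_one,
          MonoidAlgebra.smul_single', mul_one]


lemma length_succ_snoc {v : FreeMonoid X} {r : ℕ} (h : v.length = r + 1) :
    ∃ (v' : FreeMonoid X) (z : X), v = v' * FreeMonoid.of z ∧ v'.length = r := by
  rcases (FreeMonoid.toList v).eq_nil_or_concat with hv | ⟨L, b, hb⟩
  · exfalso
    have hv1 : v = 1 := FreeMonoid.toList.injective (by simpa using hv)
    subst hv1
    simp at h
  · refine ⟨FreeMonoid.ofList L, b, ?_, ?_⟩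
    · apply FreeMonoid.toList.injective
      simp [hb, List.concat_eq_append]
    · have : v.length = L.length + 1 := by
        have := congrArg List.length hb
        simpa [FreeMonoid.length] using this
      have hL : (FreeMonoid.ofList L).length = L.length := rfl
      omega

/-- generalized left strip -/
def lstripW (u : FreeMonoid X) : MA k X →ₗ[k] MA k X :=
  (MonoidAlgebra.coeffLinearEquiv k).symm.toLinearMap ∘ₗ
    Finsupp.lcomapDomain _ (fun a b (h : u * a = u * b) => mul_left_cancel h) ∘ₗ
    (MonoidAlgebra.coeffLinearEquiv k).toLinearMap

@[simp] lemma lstripW_apply (u : FreeMonoid X) (F : MA k X) (w : FreeMonoid X) :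
    lstripW u F w = F (u * w) := rfl

lemma lstripW_one (F : MA k X) : lstripW 1 F = F := by ext w; simp

lemma lstripW_cons (x : X) (u : FreeMonoid X) (F : MA k X) :
    lstripW (FreeMonoid.of x * u) F = lstripW u (lstrip x F) := by
  ext w; simp [mul_assoc]

lemma hom0_mul {B A : MA k X} (hB : Hom 0 B) : A * B = B 1 • A := by
  have h : A * B = A * (B 1 • 1) := by rw [← hB.eq_smul_one]
  rw [h, mul_smul_comm, mul_one]

lemma hom0_mul' {B A : MA k X} (hB : Hom 0 B) : B * A = B 1 • A := by
  have h : B * A = (B 1 • 1) * A := by rw [← hB.eq_smul_one]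
  rw [h, smul_mul_assoc, one_mul]

/-- evaluation from the left : `lstripW u (A * B) = A u • B` for `A` homogeneous `|u|` -/
lemma lstripW_hom_mul : ∀ (a : ℕ) (u : FreeMonoid X) (A B : MA k X), Hom a A →
    u.length = a → lstripW u (A * B) = A u • B := by
  intro a
  induction a with
  | zero =>
    intro u A B hA hu
    have hu1 : u = 1 := FreeMonoid.length_eq_zero.1 hu
    subst hu1
    rw [lstripW_one, hom0_mul' hA]
  | succ n ih =>
    intro u A B hA hu
    induction u using FreeMonoid.casesOn with
    | one => simp at hu
    | of_mul x u' =>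
      rw [lstripW_cons, lstrip_mul, hA.apply_one (by omega), zero_smul, add_zero]
      have hu' : u'.length = n := by
        rw [FreeMonoid.length_mul, FreeMonoid.length_of] at hu
        omega
      rw [ih u' _ B (hA.lstrip x) hu']
      rfl

/-- evaluation from the right : `rstrip v (A * B) = B v • A` for `B` homogeneous `|v|` -/
lemma rstrip_hom_mul : ∀ (b : ℕ) (v : FreeMonoid X) (A B : MA k X), Hom b B →
    v.length = b → rstrip v (A * B) = B v • A := by
  intro b
  induction b with
  | zero =>
    intro v A B hB hv
    have hv1 : v = 1 := FreeMonoid.length_eq_zero.1 hv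
    subst hv1
    rw [rstrip_one, hom0_mul hB]
  | succ n ih =>
    intro v A B hB hv
    rcases length_succ_snoc hv with ⟨v', z, rfl, hv'⟩
    rw [rstrip_mul_strip, rstrip_mul, hB.apply_one (by omega), zero_smul, add_zero]
    rw [ih v' A _ (hB.rstrip z) hv']
    rfl

/-- partial right strip : `rstrip v (A * B) = A * rstrip v B` when `|v| ≤ deg B` -/
lemma rstrip_partial : ∀ (r : ℕ) (v : FreeMonoid X) (b : ℕ) (A B : MA k X), Hom b B →
    v.length = r → r ≤ b → rstrip v (A * B) = A * rstrip v B := by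
  intro r
  induction r with
  | zero =>
    intro v b A B hB hv hrb
    have hv1 : v = 1 := FreeMonoid.length_eq_zero.1 hv
    subst hv1
    rw [rstrip_one, rstrip_one]
  | succ n ih =>
    intro v b A B hB hv hrb
    rcases length_succ_snoc hv with ⟨v', z, rfl, hv'⟩
    obtain ⟨b', rfl⟩ : ∃ b', b = b' + 1 := ⟨b - 1, by omega⟩
    rw [rstrip_mul_strip, rstrip_mul_strip, rstrip_mul, hB.apply_one (by omega),
      zero_smul, add_zero]
    exact ih v' b' A _ (hB.rstrip z) hv' (by omega)

lemma mul_sing_injective (z : X) : Function.Injective (fun A : MA k X => A * sing k z) := by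
  intro A B h
  have h' := congrArg MonoidAlgebra.coeff h
  simp only [mul_sing_eq_mapDomain] at h'
  exact MonoidAlgebra.coeff_injective (Finsupp.mapDomain_injective (snoc_inj _) h')

lemma sing_mul_injective (x : X) : Function.Injective (fun A : MA k X => sing k x * A) := by
  intro A B h
  have h' := congrArg MonoidAlgebra.coeff h
  simp only [sing_mul_eq_mapDomain] at h'
  exact MonoidAlgebra.coeff_injective (Finsupp.mapDomain_injective (cons_inj _) h')

/-- cancel a nonzero homogeneous degree-1 factor on the right -/
lemma hom1_mul_right_cancel {G : MA k X} (hG : Hom 1 G) {z0 : X}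
    (hz : G (FreeMonoid.of z0) ≠ 0) {A B : MA k X} (h : A * G = B * G) : A = B := by
  have h2 := congrArg (rstrip (FreeMonoid.of z0)) h
  rw [rstrip_mul, rstrip_mul, hom1_rstrip hG, mul_single_one, mul_single_one] at h2
  simp only [hG.apply_one one_ne_zero, zero_smul, add_zero] at h2
  exact smul_right_injective _ hz h2

lemma hom1_mul_left_cancel {G : MA k X} (hG : Hom 1 G) {z0 : X}
    (hz : G (FreeMonoid.of z0) ≠ 0) {A B : MA k X} (h : G * A = G * B) : A = B := by
  have h2 := congrArg (lstrip z0) h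
  rw [lstrip_mul, lstrip_mul, hom1_lstrip hG, single_one_mul, single_one_mul] at h2
  simp only [hG.apply_one one_ne_zero, zero_smul, add_zero] at h2
  exact smul_right_injective _ hz h2

/-- the span of the letters -/
def Lspan (k X : Type) [Field k] : Submodule k (MA k X) :=
  Submodule.span k (Set.range (sing k : X → MA k X))

lemma Lspan_hom1 {u : MA k X} (hu : u ∈ Lspan k X) : Hom 1 u := by
  induction hu using Submodule.span_induction with
  | mem v hv => obtain ⟨x, rfl⟩ := hv; exact hom_sing x
  | zero => exact Hom.zero 1
  | add a b _ _ ha hb => exact ha.add hb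
  | smul c a _ ha => exact ha.smul

lemma Lspan_pow_hom : ∀ (n : ℕ) (u : MA k X), u ∈ (Lspan k X) ^ n → Hom n u := by
  intro n
  induction n with
  | zero =>
    intro u hu
    rw [pow_zero, Submodule.one_eq_span] at hu
    induction hu using Submodule.span_induction with
    | mem v hv =>
      rcases hv with rfl
      rw [MonoidAlgebra.one_def]
      exact Hom.single (w := 1)
    | zero => exact Hom.zero 0
    | add a b _ _ ha hb => exact ha.add hb
    | smul c a _ ha => exact ha.smul
  | succ n ih =>
    intro u hu
    rw [pow_succ] at hu
    refine Submodule.mul_induction_on hu ?_ ?_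
    · intro a ha b hb
      exact (ih a ha).mul (Lspan_hom1 hb)
    · intro a b ha hb
      exact ha.add hb

/-- stripping a letter from a member of `Lspan * S` -/
lemma lstrip_mem {S : Submodule k (MA k X)} {u : MA k X} (hu : u ∈ Lspan k X * S) (x : X) :
    lstrip x u ∈ S := by
  refine Submodule.mul_induction_on hu ?_ ?_
  · intro a ha b hb
    rw [lstrip_mul, hom1_lstrip (Lspan_hom1 ha), single_one_mul,
      (Lspan_hom1 ha).apply_one one_ne_zero, zero_smul, add_zero]
    exact S.smul_mem _ hb
  · intro a b ha hb
    rw [map_add]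
    exact S.add_mem ha hb

lemma rstrip_mem {S : Submodule k (MA k X)} {u : MA k X} (hu : u ∈ S * Lspan k X) (z : X) :
    rstrip (FreeMonoid.of z) u ∈ S := by
  refine Submodule.mul_induction_on hu ?_ ?_
  · intro a ha b hb
    rw [rstrip_mul, hom1_rstrip (Lspan_hom1 hb), mul_single_one,
      (Lspan_hom1 hb).apply_one one_ne_zero, zero_smul, add_zero]
    exact S.smul_mem _ ha
  · intro a b ha hb
    rw [map_add]
    exact S.add_mem ha hb

lemma rstrip_pow_mem : ∀ (r : ℕ) (S : Submodule k (MA k X)) (v : FreeMonoid X) (u : MA k X),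
    u ∈ S * (Lspan k X) ^ r → v.length = r → rstrip v u ∈ S := by
  intro r
  induction r with
  | zero =>
    intro S v u hu hv
    have hv1 : v = 1 := FreeMonoid.length_eq_zero.1 hv
    subst hv1
    rw [pow_zero, Submodule.mul_one] at hu
    rw [rstrip_one]
    exact hu
  | succ n ih =>
    intro S v u hu hv
    rcases length_succ_snoc hv with ⟨v', z, rfl, hv'⟩
    rw [pow_succ, ← mul_assoc] at hu
    rw [rstrip_mul_strip]
    exact ih S v' _ (rstrip_mem hu z) hv'


lemma sing_apply_same (x : X) : (sing k x) (FreeMonoid.of x) = 1 := MAsingle_eq_same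

lemma sing_apply_ne {x z : X} (h : x ≠ z) : (sing k x) (FreeMonoid.of z) = 0 :=
  MAsingle_eq_of_ne' (fun hc => h (FreeMonoid.of_injective hc))

lemma sing_apply_one (x : X) : (sing k x) 1 = 0 :=
  MAsingle_eq_of_ne' (of_mul_ne_one x 1 ∘ (by rw [mul_one]; exact id))

lemma lstrip_sing_mul_same (y : X) (B : MA k X) : lstrip y (sing k y * B) = B := by
  rw [lstrip_mul, hom1_lstrip (hom_sing y), sing_apply_same, single_one_mul, one_smul,
    sing_apply_one, zero_smul, add_zero]

lemma lstrip_sing_mul_ne {z y : X} (h : y ≠ z) (B : MA k X) :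
    lstrip z (sing k y * B) = 0 := by
  rw [lstrip_mul, hom1_lstrip (hom_sing y), sing_apply_ne h, sing_apply_one, zero_smul,
    add_zero]
  simp

lemma rstrip_mul_sing_same (y : X) (B : MA k X) :
    rstrip (FreeMonoid.of y) (B * sing k y) = B := by
  rw [rstrip_mul, hom1_rstrip (hom_sing y), sing_apply_same, mul_single_one, one_smul,
    sing_apply_one, zero_smul, add_zero]

lemma rstrip_mul_sing_ne {z y : X} (h : y ≠ z) (B : MA k X) :
    rstrip (FreeMonoid.of z) (B * sing k y) = 0 := by
  rw [rstrip_mul, hom1_rstrip (hom_sing y), sing_apply_ne h, sing_apply_one, zero_smul,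
    add_zero]
  simp

lemma hom1_mul_apply {A : MA k X} (hA : Hom 1 A) (B : MA k X) (x : X) (w : FreeMonoid X) :
    (A * B) (FreeMonoid.of x * w) = A (FreeMonoid.of x) * B w := by
  rw [← lstrip_apply, lstrip_mul, hom1_lstrip hA, single_one_mul,
    hA.apply_one one_ne_zero, zero_smul, add_zero, MonoidAlgebra.coeff_smul_apply, smul_eq_mul]

lemma mul_hom1_apply {A : MA k X} (hA : Hom 1 A) (B : MA k X) (w : FreeMonoid X) (z : X) :
    (B * A) (w * FreeMonoid.of z) = B w * A (FreeMonoid.of z) := by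
  rw [← rstrip_apply, rstrip_mul, hom1_rstrip hA, mul_single_one,
    hA.apply_one one_ne_zero, zero_smul, add_zero, MonoidAlgebra.coeff_smul_apply, smul_eq_mul]
  rw [mul_comm]

/-- cancel `G * sing y` on the right, `G` homogeneous of degree 1 with a nonzero coefficient -/
lemma mul_GY_cancel {G : MA k X} (hG : Hom 1 G) {z0 : X}
    (hGz0 : G (FreeMonoid.of z0) ≠ 0) (y : X) {A B : MA k X}
    (h : A * (G * sing k y) = B * (G * sing k y)) : A = B := by
  rw [← mul_assoc, ← mul_assoc] at h
  exact hom1_mul_right_cancel hG hGz0 (mul_sing_injective y h)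

lemma mul_GY_eq_zero {G : MA k X} (hG : Hom 1 G) {z0 : X}
    (hGz0 : G (FreeMonoid.of z0) ≠ 0) (y : X) {A : MA k X}
    (h : A * (G * sing k y) = 0) : A = 0 := by
  apply mul_GY_cancel hG hGz0 y
  rw [h, zero_mul]

lemma hom1_exists_letter {A : MA k X} (hA : Hom 1 A) (hA0 : A ≠ 0) :
    ∃ z : X, A (FreeMonoid.of z) ≠ 0 := by
  rcases Finsupp.ne_iff.1 (mt MonoidAlgebra.coeff_eq_zero.1 hA0) with ⟨w, hw⟩
  simp only [Finsupp.coe_zero, Pi.zero_apply] at hw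
  have hlen := hA w hw
  rcases List.length_eq_one_iff.mp (by simpa [FreeMonoid.length] using hlen) with ⟨z, hz⟩
  refine ⟨z, ?_⟩
  have hwz : w = FreeMonoid.of z := FreeMonoid.toList.injective (by simpa using hz)
  rwa [← hwz]

/-- **core classification**: an `A` commuting with `G·y` up to scalar is a power of `G·y` -/
lemma lemR (y z0 : X) (hz0y : z0 ≠ y) (G : MA k X) (hG : Hom 1 G)
    (hGz0 : G (FreeMonoid.of z0) ≠ 0) (lam : k) :
    ∀ r, ∀ A : MA k X, Hom r A → A ≠ 0 →
      A * (G * sing k y) = lam • ((G * sing k y) * A) →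
      ∃ (e : ℕ) (c : k), c ≠ 0 ∧ r = 2 * e ∧ A = c • (G * sing k y) ^ e := by
  intro r
  induction r using Nat.strong_induction_on with
  | _ r ih =>
  intro A hA hA0 heq
  match r, ih with
  | 0, _ =>
    refine ⟨0, A 1, ?_, by omega, ?_⟩
    · intro h
      exact hA0 (by rw [hA.eq_smul_one, h, zero_smul])
    · rw [pow_zero, ← hA.eq_smul_one]
  | 1, _ => 
    exfalso
    obtain ⟨z, hz⟩ := hom1_exists_letter hA hA0
    have h1 := congrArg (fun T : MA k X => T (FreeMonoid.of z * (FreeMonoid.of z0 * FreeMonoid.of y))) heq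
    rw [hom1_mul_apply hA, hom1_mul_apply hG, sing_apply_same, mul_one,
      MonoidAlgebra.coeff_smul_apply] at h1
    rw [show ((G * sing k y) * A) (FreeMonoid.of z * (FreeMonoid.of z0 * FreeMonoid.of y))
        = 0 from ?_, smul_zero] at h1
    · exact hz (by
        rcases mul_eq_zero.1 h1 with h | h
        · exact h
        · exact absurd h hGz0)
    · rw [mul_assoc, hom1_mul_apply hG]
      rw [show (sing k y * A) (FreeMonoid.of z0 * FreeMonoid.of y) = 0 from
        sing_mul_apply_cons_ne y z0 (Ne.symm hz0y) A _, mul_zero]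
  | (r' + 2), ih =>
    have hA1 : A 1 = 0 := hA.apply_one (by omega)
    have hGY1 : (G * sing k y) 1 = 0 := (hG.mul (hom_sing y)).apply_one two_ne_zero
    -- (i) strip a letter on the left
    have hstrip : ∀ z : X, lstrip z A * (G * sing k y)
        = (lam * G (FreeMonoid.of z)) • (sing k y * A) := by
      intro z
      have h1 := congrArg (lstrip z) heq
      rw [lstrip_mul, hA1, zero_smul, add_zero, map_smul, lstrip_mul, hGY1, zero_smul,
        add_zero, lstrip_mul, hom1_lstrip hG, single_one_mul, hG.apply_one
        one_ne_zero, zero_smul, add_zero, smul_mul_assoc, smul_smul] at h1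
      exact h1
    -- (ii) lam ≠ 0
    have hlam : lam ≠ 0 := by
      intro h
      rw [h, zero_smul] at heq
      exact hA0 (mul_GY_eq_zero hG hGz0 y heq)
    set A1 : MA k X := lstrip z0 A with hA1def
    have hz0eq : A1 * (G * sing k y) = (lam * G (FreeMonoid.of z0)) • (sing k y * A) :=
      hstrip z0
    -- (v) all left strips proportional
    have hprop : ∀ z : X, lstrip z A = (G (FreeMonoid.of z) / G (FreeMonoid.of z0)) • A1 := by
      intro z
      apply mul_GY_cancel hG hGz0 y
      rw [hstrip z, smul_mul_assoc, hz0eq, smul_smul]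
      congr 1
      field_simp
    -- (vi) A = (1/G z0) • (G * A1)
    have hAeq : A = (1 / G (FreeMonoid.of z0)) • (G * A1) := by
      have h2 : ∀ z : X, sing k z * lstrip z A
          = (1 / G (FreeMonoid.of z0)) • ((G (FreeMonoid.of z) • sing k z) * A1) := by
        intro z
        rw [hprop z, mul_smul_comm, smul_mul_assoc, smul_smul]
        congr 1
        field_simp
      rw [recon_left hA1,
        show (∑ x : X, sing k x * lstrip x A)
          = ∑ z : X, (1 / G (FreeMonoid.of z0)) • ((G (FreeMonoid.of z) • sing k z) * A1)
          from Finset.sum_congr rfl (fun z _ => h2 z),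
        ← Finset.smul_sum, ← Finset.sum_mul, ← hom1_recon hG]
    -- (vii)
    have hA1ne : A1 ≠ 0 := by
      intro h
      exact hA0 (by rw [hAeq, h, mul_zero, smul_zero])
    -- (viii)
    have heq1 : A1 * (G * sing k y) = lam • (sing k y * (G * A1)) := by
      rw [hz0eq, hAeq, mul_smul_comm, smul_smul]
      congr 1
      field_simp
    -- (ix)
    have hA1one : A1 1 = 0 := (hA.lstrip z0).apply_one (by omega)
    have hA1strip : ∀ z : X, z ≠ y → lstrip z A1 = 0 := by
      intro z hzy
      have h1 := congrArg (lstrip z) heq1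
      rw [lstrip_mul, hA1one, zero_smul, add_zero, map_smul,
        lstrip_sing_mul_ne (Ne.symm hzy), smul_zero] at h1
      exact mul_GY_eq_zero hG hGz0 y h1
    -- (x)
    set A2 : MA k X := lstrip y A1 with hA2def
    have hA1eq : A1 = sing k y * A2 := by
      rw [recon_left hA1one, Finset.sum_eq_single y]
      · intro z _ hzy
        rw [hA1strip z hzy, mul_zero]
      · intro h
        exact absurd (Finset.mem_univ y) h
    have hA2ne : A2 ≠ 0 := fun h => hA1ne (by rw [hA1eq, h, mul_zero])
    -- (xii)
    have heq2 : A2 * (G * sing k y) = lam • ((G * sing k y) * A2) := by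
      have h1 := congrArg (lstrip y) heq1
      rw [hA1eq] at h1
      rw [mul_assoc (sing k y) A2 (G * sing k y), lstrip_sing_mul_same, map_smul,
        lstrip_sing_mul_same] at h1
      rw [mul_assoc G (sing k y) A2]
      exact h1
    -- (xiv) induction
    have hA2hom : Hom r' A2 := (hA.lstrip z0).lstrip y
    obtain ⟨e, c, hc0, hre, hA2eq⟩ := ih r' (by omega) A2 hA2hom hA2ne heq2
    refine ⟨e + 1, c / G (FreeMonoid.of z0), div_ne_zero hc0 hGz0, by omega, ?_⟩
    rw [hAeq, hA1eq, hA2eq, mul_smul_comm, mul_smul_comm, smul_smul,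
      ← mul_assoc, ← pow_succ']
    congr 1
    field_simp


lemma mul_sing_eq_zero {A : MA k X} {z : X} (h : A * sing k z = 0) : A = 0 :=
  mul_sing_injective z (show A * sing k z = 0 * sing k z by rw [h, zero_mul])

lemma sing_mul_eq_zero {A : MA k X} {x : X} (h : sing k x * A = 0) : A = 0 :=
  sing_mul_injective x (show sing k x * A = sing k x * 0 by rw [h, mul_zero])

/-- the "all `y`" case helper -/
lemma lemP (y : X) : ∀ (d : ℕ) (G : MA k X), Hom d G →
    (∃ a b : k, (G * sing k y) * sing k y
      = a • (sing k y * (sing k y * G)) + b • (sing k y * (G * sing k y))) →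
    ∃ c : k, G = c • (sing k y) ^ d := by
  intro d
  induction d with
  | zero =>
    intro G hG _
    exact ⟨G 1, by rw [pow_zero, ← hG.eq_smul_one]⟩
  | succ n ih =>
    intro G hG ⟨a, b, heq⟩
    have hG1 : G 1 = 0 := hG.apply_one (by omega)
    have hGY1 : (G * sing k y) 1 = 0 := (hG.mul (hom_sing y)).apply_one (by omega)
    have hstr : ∀ z : X, z ≠ y → lstrip z G = 0 := by
      intro z hzy
      have h1 := congrArg (lstrip z) heq
      rw [lstrip_mul, hGY1, zero_smul, add_zero, lstrip_mul, hG1, zero_smul, add_zero,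
        map_add, map_smul, map_smul, lstrip_sing_mul_ne (Ne.symm hzy),
        lstrip_sing_mul_ne (Ne.symm hzy), smul_zero, smul_zero, add_zero] at h1
      exact mul_sing_eq_zero (mul_sing_eq_zero h1)
    set G' : MA k X := lstrip y G with hG'def
    have hGeq : G = sing k y * G' := by
      rw [recon_left hG1, Finset.sum_eq_single y]
      · intro z _ hzy
        rw [hstr z hzy, mul_zero]
      · intro h
        exact absurd (Finset.mem_univ y) h
    have heq' : (G' * sing k y) * sing k y
        = a • (sing k y * (sing k y * G')) + b • (sing k y * (G' * sing k y)) := by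
      have h1 := congrArg (lstrip y) heq
      rw [hGeq] at h1
      rw [mul_assoc (sing k y) G' (sing k y),
        mul_assoc (sing k y) (G' * sing k y) (sing k y), lstrip_sing_mul_same,
        map_add, map_smul, map_smul, lstrip_sing_mul_same, lstrip_sing_mul_same] at h1
      exact h1
    obtain ⟨c, hc⟩ := ih G' (hG.lstrip y) ⟨a, b, heq'⟩
    refine ⟨c, ?_⟩
    rw [hGeq, hc, mul_smul_comm, ← pow_succ']

/-- wrapper : classification of `q'` with `q' y G = λ G y q'` -/
lemma lemQ (y z0 : X) (hz0y : z0 ≠ y) (G : MA k X) (hG : Hom 1 G)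
    (hGz0 : G (FreeMonoid.of z0) ≠ 0) (lam : k) (d : ℕ) (q' : MA k X)
    (hq : Hom d q') (hq0 : q' ≠ 0)
    (heq : (q' * sing k y) * G = lam • (G * (sing k y * q'))) :
    ∃ (e : ℕ) (c : k), c ≠ 0 ∧ d = 2 * e + 1 ∧ q' = c • ((G * sing k y) ^ e * G) := by
  rcases Nat.eq_zero_or_pos d with hd | hd
  · -- d = 0 : contradiction
    exfalso
    subst hd
    have hq1 : q' 1 ≠ 0 := fun h => hq0 (by rw [hq.eq_smul_one, h, zero_smul])
    have h1 : q' 1 • (sing k y * G) = q' 1 • (lam • (G * sing k y)) := by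
      calc q' 1 • (sing k y * G) = (q' * sing k y) * G := by
            rw [hom0_mul' hq, smul_mul_assoc]
        _ = lam • (G * (sing k y * q')) := heq
        _ = lam • (G * (q' 1 • sing k y)) := by rw [hom0_mul hq]
        _ = q' 1 • (lam • (G * sing k y)) := by
            rw [mul_smul_comm, smul_comm lam (q' 1)]
    have h2 : sing k y * G = lam • (G * sing k y) :=
      smul_right_injective (MA k X) hq1 h1
    have h3 := congrArg (fun T : MA k X => T (FreeMonoid.of y * FreeMonoid.of z0)) h2
    simp only [MonoidAlgebra.coeff_smul_apply] at h3
    rw [hom1_mul_apply (hom_sing y), hom1_mul_apply hG,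
      sing_apply_same, one_mul, sing_apply_ne (Ne.symm hz0y), mul_zero, smul_zero] at h3
    exact hGz0 h3
  · obtain ⟨d', rfl⟩ : ∃ d', d = d' + 1 := ⟨d - 1, by omega⟩
    have hq1 : q' 1 = 0 := hq.apply_one (by omega)
    have hYq1 : (sing k y * q') 1 = 0 := ((hom_sing y).mul hq).apply_one (by omega)
    -- (¶)
    have hpz : ∀ z : X, G (FreeMonoid.of z) • (q' * sing k y)
        = lam • (G * (sing k y * rstrip (FreeMonoid.of z) q')) := by
      intro z
      have h1 := congrArg (rstrip (FreeMonoid.of z)) heq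
      rw [rstrip_mul, hom1_rstrip hG, mul_single_one, hG.apply_one one_ne_zero,
        zero_smul, add_zero, map_smul, rstrip_mul, hYq1, zero_smul, add_zero,
        rstrip_mul, hq1, zero_smul, add_zero] at h1
      exact h1
    have hlam : lam ≠ 0 := by
      intro h
      simp only [h, zero_smul, smul_eq_zero] at hpz
      rcases hpz z0 with h1 | h1
      · exact hGz0 h1
      · exact hq0 (mul_sing_eq_zero h1)
    set m : MA k X := rstrip (FreeMonoid.of z0) q' with hmdef
    have hqY : q' * sing k y = (lam / G (FreeMonoid.of z0)) • (G * (sing k y * m)) := by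
      have h1 := hpz z0
      rw [show lam • (G * (sing k y * m)) = G (FreeMonoid.of z0) •
        ((lam / G (FreeMonoid.of z0)) • (G * (sing k y * m))) from ?_] at h1
      · exact smul_right_injective (MA k X) hGz0 h1
      · rw [smul_smul]
        congr 1
        field_simp
    have hprop : ∀ z : X, rstrip (FreeMonoid.of z) q'
        = (G (FreeMonoid.of z) / G (FreeMonoid.of z0)) • m := by
      intro z
      have h1 := hpz z
      rw [hqY, smul_smul, ← mul_div_assoc, mul_comm (G (FreeMonoid.of z)) lam,
        mul_div_assoc, ← smul_smul] at h1
      have h2 := smul_right_injective (MA k X) hlam h1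
      have h3 : G * (sing k y * ((G (FreeMonoid.of z) / G (FreeMonoid.of z0)) • m))
          = G * (sing k y * rstrip (FreeMonoid.of z) q') := by
        rw [mul_smul_comm, mul_smul_comm]
        exact h2
      have h4 := hom1_mul_left_cancel hG hGz0 h3
      exact (sing_mul_injective y h4).symm
    have hq'eq : q' = (1 / G (FreeMonoid.of z0)) • (m * G) := by
      have h2 : ∀ z : X, rstrip (FreeMonoid.of z) q' * sing k z
          = (1 / G (FreeMonoid.of z0)) • (m * (G (FreeMonoid.of z) • sing k z)) := by
        intro z
        rw [hprop z, smul_mul_assoc, mul_smul_comm, smul_smul]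
        congr 1
        field_simp
      rw [recon_right hq1,
        show (∑ z : X, rstrip (FreeMonoid.of z) q' * sing k z)
          = ∑ z : X, (1 / G (FreeMonoid.of z0)) • (m * (G (FreeMonoid.of z) • sing k z))
          from Finset.sum_congr rfl (fun z _ => h2 z),
        ← Finset.smul_sum, ← Finset.mul_sum, ← hom1_recon hG]
    have hm0 : m ≠ 0 := by
      intro h
      exact hq0 (by rw [hq'eq, h, zero_mul, smul_zero])
    have hmhom : Hom d' m := hq.rstrip z0
    have hmeq : m * (G * sing k y) = lam • ((G * sing k y) * m) := by
      have h1 : (1 / G (FreeMonoid.of z0)) • (m * (G * sing k y))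
          = (1 / G (FreeMonoid.of z0)) • (lam • ((G * sing k y) * m)) := by
        rw [← mul_assoc, ← smul_mul_assoc, ← hq'eq, hqY, smul_smul,
          mul_assoc G (sing k y) m]
        congr 1
        field_simp
      have := smul_right_injective (MA k X) (one_div_ne_zero hGz0) h1
      exact this
    obtain ⟨e, c, hc0, hde, hmeq2⟩ := lemR y z0 hz0y G hG hGz0 lam d' m hmhom hm0 hmeq
    refine ⟨e, c / G (FreeMonoid.of z0), div_ne_zero hc0 hGz0, by omega, ?_⟩
    rw [hq'eq, hmeq2, smul_mul_assoc, smul_smul]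
    congr 1
    field_simp


lemma hom1_lstrip_mul {G : MA k X} (hG : Hom 1 G) (B : MA k X) (x : X) :
    lstrip x (G * B) = G (FreeMonoid.of x) • B := by
  rw [lstrip_mul, hom1_lstrip hG, single_one_mul, hG.apply_one one_ne_zero, zero_smul,
    add_zero]

/-- **main classification lemma** -/
lemma lemM [IsAlgClosed k] (y : X) (n : ℕ) (hn : 2 ≤ n) (F : MA k X) (hF : Hom n F)
    (hF0 : F ≠ 0)
    (hmem : (F * sing k y) * F ∈ Lspan k X *
      (Submodule.span k {sing k y * F, F * sing k y} * (Lspan k X) ^ (n - 1))) :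
    (∃ c : k, F = c • (sing k y) ^ n) ∨
    (∃ (t : ℕ) (g : MA k X), g ∈ Lspan k X ∧ n + 1 = 2 * t ∧
      F = (g * sing k y) ^ (t - 1) * g) := by
  obtain ⟨n', rfl⟩ : ∃ n', n = n' + 2 := ⟨n - 2, by omega⟩
  set Y : MA k X := sing k y with hYdef
  set W : Submodule k (MA k X) := Submodule.span k {Y * F, F * Y} with hWdef
  have hF1 : F 1 = 0 := hF.apply_one (by omega)
  -- the componentwise condition (C)
  have hC : ∀ (x : X) (v : FreeMonoid X), v.length = n' + 1 →
      ((lstrip x F) * Y) * rstrip v F ∈ W := by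
    intro x v hv
    have h1 : lstrip x ((F * Y) * F) ∈ W * (Lspan k X) ^ (n' + 1) := lstrip_mem hmem x
    have h2 : lstrip x ((F * Y) * F) = ((lstrip x F) * Y) * F := by
      rw [lstrip_mul, (hF.mul (hom_sing y)).apply_one (by omega), zero_smul, add_zero,
        lstrip_mul, hF1, zero_smul, add_zero]
    rw [h2] at h1
    have h3 := rstrip_pow_mem (n' + 1) W v _ h1 hv
    rwa [rstrip_partial (n' + 1) v (n' + 2) _ F hF hv (by omega)] at h3
  by_cases hB : ∀ z : X, z ≠ y → lstrip z F = 0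
  · -- Case B : F = c • y^n
    left
    set F1 : MA k X := lstrip y F with hF1def
    have hFeq : F = Y * F1 := by
      rw [recon_left hF1, Finset.sum_eq_single y]
      · intro z _ hzy
        rw [hB z hzy, mul_zero]
      · intro h
        exact absurd (Finset.mem_univ y) h
    have hF1hom : Hom (n' + 1) F1 := hF.lstrip y
    have hF1ne : F1 ≠ 0 := fun h => hF0 (by rw [hFeq, h, mul_zero])
    obtain ⟨v, hv⟩ : ∃ v, F1 v ≠ 0 := by
      rcases Finsupp.ne_iff.1 (mt MonoidAlgebra.coeff_eq_zero.1 hF1ne) with ⟨v, hv⟩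
      exact ⟨v, by simpa using hv⟩
    have hvlen : v.length = n' + 1 := hF1hom v hv
    have hc := hC y v hvlen
    have h4 : rstrip v F = F1 v • Y := by
      rw [hFeq, rstrip_hom_mul (n' + 1) v _ _ hF1hom hvlen]
    rw [h4, mul_smul_comm] at hc
    have hc2 : (F1 * Y) * Y ∈ W := by
      rwa [Submodule.smul_mem_iff _ hv, ← hF1def] at hc
    rw [hWdef] at hc2
    obtain ⟨a, b, hab⟩ := Submodule.mem_span_pair.1 hc2
    obtain ⟨c, hc⟩ := lemP y (n' + 1) F1 hF1hom ⟨a, b, by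
      rw [← hab, hFeq, mul_assoc Y F1 Y]⟩
    refine ⟨c, ?_⟩
    rw [hFeq, hc, mul_smul_comm, ← pow_succ']
  · -- Case A : exceptional form
    right
    push_neg at hB
    obtain ⟨z0, hz0y, hLz0⟩ := hB
    obtain ⟨v0, hv0⟩ : ∃ v0, (lstrip z0 F) v0 ≠ 0 := by
      rcases Finsupp.ne_iff.1 (mt MonoidAlgebra.coeff_eq_zero.1 hLz0) with ⟨v0, hv0⟩
      exact ⟨v0, by simpa using hv0⟩
    have hv0len : v0.length = n' + 1 := (hF.lstrip z0) v0 hv0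
    have hγ : F (FreeMonoid.of z0 * v0) ≠ 0 := hv0
    set R0 : MA k X := rstrip (FreeMonoid.of z0) F with hR0def
    set q' : MA k X := rstrip (FreeMonoid.of y) R0 with hq'def
    have hR0hom : Hom (n' + 1) R0 := hF.rstrip z0
    have hq'hom : Hom n' q' := hR0hom.rstrip y
    -- every left strip is proportional to Y * q'
    have hghom : Hom 1 (rstrip v0 F) := by
      intro w hw
      have := hF _ hw
      rw [FreeMonoid.length_mul, hv0len] at this
      omega
    have hkey : ∀ x : X, ∃ cx : k, lstrip x F = cx • (Y * q') := by
      intro x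
      obtain ⟨a, b, hab⟩ := Submodule.mem_span_pair.1 (hC x v0 hv0len)
      have e1 : rstrip (FreeMonoid.of z0) ((lstrip x F * Y) * rstrip v0 F)
          = F (FreeMonoid.of z0 * v0) • (lstrip x F * Y) := by
        rw [rstrip_mul, hom1_rstrip hghom, mul_single_one,
          hghom.apply_one one_ne_zero, zero_smul, add_zero]
        rfl
      have e2 : rstrip (FreeMonoid.of z0) (Y * F) = Y * R0 := by
        rw [rstrip_mul, hF1, zero_smul, add_zero, hR0def]
      have e3 : rstrip (FreeMonoid.of z0) (F * Y) = 0 := rstrip_mul_sing_ne hz0y.symm F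
      have h5 := congrArg (rstrip (FreeMonoid.of z0)) hab
      rw [map_add, map_smul, map_smul, e1, e2, e3, smul_zero, add_zero] at h5
      have e4 : rstrip (FreeMonoid.of y) (Y * R0) = Y * q' := by
        rw [rstrip_mul, hR0hom.apply_one (by omega), zero_smul, add_zero, hq'def]
      have e5 : rstrip (FreeMonoid.of y) (lstrip x F * Y) = lstrip x F :=
        rstrip_mul_sing_same y _
      have h6 := congrArg (rstrip (FreeMonoid.of y)) h5
      rw [map_smul, map_smul, e4, e5] at h6
      refine ⟨(F (FreeMonoid.of z0 * v0))⁻¹ * a, ?_⟩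
      rw [← smul_smul, h6, smul_smul, inv_mul_cancel₀ hγ, one_smul]
    choose cc hcc using hkey
    set G : MA k X := ∑ x : X, cc x • sing k x with hGdef
    have hGmem : G ∈ Lspan k X := by
      apply Submodule.sum_mem
      intro x _
      exact Submodule.smul_mem _ _ (Submodule.subset_span ⟨x, rfl⟩)
    have hGhom : Hom 1 G := Lspan_hom1 hGmem
    have hFGq : F = G * (Y * q') := by
      rw [recon_left hF1, hGdef, Finset.sum_mul]
      apply Finset.sum_congr rfl
      intro x _
      rw [hcc x, mul_smul_comm, smul_mul_assoc]
    have hq'0 : q' ≠ 0 := by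
      intro h
      exact hF0 (by rw [hFGq, h, mul_zero, mul_zero])
    have hγ2 : G (FreeMonoid.of z0) * (Y * q') v0 ≠ 0 := by
      intro h
      apply hγ
      rw [hFGq, hom1_mul_apply hGhom, h]
    have hGz0 : G (FreeMonoid.of z0) ≠ 0 := fun h => hγ2 (by rw [h, zero_mul])
    have hYq'v0 : (Y * q') v0 ≠ 0 := fun h => hγ2 (by rw [h, mul_zero])
    -- the structural equation
    have hYq'hom : Hom (n' + 1) (Y * q') := by
      have h1 : Hom (1 + n') (Y * q') := (hom_sing y).mul hq'hom
      rwa [Nat.add_comm] at h1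
    have hCz0 := hC z0 v0 hv0len
    have e6 : lstrip z0 F = cc z0 • (Y * q') := hcc z0
    have e7 : rstrip v0 F = (Y * q') v0 • G := by
      rw [hFGq, rstrip_hom_mul (n' + 1) v0 _ _ hYq'hom hv0len]
    have hcz0 : cc z0 ≠ 0 := by
      intro h
      apply hGz0
      have h8 : G (FreeMonoid.of z0) • (Y * q') = 0 := by
        rw [← hom1_lstrip_mul hGhom (Y * q') z0, ← hFGq, e6, h, zero_smul]
      rcases smul_eq_zero.1 h8 with h9 | h9
      · exact h9
      · exfalso
        exact hq'0 (sing_mul_eq_zero h9)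
    rw [e6, e7] at hCz0
    simp only [smul_mul_assoc, mul_smul_comm] at hCz0
    have hcore : ((Y * q') * Y) * G ∈ W := by
      rwa [Submodule.smul_mem_iff _ hYq'v0, Submodule.smul_mem_iff _ hcz0] at hCz0
    rw [hWdef] at hcore
    obtain ⟨lam, mu, hlm⟩ := Submodule.mem_span_pair.1 hcore
    -- mu = 0
    have e8 : lstrip z0 (Y * F) = 0 := lstrip_sing_mul_ne hz0y.symm F
    have e9 : lstrip z0 (F * Y) = G (FreeMonoid.of z0) • ((Y * q') * Y) := by
      rw [hFGq, mul_assoc, hom1_lstrip_mul hGhom, mul_assoc]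
    have e10 : lstrip z0 (((Y * q') * Y) * G) = 0 := by
      rw [mul_assoc (Y * q') Y G, mul_assoc Y q' (Y * G), lstrip_sing_mul_ne hz0y.symm]
    have h7 := congrArg (lstrip z0) hlm
    rw [map_add, map_smul, map_smul, e8, e9, e10, smul_zero, zero_add, smul_smul] at h7
    have hYq'Y : (Y * q') * Y ≠ 0 := by
      intro h
      apply hq'0
      exact sing_mul_eq_zero (mul_sing_eq_zero h)
    have hmu : mu = 0 := by
      have h8 := smul_eq_zero.1 h7
      rcases h8 with h8 | h8
      · rcases mul_eq_zero.1 h8 with h9 | h9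
        · exact h9
        · exact absurd h9 hGz0
      · exact absurd h8 hYq'Y
    rw [hmu, zero_smul, add_zero] at hlm
    -- strip the leading y
    have e11 : lstrip y (Y * F) = F := lstrip_sing_mul_same y F
    have e12 : lstrip y (((Y * q') * Y) * G) = (q' * Y) * G := by
      rw [mul_assoc (Y * q') Y G, mul_assoc Y q' (Y * G), lstrip_sing_mul_same,
        ← mul_assoc]
    have h9 := congrArg (lstrip y) hlm
    rw [map_smul, e11, e12] at h9
    have hstar : (q' * Y) * G = lam • (G * (Y * q')) := by
      rw [← h9, hFGq]
    obtain ⟨e, c, hc0, hne, hq'eq⟩ :=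
      lemQ y z0 hz0y G hGhom hGz0 lam n' q' hq'hom hq'0 hstar
    -- assemble
    obtain ⟨rho, hrho⟩ := IsAlgClosed.exists_pow_nat_eq c (n := e + 2) (by omega)
    refine ⟨e + 2, rho • G, Submodule.smul_mem _ _ hGmem, by omega, ?_⟩
    have hFfin : F = c • ((G * Y) ^ (e + 1) * G) := by
      rw [hFGq, hq'eq, mul_smul_comm, mul_smul_comm, ← mul_assoc G Y, ← mul_assoc,
        ← pow_succ']
    rw [hFfin, smul_mul_assoc, smul_pow, smul_mul_assoc, mul_smul_comm, smul_smul,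
      ← pow_succ]
    congr 1
    exact hrho.symm

end Stmt12Aux

open Stmt12Aux

/-- The span `L` of the generators of the free algebra `k⟨X⟩`
(the degree-one homogeneous component). -/
def faGens (k X : Type) [Field k] : Submodule k (FreeAlgebra k X) :=
  Submodule.span k (Set.range (FreeAlgebra.ι k : X → FreeAlgebra k X))

/-- Let `k` be an algebraically closed field, `s > 2`, `m ≥ 0`,
`F = k⟨x₁,…,x_m,y⟩` (with `y` the generator indexed by `Sum.inr ()`) and `L` the span of
the generators.  Let `f ∈ L^{s−1}` be such that `y·f` and `f·y` are linearly independent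
and NOT of the exceptional form (`s = 2t` and `f = (g·y)^{t−1}·g` with `g ∈ L`).  With
`W = span{y·f, f·y}` one has
`W·L^{s−1} ⊓ L·(Σ_{i=0}^{s−2} L^i·W·L^{s−2−i}) ≠ (W·L ⊓ L·W)·L^{s−2}`
(i.e. `F/(W)` fails Berger's extra condition). -/
theorem stmt12 (k : Type) [Field k] [IsAlgClosed k] (s m : ℕ) (hs : 2 < s)
    (f : FreeAlgebra k (Fin m ⊕ Unit))
    (hf : f ∈ faGens k (Fin m ⊕ Unit) ^ (s - 1))
    (hli : LinearIndependent k
      ![FreeAlgebra.ι k (Sum.inr () : Fin m ⊕ Unit) * f,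
        f * FreeAlgebra.ι k (Sum.inr () : Fin m ⊕ Unit)])
    (hnot : ¬ ∃ (t : ℕ) (g : FreeAlgebra k (Fin m ⊕ Unit)),
      g ∈ faGens k (Fin m ⊕ Unit) ∧ s = 2 * t ∧
        f = (g * FreeAlgebra.ι k (Sum.inr () : Fin m ⊕ Unit)) ^ (t - 1) * g) :
    Submodule.span k
        {FreeAlgebra.ι k (Sum.inr () : Fin m ⊕ Unit) * f,
         f * FreeAlgebra.ι k (Sum.inr () : Fin m ⊕ Unit)} *
          faGens k (Fin m ⊕ Unit) ^ (s - 1) ⊓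
        faGens k (Fin m ⊕ Unit) *
          (⨆ i : Fin (s - 1), faGens k (Fin m ⊕ Unit) ^ (i : ℕ) *
            Submodule.span k
              {FreeAlgebra.ι k (Sum.inr () : Fin m ⊕ Unit) * f,
               f * FreeAlgebra.ι k (Sum.inr () : Fin m ⊕ Unit)} *
            faGens k (Fin m ⊕ Unit) ^ (s - 2 - (i : ℕ))) ≠
      (Submodule.span k
          {FreeAlgebra.ι k (Sum.inr () : Fin m ⊕ Unit) * f,
           f * FreeAlgebra.ι k (Sum.inr () : Fin m ⊕ Unit)} *
            faGens k (Fin m ⊕ Unit) ⊓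
          faGens k (Fin m ⊕ Unit) *
            Submodule.span k
              {FreeAlgebra.ι k (Sum.inr () : Fin m ⊕ Unit) * f,
               f * FreeAlgebra.ι k (Sum.inr () : Fin m ⊕ Unit)}) *
        faGens k (Fin m ⊕ Unit) ^ (s - 2) := by
  intro heqMain
  obtain ⟨s', rfl⟩ : ∃ s', s = s' + 3 := ⟨s - 3, by omega⟩
  set yy : Fin m ⊕ Unit := Sum.inr () with hyydef
  set L : Submodule k (FreeAlgebra k (Fin m ⊕ Unit)) := faGens k (Fin m ⊕ Unit) with hLdef
  set ιy : FreeAlgebra k (Fin m ⊕ Unit) := FreeAlgebra.ι k yy with hιydef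
  set W : Submodule k (FreeAlgebra k (Fin m ⊕ Unit)) :=
    Submodule.span k {ιy * f, f * ιy} with hWdef
  -- degree bookkeeping : s - 1 = s' + 2, s - 2 = s' + 1
  have hsub1 : s' + 3 - 1 = s' + 2 := by omega
  have hsub2 : s' + 3 - 2 = s' + 1 := by omega
  simp only [hsub1, hsub2] at heqMain hf
  have hfd : f ∈ L ^ (s' + 2) := hf
  -- the witness element E = f * ιy * f is in the left-hand side
  have hE1 : f * ιy * f ∈ W * L ^ (s' + 2) := by
    refine Submodule.mul_mem_mul ?_ hfd
    exact Submodule.subset_span (Set.mem_insert_iff.2 (Or.inr rfl))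
  have hE2 : f * ιy * f ∈ L * (⨆ i : Fin (s' + 2),
      L ^ (i : ℕ) * W * L ^ (s' + 1 - (i : ℕ))) := by
    have hfa : f ∈ L * L ^ (s' + 1) := by
      rw [← pow_succ']
      exact hfd
    have h1 : f * (ιy * f) ∈ L * L ^ (s' + 1) * W :=
      Submodule.mul_mem_mul hfa (Submodule.subset_span (Set.mem_insert_iff.2 (Or.inl rfl)))
    rw [mul_assoc] at h1
    have h2 : L ^ (s' + 1) * W ≤ ⨆ i : Fin (s' + 2),
        L ^ (i : ℕ) * W * L ^ (s' + 1 - (i : ℕ)) := by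
      have h3 : L ^ (s' + 1) * W
          = L ^ ((⟨s' + 1, by omega⟩ : Fin (s' + 2)) : ℕ) * W
            * L ^ (s' + 1 - ((⟨s' + 1, by omega⟩ : Fin (s' + 2)) : ℕ)) := by
        simp [Nat.sub_self]
      rw [h3]
      exact le_iSup (fun i : Fin (s' + 2) => L ^ (i : ℕ) * W * L ^ (s' + 1 - (i : ℕ)))
        (⟨s' + 1, by omega⟩ : Fin (s' + 2))
    have h4 := mul_le_mul' (le_refl L) h2
    have h5 := h4 h1
    rwa [← mul_assoc] at h5
  -- hence E is in the right-hand side, which sits inside L * (W * L^(s'+1))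
  have hE3 : f * ιy * f ∈ L * (W * L ^ (s' + 1)) := by
    have hmemRHS : f * ιy * f ∈ (W * L ⊓ L * W) * L ^ (s' + 1) := by
      rw [← heqMain]
      exact ⟨hE1, hE2⟩
    have hle : (W * L ⊓ L * W) * L ^ (s' + 1) ≤ L * (W * L ^ (s' + 1)) := by
      calc (W * L ⊓ L * W) * L ^ (s' + 1) ≤ (L * W) * L ^ (s' + 1) :=
            mul_le_mul' inf_le_right (le_refl _)
        _ = L * (W * L ^ (s' + 1)) := mul_assoc _ _ _
    exact hle hmemRHS
  -- transfer to the monoid algebra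
  set Φ : FreeAlgebra k (Fin m ⊕ Unit) →ₐ[k] MA k (Fin m ⊕ Unit) :=
    (FreeAlgebra.equivMonoidAlgebraFreeMonoid (R := k) (X := Fin m ⊕ Unit)).toAlgHom with hΦdef
  have hΦι : ∀ x : Fin m ⊕ Unit, Φ (FreeAlgebra.ι k x) = sing k x := by
    intro x
    simp [hΦdef, FreeAlgebra.equivMonoidAlgebraFreeMonoid, sing]
  have hΦinj : Function.Injective Φ :=
    (FreeAlgebra.equivMonoidAlgebraFreeMonoid (R := k) (X := Fin m ⊕ Unit)).injective
  have hmap_gens : Submodule.map Φ.toLinearMap L = Lspan k (Fin m ⊕ Unit) := by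
    rw [hLdef, faGens, Lspan, Submodule.map_span, ← Set.range_comp]
    have hfun : (⇑Φ.toLinearMap ∘ (FreeAlgebra.ι k : (Fin m ⊕ Unit) → FreeAlgebra k (Fin m ⊕ Unit)))
        = (sing k : (Fin m ⊕ Unit) → MA k (Fin m ⊕ Unit)) := funext hΦι
    rw [hfun]
  set Fm : MA k (Fin m ⊕ Unit) := Φ f with hFmdef
  have hmap_W : Submodule.map Φ.toLinearMap W
      = Submodule.span k {sing k yy * Fm, Fm * sing k yy} := by
    rw [hWdef, Submodule.map_span, Set.image_insert_eq, Set.image_singleton]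
    have e1 : Φ.toLinearMap (ιy * f) = sing k yy * Fm := by
      show Φ (ιy * f) = _
      rw [map_mul, hιydef, hΦι]
    have e2 : Φ.toLinearMap (f * ιy) = Fm * sing k yy := by
      show Φ (f * ιy) = _
      rw [map_mul, hιydef, hΦι]
    rw [e1, e2]
  -- homogeneity of Fm
  have hFmhom : Hom (s' + 2) Fm := by
    apply Lspan_pow_hom
    rw [← hmap_gens, ← Submodule.map_pow]
    exact Submodule.mem_map_of_mem hfd
  -- the membership hypothesis for lemM
  have hmemM : (Fm * sing k yy) * Fm ∈ Lspan k (Fin m ⊕ Unit) *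
      (Submodule.span k {sing k yy * Fm, Fm * sing k yy}
        * (Lspan k (Fin m ⊕ Unit)) ^ (s' + 2 - 1)) := by
    have h1 := Submodule.mem_map_of_mem (f := Φ.toLinearMap) hE3
    rw [Submodule.map_mul, Submodule.map_mul, Submodule.map_pow, hmap_gens, hmap_W] at h1
    have e3 : Φ.toLinearMap (f * ιy * f) = (Fm * sing k yy) * Fm := by
      show Φ (f * ιy * f) = _
      rw [map_mul, map_mul, hιydef, hΦι]
    rwa [e3] at h1
  -- nonzero
  have hf0 : f ≠ 0 := by
    intro h
    have := hli.ne_zero 0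
    rw [Matrix.cons_val_zero, h, mul_zero] at this
    exact this rfl
  have hFm0 : Fm ≠ 0 := by
    intro h
    refine hf0 (hΦinj ?_)
    rw [map_zero, ← hFmdef]
    exact h
  -- apply the classification
  rcases lemM yy (s' + 2) (by omega) Fm hFmhom hFm0 hmemM with ⟨c, hc⟩ | ⟨t, g', hg'mem, hts, hgeq⟩
  · -- Fm = c • Y^n forces yf = fy, contradicting linear independence
    have hYF : sing k yy * Fm = Fm * sing k yy := by
      rw [hc, mul_smul_comm, smul_mul_assoc, ← pow_succ', ← pow_succ]
    have hyffy : ιy * f = f * ιy := by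
      apply hΦinj
      rw [map_mul, map_mul, hιydef, hΦι]
      exact hYF
    have h01 : (![ιy * f, f * ιy] : Fin 2 → FreeAlgebra k (Fin m ⊕ Unit)) 0
        = (![ιy * f, f * ιy] : Fin 2 → FreeAlgebra k (Fin m ⊕ Unit)) 1 := by
      rw [Matrix.cons_val_zero, Matrix.cons_val_one, Matrix.cons_val_zero]
      exact hyffy
    have := hli.injective h01
    simp at this
  · -- exceptional form, contradicting hnot
    rw [← hmap_gens] at hg'mem
    obtain ⟨g0, hg0mem, hg0eq⟩ := hg'mem
    apply hnot
    refine ⟨t, g0, hg0mem, by omega, ?_⟩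
    apply hΦinj
    rw [map_mul, map_pow, map_mul, hιydef, hΦι]
    have hg0Φ : Φ g0 = g' := hg0eq
    rw [hg0Φ, ← hgeq]

end
end

section
/- Let k be an algebraically closed field, s > 2, m ≥ 0, F = k⟨x₁,…,x_m,y₁,y₂⟩ the free associative k-algebra, and L the k-span of its generators. Let f ∈ L^{s−1} be homogeneous of degree s−1 and let β, γ ∈ k be nonzero. If β·(y₁·f) + γ·(f·y₂) = v₁·v₂·⋯·v_s for some v₁,…,v_s ∈ L with v₁·v₂·⋯·v_s ≠ 0, then f = α·y₁^p·y₂^{s−1−p} for some α ∈ k and some 0 ≤ p ≤ s−1. -/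
noncomputable section

open FreeMonoid

variable {k X : Type} [Field k]

lemma single_one_mul_md (a : FreeMonoid X) (g : MonoidAlgebra k (FreeMonoid X)) :
    (MonoidAlgebra.single a (1:k) * g).coeff = Finsupp.mapDomain (a * ·) g.coeff := by
  induction g using MonoidAlgebra.induction with
  | zero => simp [Finsupp.mapDomain_zero]
  | single_add b r f hb hr ih =>
    rw [mul_add, MonoidAlgebra.coeff_add, MonoidAlgebra.coeff_add, Finsupp.mapDomain_add, ih,
      MonoidAlgebra.single_mul_single, one_mul, MonoidAlgebra.coeff_single,
      MonoidAlgebra.coeff_single, Finsupp.mapDomain_single]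

lemma mul_single_one_md (a : FreeMonoid X) (g : MonoidAlgebra k (FreeMonoid X)) :
    (g * MonoidAlgebra.single a (1:k)).coeff = Finsupp.mapDomain (· * a) g.coeff := by
  induction g using MonoidAlgebra.induction with
  | zero => simp [Finsupp.mapDomain_zero]
  | single_add b r f hb hr ih =>
    rw [add_mul, MonoidAlgebra.coeff_add, MonoidAlgebra.coeff_add, Finsupp.mapDomain_add, ih,
      MonoidAlgebra.single_mul_single, mul_one, MonoidAlgebra.coeff_single,
      MonoidAlgebra.coeff_single, Finsupp.mapDomain_single]

lemma single_md (a : FreeMonoid X) (r : k) :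
    (MonoidAlgebra.single a r : MonoidAlgebra k (FreeMonoid X)) =
      r • MonoidAlgebra.single a (1:k) := by
  rw [MonoidAlgebra.smul_single', mul_one]

lemma toList_mul_of (u : FreeMonoid X) (c : X) :
    toList (u * of c) = toList u ++ [c] := rfl

lemma single_left_mul_apply (d : X) (r : k) (Q : MonoidAlgebra k (FreeMonoid X)) (c : X)
    (u : FreeMonoid X) :
    (MonoidAlgebra.single (of d) r * Q).coeff (of c * u) =
      (MonoidAlgebra.single (of d) r : MonoidAlgebra k (FreeMonoid X)).coeff (of c) * Q.coeff u := by
  by_cases h : d = c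
  · subst h
    rw [MonoidAlgebra.coeff_single_mul_eq_mul_coeff _ fun a _ => mul_left_cancel_iff,
      MonoidAlgebra.coeff_single, Finsupp.single_eq_same]
  · have hnr : (of c * u) ∉ Set.range (fun x => of d * x) := by
      rintro ⟨x, hx⟩
      have h2 := congrArg toList hx
      rw [toList_of_mul, toList_of_mul] at h2
      injection h2 with h3 _
      exact h h3
    rw [MonoidAlgebra.coeff_single, Finsupp.single_eq_of_ne' (fun he => h (of_injective he)),
      zero_mul, single_md, smul_mul_assoc, MonoidAlgebra.coeff_smul_apply, single_one_mul_md,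
      Finsupp.mapDomain_notin_range _ _ hnr, smul_zero]

lemma mul_apply_cons (v Q : MonoidAlgebra k (FreeMonoid X))
    (hv : ∀ w ∈ v.coeff.support, w.length = 1) (c : X) (u : FreeMonoid X) :
    (v * Q).coeff (of c * u) = v.coeff (of c) * Q.coeff u := by
  induction v using MonoidAlgebra.induction with
  | zero => simp
  | single_add b r f hb hr ih =>
    obtain ⟨d, rfl⟩ : ∃ d, b = of d := by
      rw [← length_eq_one]
      exact hv b (by simp [Finsupp.mem_support_iff, Finsupp.add_apply, MonoidAlgebra.coeff_add,
        MonoidAlgebra.coeff_single, Finsupp.single_eq_same, Finsupp.notMem_support_iff.1 hb, hr])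
    have hf : ∀ w ∈ f.coeff.support, w.length = 1 := by
      intro w hw
      refine hv w ?_
      have hwb : w ≠ of d := fun he => hb (he ▸ hw)
      simp [Finsupp.mem_support_iff, Finsupp.add_apply, MonoidAlgebra.coeff_add,
        MonoidAlgebra.coeff_single, Finsupp.single_eq_of_ne' (Ne.symm hwb),
        Finsupp.mem_support_iff.1 hw]
    rw [add_mul, MonoidAlgebra.coeff_add, MonoidAlgebra.coeff_add, Finsupp.add_apply,
      Finsupp.add_apply, single_left_mul_apply, ih hf, add_mul]

lemma one_apply_one : (1 : MonoidAlgebra k (FreeMonoid X)).coeff 1 = 1 := by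
  rw [MonoidAlgebra.one_def, MonoidAlgebra.coeff_single, Finsupp.single_eq_same]

lemma key_coeff : ∀ (l : List (MonoidAlgebra k (FreeMonoid X))),
    (∀ v ∈ l, ∀ w ∈ v.coeff.support, w.length = 1) →
    ∀ (cs : List X), cs.length = l.length →
    (∀ p ∈ l.zip cs, FreeMonoid.of p.2 ∈ p.1.coeff.support) →
    l.prod.coeff (FreeMonoid.ofList cs) ≠ 0
  | [], _, cs, hlen, _ => by
    have : cs = [] := List.length_eq_zero_iff.1 hlen
    subst this
    rw [List.prod_nil]
    show (1 : MonoidAlgebra k (FreeMonoid X)).coeff 1 ≠ 0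
    rw [one_apply_one]; exact one_ne_zero
  | v :: t, hl, cs, hlen, hmem => by
    match cs, hlen with
    | c :: cs', hlen =>
      rw [List.prod_cons]
      have : FreeMonoid.ofList (c :: cs') = of c * FreeMonoid.ofList cs' := rfl
      rw [this, mul_apply_cons _ _ (hl v (List.mem_cons_self))]
      refine mul_ne_zero ?_ ?_
      · exact Finsupp.mem_support_iff.1 (hmem (v, c) (by simp [List.zip_cons_cons]))
      · exact key_coeff t (fun u hu => hl u (List.mem_cons_of_mem _ hu)) cs'
          (by simpa using hlen) (fun p hp => hmem p (by simp [List.zip_cons_cons, hp]))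

lemma exists_picks : ∀ (l : List (MonoidAlgebra k (FreeMonoid X))),
    (∀ v ∈ l, ∀ w ∈ v.coeff.support, w.length = 1) → (∀ v ∈ l, v ≠ 0) →
    ∃ cs : List X, cs.length = l.length ∧
      ∀ p ∈ l.zip cs, FreeMonoid.of p.2 ∈ p.1.coeff.support
  | [], _, _ => ⟨[], rfl, by simp⟩
  | v :: t, hl, hnz => by
    obtain ⟨cs', hlen', hmem'⟩ := exists_picks t (fun u hu => hl u (List.mem_cons_of_mem _ hu))
      (fun u hu => hnz u (List.mem_cons_of_mem _ hu))
    obtain ⟨w, hw⟩ := Finsupp.support_nonempty_iff.2 (MonoidAlgebra.coeff_eq_zero.not.2 (hnz v (List.mem_cons_self)))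
    obtain ⟨c, rfl⟩ := length_eq_one.1 (hl v (List.mem_cons_self) w hw)
    exact ⟨c :: cs', by simp [hlen'], by
      intro p hp
      rw [List.zip_cons_cons] at hp
      rcases List.mem_cons.1 hp with h | h
      · subst h; exact hw
      · exact hmem' p h⟩

/-- words in support of `g * single a 1` are of the form `u * a` with `u ∈ g.support` -/
lemma supp_mul_single {g : MonoidAlgebra k (FreeMonoid X)} {a w : FreeMonoid X}
    (hw : w ∈ (g * MonoidAlgebra.single a (1:k)).coeff.support) : ∃ u ∈ g.coeff.support, w = u * a := by
  classical
  rw [mul_single_one_md] at hw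
  obtain ⟨u, hu, rfl⟩ := Finset.mem_image.1 (Finsupp.mapDomain_support hw)
  exact ⟨u, hu, rfl⟩

lemma supp_single_mul {g : MonoidAlgebra k (FreeMonoid X)} {a w : FreeMonoid X}
    (hw : w ∈ (MonoidAlgebra.single a (1:k) * g).coeff.support) : ∃ u ∈ g.coeff.support, w = a * u := by
  classical
  rw [single_one_mul_md] at hw
  obtain ⟨u, hu, rfl⟩ := Finset.mem_image.1 (Finsupp.mapDomain_support hw)
  exact ⟨u, hu, rfl⟩

lemma eq_single_mul {g : MonoidAlgebra k (FreeMonoid X)} {y : X}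
    (h : ∀ w ∈ g.coeff.support, ∃ u, w = of y * u) :
    ∃ g' : MonoidAlgebra k (FreeMonoid X), g = MonoidAlgebra.single (of y) 1 * g' := by
  classical
  refine ⟨MonoidAlgebra.comapDomain (of y * ·) (mul_right_injective (of y)) g, ?_⟩
  apply MonoidAlgebra.coeff_injective
  rw [single_one_mul_md]
  ext w
  by_cases hw : ∃ u, w = of y * u
  · obtain ⟨u, rfl⟩ := hw
    rw [Finsupp.mapDomain_apply (mul_right_injective (of y)), MonoidAlgebra.coeff_comapDomain, Finsupp.comapDomain_apply]
  · rw [Finsupp.mapDomain_notin_range _ _ (fun ⟨u, hu⟩ => hw ⟨u, hu.symm⟩)]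
    by_contra hne
    exact hw (h w (Finsupp.mem_support_iff.2 hne))

lemma eq_mul_single {g : MonoidAlgebra k (FreeMonoid X)} {z : X}
    (h : ∀ w ∈ g.coeff.support, ∃ u, w = u * of z) :
    ∃ g' : MonoidAlgebra k (FreeMonoid X), g = g' * MonoidAlgebra.single (of z) 1 := by
  classical
  refine ⟨MonoidAlgebra.comapDomain (· * of z) (mul_left_injective (of z)) g, ?_⟩
  apply MonoidAlgebra.coeff_injective
  rw [mul_single_one_md]
  ext w
  by_cases hw : ∃ u, w = u * of z
  · obtain ⟨u, rfl⟩ := hw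
    rw [Finsupp.mapDomain_apply (mul_left_injective (of z)), MonoidAlgebra.coeff_comapDomain, Finsupp.comapDomain_apply]
  · rw [Finsupp.mapDomain_notin_range _ _ (fun ⟨u, hu⟩ => hw ⟨u, hu.symm⟩)]
    by_contra hne
    exact hw (h w (Finsupp.mem_support_iff.2 hne))

lemma starts_of_mul_end {w : FreeMonoid X} (hw : w.length ≠ 0) {y z : X} {u : FreeMonoid X}
    (h : w * of z = of y * u) : ∃ u', w = of y * u' := by
  have h2 := congrArg toList h
  rw [toList_mul_of, toList_of_mul] at h2
  match w, hw, h2 with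
  | w, hw, h2 =>
    rcases hl : toList w with _ | ⟨c, cw⟩
    · exact absurd (by simpa [FreeMonoid.length] using congrArg List.length hl) hw
    · rw [hl] at h2
      simp only [List.cons_append] at h2
      injection h2 with h3 _
      exact ⟨FreeMonoid.ofList cw, by rw [← ofList_toList w, hl, h3]; rfl⟩

lemma ends_of_mul_start {w : FreeMonoid X} (hw : w.length ≠ 0) {y z : X} {u : FreeMonoid X}
    (h : of y * w = u * of z) : ∃ u', w = u' * of z := by
  have h2 := congrArg toList h
  rw [toList_of_mul, toList_mul_of] at h2
  rcases hl : toList w with _ | ⟨c, cw⟩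
  · exact absurd (show w.length = 0 from congrArg List.length hl) hw
  · rw [hl] at h2
    have h3 := congrArg List.getLast? h2
    rw [List.getLast?_concat, List.getLast?_cons_cons] at h3
    have h4 : (c :: cw).dropLast ++ [z] = c :: cw :=
      List.dropLast_append_getLast? z (Option.mem_def.mpr h3)
    refine ⟨FreeMonoid.ofList (c :: cw).dropLast, ?_⟩
    conv_lhs => rw [← ofList_toList w, hl, ← h4]
    rfl

lemma left_cancel_single (a : FreeMonoid X) {g h : MonoidAlgebra k (FreeMonoid X)}
    (he : MonoidAlgebra.single a (1:k) * g = MonoidAlgebra.single a 1 * h) : g = h := by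
  have he := congrArg MonoidAlgebra.coeff he
  rw [single_one_mul_md, single_one_mul_md] at he
  exact MonoidAlgebra.coeff_injective (Finsupp.mapDomain_injective (mul_right_injective a) he)

lemma right_cancel_single (a : FreeMonoid X) {g h : MonoidAlgebra k (FreeMonoid X)}
    (he : g * MonoidAlgebra.single a (1:k) = h * MonoidAlgebra.single a 1) : g = h := by
  have he := congrArg MonoidAlgebra.coeff he
  rw [mul_single_one_md, mul_single_one_md] at he
  exact MonoidAlgebra.coeff_injective (Finsupp.mapDomain_injective (mul_left_injective a) he)

lemma key_lemma (y z : X) (β γ : k) (hβ : β ≠ 0) (hγ : γ ≠ 0) (n : ℕ) :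
    ∀ (g : MonoidAlgebra k (FreeMonoid X)),
      (∀ w ∈ g.coeff.support, w.length = n) →
      ∀ l : List (MonoidAlgebra k (FreeMonoid X)), l.length = n + 1 →
      (∀ v ∈ l, ∀ w ∈ v.coeff.support, w.length = 1) →
      β • (MonoidAlgebra.single (of y) 1 * g) +
        γ • (g * MonoidAlgebra.single (of z) 1) = l.prod →
      l.prod ≠ 0 →
      ∃ (α : k) (p : ℕ), p ≤ n ∧ g = α • (MonoidAlgebra.single (of y) (1:k) ^ p *
        MonoidAlgebra.single (of z) (1:k) ^ (n - p)) := by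
  induction n with
  | zero =>
    intro g hg l _ _ _ _
    have hsub : g.coeff.support ⊆ {1} := by
      intro w hw
      have : w.length = 0 := hg w hw
      rw [Finset.mem_singleton]
      exact toList.injective (List.length_eq_zero_iff.1 this)
    refine ⟨g.coeff 1, 0, le_refl 0, ?_⟩
    apply MonoidAlgebra.coeff_injective
    conv_lhs => rw [Finsupp.support_subset_singleton.1 hsub]
    simp only [pow_zero, Nat.zero_sub, mul_one]
    rw [MonoidAlgebra.one_def, MonoidAlgebra.smul_single', mul_one, MonoidAlgebra.coeff_single]
  | succ n IH =>
    intro g hg l hlen hl heq hne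
    classical
    cases l with
    | nil => simp at hlen
    | cons v₀ l' =>
    cases l' with
    | nil => simp at hlen
    | cons h' t' =>
    set l' : List (MonoidAlgebra k (FreeMonoid X)) := h' :: t' with hl'def
    have hl'len : t'.length = n := by
      have h2 := hlen
      rw [hl'def] at h2
      simpa using h2
    have hnz : ∀ u ∈ v₀ :: l', u ≠ 0 := by
      intro u hu h0
      exact hne (List.prod_eq_zero (h0 ▸ hu))
    by_cases hA : ∀ w ∈ v₀.coeff.support, w = of y
    · -- left peel
      have hv0 : v₀ = MonoidAlgebra.single (of y) (v₀.coeff (of y)) :=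
        MonoidAlgebra.coeff_injective
          (Finsupp.support_subset_singleton.1 (fun w hw => Finset.mem_singleton.2 (hA w hw)))
      set a := v₀.coeff (of y) with hadef
      have ha : a ≠ 0 := by
        intro h0
        exact hnz v₀ (List.mem_cons_self) (by rw [hv0, h0]; simp)
      have hQ : l'.prod ≠ 0 := by
        intro h0
        exact hne (by rw [List.prod_cons, h0, mul_zero])
      have hstart : ∀ w ∈ g.coeff.support, ∃ u, w = of y * u := by
        intro w hw
        have hwz : w * of z ∈ (g * MonoidAlgebra.single (of z) (1:k)).coeff.support := by
          rw [mul_single_one_md]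
          exact Finsupp.mem_support_iff.2 (by
            rw [Finsupp.mapDomain_apply (mul_left_injective _)]
            exact Finsupp.mem_support_iff.1 hw)
        have heq2 : γ • (g * MonoidAlgebra.single (of z) (1:k)) =
            (v₀ :: l').prod - β • (MonoidAlgebra.single (of y) 1 * g) := by
          rw [← heq]; abel
        have hmem : w * of z ∈ ((v₀ :: l').prod -
            β • (MonoidAlgebra.single (of y) (1:k) * g)).coeff.support := by
          rw [← heq2, MonoidAlgebra.coeff_smul, Finsupp.support_smul_eq hγ]
          exact hwz
        rw [MonoidAlgebra.coeff_sub] at hmem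
        have := Finsupp.support_sub hmem
        rcases Finset.mem_union.1 this with hm | hm
        · -- in support of the product
          have hm2 : w * of z ∈ (MonoidAlgebra.single (of y) (1:k) * (a • l'.prod)).coeff.support := by
            have : (v₀ :: l').prod =
                MonoidAlgebra.single (of y) (1:k) * (a • l'.prod) := by
              rw [List.prod_cons, hv0, single_md, smul_mul_assoc, mul_smul_comm]
            rwa [this] at hm
          obtain ⟨u, _, hmu⟩ := supp_single_mul hm2
          exact starts_of_mul_end (by rw [hg w hw]; omega) hmu
        · have hm2 : w * of z ∈ (MonoidAlgebra.single (of y) (1:k) * g).coeff.support := by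
            rwa [MonoidAlgebra.coeff_smul, Finsupp.support_smul_eq hβ] at hm
          obtain ⟨u, _, hmu⟩ := supp_single_mul hm2
          exact starts_of_mul_end (by rw [hg w hw]; omega) hmu
      obtain ⟨g', hg'⟩ := eq_single_mul hstart
      have hco : ∀ u, g.coeff (of y * u) = g'.coeff u := by
        intro u
        rw [hg', single_one_mul_md, Finsupp.mapDomain_apply (mul_right_injective _)]
      have hg'hom : ∀ u ∈ g'.coeff.support, u.length = n := by
        intro u hu
        have : of y * u ∈ g.coeff.support :=
          Finsupp.mem_support_iff.2 (by rw [hco]; exact Finsupp.mem_support_iff.1 hu)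
        have h2 := hg _ this
        rw [length_mul, length_of] at h2
        omega
      have e1 : β • (MonoidAlgebra.single (of y) (1:k) * g) +
          γ • (g * MonoidAlgebra.single (of z) 1) =
          MonoidAlgebra.single (of y) (1:k) *
            (β • (MonoidAlgebra.single (of y) (1:k) * g') +
             γ • (g' * MonoidAlgebra.single (of z) 1)) := by
        rw [hg']
        simp only [mul_add, mul_smul_comm, mul_assoc]
      have e2 : (v₀ :: l').prod =
          MonoidAlgebra.single (of y) (1:k) * (((a • h') :: t').prod) := by
        rw [hl'def, hv0]
        simp only [List.prod_cons]
        rw [single_md, smul_mul_assoc, smul_mul_assoc, mul_smul_comm]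
      have heq3 : β • (MonoidAlgebra.single (of y) (1:k) * g') +
          γ • (g' * MonoidAlgebra.single (of z) 1) = ((a • h') :: t').prod :=
        left_cancel_single _ (by rw [← e1, ← e2, heq])
      have hprodne : ((a • h') :: t').prod ≠ 0 := by
        have : ((a • h') :: t').prod = a • l'.prod := by
          rw [List.prod_cons, smul_mul_assoc, hl'def, List.prod_cons]
        rw [this]
        exact smul_ne_zero ha hQ
      obtain ⟨α, p, hp, hgp⟩ := IH g' hg'hom ((a • h') :: t')
        (by simp [hl'len])
        (by
          intro u hu w hw
          rcases List.mem_cons.1 hu with h | h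
          · rw [h, MonoidAlgebra.coeff_smul] at hw
            exact hl h' (by simp [hl'def]) w (Finsupp.support_smul hw)
          · exact hl u (by simp [hl'def, h]) w hw)
        heq3 hprodne
      refine ⟨α, p + 1, by omega, ?_⟩
      have hq : n + 1 - (p + 1) = n - p := by omega
      rw [hg', hgp, mul_smul_comm, ← mul_assoc, ← pow_succ', hq]
    · -- first factor not a multiple of y: show last factor is multiple of z
      push_neg at hA
      obtain ⟨w0, hw0supp, hw0ne⟩ := hA
      obtain ⟨d₀, rfl⟩ := length_eq_one.1 (hl v₀ (List.mem_cons_self) w0 hw0supp)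
      have hd0 : d₀ ≠ y := fun h => hw0ne (by rw [h])
      set vL := l'.getLast (by simp [hl'def]) with hvLdef
      set mid := l'.dropLast with hmiddef
      have hsplit : mid ++ [vL] = l' := List.dropLast_append_getLast _
      have hmidlen : mid.length = n := by
        have h2 := congrArg List.length hsplit
        rw [hl'def] at h2
        simp at h2
        omega
      have hmidl : ∀ u ∈ mid, u ∈ v₀ :: l' := fun u hu =>
        List.mem_cons_of_mem _ (List.dropLast_subset _ hu)
      have hvLl : vL ∈ v₀ :: l' := List.mem_cons_of_mem _ (List.getLast_mem _)
      have hB : ∀ w ∈ vL.coeff.support, w = of z := by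
        by_contra hB
        push_neg at hB
        obtain ⟨wL, hwLsupp, hwLne⟩ := hB
        obtain ⟨dL, rfl⟩ := length_eq_one.1 (hl vL hvLl wL hwLsupp)
        have hdL : dL ≠ z := fun h => hwLne (by rw [h])
        obtain ⟨csmid, hcslen, hcsmem⟩ := exists_picks mid
          (fun u hu => hl u (hmidl u hu)) (fun u hu => hnz u (hmidl u hu))
        set cs : List X := d₀ :: (csmid ++ [dL]) with hcsdef
        have hWcoeff : (v₀ :: l').prod.coeff (FreeMonoid.ofList cs) ≠ 0 := by
          refine key_coeff _ hl cs ?_ ?_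
          · have h5 : csmid.length = mid.length := hcslen
            simp [hcsdef, hl'def]
            omega
          · intro p hp
            have hzip : (v₀ :: l').zip cs =
                (v₀, d₀) :: ((mid.zip csmid) ++ [(vL, dL)]) := by
              conv_lhs => rw [← hsplit]
              rw [hcsdef, List.zip_cons_cons, List.zip_append hcslen.symm]
              rfl
            rw [hzip] at hp
            rcases List.mem_cons.1 hp with h | h
            · rw [h]; exact hw0supp
            · rcases List.mem_append.1 h with h | h
              · exact hcsmem p h
              · rw [List.mem_singleton.1 h]; exact hwLsupp
        have hlhs1 : (MonoidAlgebra.single (of y) (1:k) * g).coeff (FreeMonoid.ofList cs) = 0 := by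
          rw [single_one_mul_md]
          refine Finsupp.mapDomain_notin_range _ _ ?_
          rintro ⟨u, hu⟩
          have h2 := congrArg toList hu
          rw [toList_of_mul] at h2
          rw [hcsdef] at h2
          injection h2 with h3 _
          exact hd0 h3.symm
        have hlhs2 : (g * MonoidAlgebra.single (of z) (1:k)).coeff (FreeMonoid.ofList cs) = 0 := by
          rw [mul_single_one_md]
          refine Finsupp.mapDomain_notin_range _ _ ?_
          rintro ⟨u, hu⟩
          have h2 := congrArg toList hu
          rw [toList_mul_of] at h2
          have h3 := congrArg List.getLast? h2
          rw [List.getLast?_concat] at h3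
          have h4 : toList (FreeMonoid.ofList cs) = (d₀ :: csmid) ++ [dL] := by
            rw [hcsdef]; rfl
          rw [h4, List.getLast?_concat] at h3
          exact hdL (Option.some.inj h3.symm)
        have hc := congrArg (fun h : MonoidAlgebra k (FreeMonoid X) => h.coeff (FreeMonoid.ofList cs)) heq
        rw [MonoidAlgebra.coeff_add, Finsupp.add_apply, MonoidAlgebra.coeff_smul_apply,
          MonoidAlgebra.coeff_smul_apply, hlhs1, hlhs2] at hc
        refine hWcoeff ?_
        simpa using hc.symm
      -- now peel on the right
      have hvL : vL = MonoidAlgebra.single (of z) (vL.coeff (of z)) :=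
        MonoidAlgebra.coeff_injective
          (Finsupp.support_subset_singleton.1 (fun w hw => Finset.mem_singleton.2 (hB w hw)))
      set b := vL.coeff (of z) with hbdef
      have hb : b ≠ 0 := by
        intro h0
        exact hnz vL hvLl (by rw [hvL, h0]; simp)
      have hsplit2 : (v₀ :: l').prod = (v₀ :: mid).prod * vL := by
        conv_lhs => rw [← hsplit]
        rw [List.prod_cons, List.prod_cons, List.prod_append, List.prod_singleton, mul_assoc]
      have hQ : (v₀ :: mid).prod ≠ 0 := by
        intro h0
        exact hne (by rw [hsplit2, h0, zero_mul])
      have hend : ∀ w ∈ g.coeff.support, ∃ u, w = u * of z := by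
        intro w hw
        have hwz : of y * w ∈ (MonoidAlgebra.single (of y) (1:k) * g).coeff.support := by
          rw [single_one_mul_md]
          exact Finsupp.mem_support_iff.2 (by
            rw [Finsupp.mapDomain_apply (mul_right_injective _)]
            exact Finsupp.mem_support_iff.1 hw)
        have heq2 : β • (MonoidAlgebra.single (of y) (1:k) * g) =
            (v₀ :: l').prod - γ • (g * MonoidAlgebra.single (of z) 1) := by
          rw [← heq]; abel
        have hmem : of y * w ∈ ((v₀ :: l').prod -
            γ • (g * MonoidAlgebra.single (of z) (1:k))).coeff.support := by
          rw [← heq2, MonoidAlgebra.coeff_smul, Finsupp.support_smul_eq hβ]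
          exact hwz
        rw [MonoidAlgebra.coeff_sub] at hmem
        have := Finsupp.support_sub hmem
        rcases Finset.mem_union.1 this with hm | hm
        · have hm2 : of y * w ∈ ((b • (v₀ :: mid).prod) *
              MonoidAlgebra.single (of z) (1:k)).coeff.support := by
            have : (v₀ :: l').prod =
                (b • (v₀ :: mid).prod) * MonoidAlgebra.single (of z) (1:k) := by
              rw [hsplit2, hvL, single_md, mul_smul_comm, smul_mul_assoc]
            rwa [this] at hm
          obtain ⟨u, _, hmu⟩ := supp_mul_single hm2
          exact ends_of_mul_start (by rw [hg w hw]; omega) hmu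
        · have hm2 : of y * w ∈ (g * MonoidAlgebra.single (of z) (1:k)).coeff.support := by
            rwa [MonoidAlgebra.coeff_smul, Finsupp.support_smul_eq hγ] at hm
          obtain ⟨u, _, hmu⟩ := supp_mul_single hm2
          exact ends_of_mul_start (by rw [hg w hw]; omega) hmu
      obtain ⟨g', hg'⟩ := eq_mul_single hend
      have hco : ∀ u, g.coeff (u * of z) = g'.coeff u := by
        intro u
        rw [hg', mul_single_one_md, Finsupp.mapDomain_apply (mul_left_injective _)]
      have hg'hom : ∀ u ∈ g'.coeff.support, u.length = n := by
        intro u hu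
        have : u * of z ∈ g.coeff.support :=
          Finsupp.mem_support_iff.2 (by rw [hco]; exact Finsupp.mem_support_iff.1 hu)
        have h2 := hg _ this
        rw [length_mul, length_of] at h2
        omega
      have e1 : β • (MonoidAlgebra.single (of y) (1:k) * g) +
          γ • (g * MonoidAlgebra.single (of z) 1) =
          (β • (MonoidAlgebra.single (of y) (1:k) * g') +
           γ • (g' * MonoidAlgebra.single (of z) 1)) *
            MonoidAlgebra.single (of z) (1:k) := by
        rw [hg']
        simp only [add_mul, smul_mul_assoc, mul_assoc]
      have e2 : (v₀ :: l').prod =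
          (((b • v₀) :: mid).prod) * MonoidAlgebra.single (of z) (1:k) := by
        rw [hsplit2, hvL]
        simp only [List.prod_cons]
        rw [single_md, mul_smul_comm, smul_mul_assoc, smul_mul_assoc]
      have heq3 : β • (MonoidAlgebra.single (of y) (1:k) * g') +
          γ • (g' * MonoidAlgebra.single (of z) 1) = ((b • v₀) :: mid).prod :=
        right_cancel_single _ (by rw [← e1, ← e2, heq])
      have hprodne : ((b • v₀) :: mid).prod ≠ 0 := by
        have : ((b • v₀) :: mid).prod = b • (v₀ :: mid).prod := by
          rw [List.prod_cons, smul_mul_assoc, List.prod_cons]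
        rw [this]
        exact smul_ne_zero hb hQ
      obtain ⟨α, p, hp, hgp⟩ := IH g' hg'hom ((b • v₀) :: mid)
        (by simp; omega)
        (by
          intro u hu w hw
          rcases List.mem_cons.1 hu with h | h
          · rw [h, MonoidAlgebra.coeff_smul] at hw
            exact hl v₀ (List.mem_cons_self) w (Finsupp.support_smul hw)
          · exact hl u (hmidl u h) w hw)
        heq3 hprodne
      refine ⟨α, p, by omega, ?_⟩
      have hq : n + 1 - p = (n - p) + 1 := by omega
      rw [hg', hgp, smul_mul_assoc, mul_assoc, ← pow_succ, hq]

def Wdeg (k X : Type) [Field k] (n : ℕ) : Submodule k (MonoidAlgebra k (FreeMonoid X)) where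
  carrier := {g | ∀ w ∈ g.coeff.support, w.length = n}
  add_mem' := by
    classical
    intro a b ha hb w hw
    rw [MonoidAlgebra.coeff_add] at hw
    rcases Finset.mem_union.1 (Finsupp.support_add hw) with h | h
    · exact ha w h
    · exact hb w h
  zero_mem' := by simp
  smul_mem' := by
    intro c g hg w hw
    rw [MonoidAlgebra.coeff_smul] at hw
    exact hg w (Finsupp.support_smul hw)

lemma mem_Wdeg {n : ℕ} {g : MonoidAlgebra k (FreeMonoid X)} :
    g ∈ Wdeg k X n ↔ ∀ w ∈ g.coeff.support, w.length = n := Iff.rfl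

lemma Wdeg_mul_le (n₁ n₂ : ℕ) : Wdeg k X n₁ * Wdeg k X n₂ ≤ Wdeg k X (n₁ + n₂) := by
  classical
  refine Submodule.mul_le.2 fun f hf g hg => ?_
  intro w hw
  obtain ⟨u, hu, v, hv, rfl⟩ := Finset.mem_mul.1 (MonoidAlgebra.support_coeff_mul_subset f g hw)
  rw [length_mul, hf u hu, hg v hv]

lemma span_pow_le_Wdeg (S : Set (MonoidAlgebra k (FreeMonoid X)))
    (hS : ∀ u ∈ S, ∀ w ∈ u.coeff.support, w.length = 1) (n : ℕ) :
    Submodule.span k S ^ n ≤ Wdeg k X n := by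
  induction n with
  | zero =>
    rw [pow_zero, Submodule.one_eq_span, Submodule.span_le, Set.singleton_subset_iff]
    intro w hw
    have := Finsupp.support_single_subset
      (show w ∈ (Finsupp.single (1 : FreeMonoid X) (1:k)).support from hw)
    rw [Finset.mem_singleton] at this
    rw [this]
    rfl
  | succ n ih =>
    rw [pow_succ]
    refine le_trans (mul_le_mul' ih ?_) (Wdeg_mul_le n 1)
    rw [Submodule.span_le]
    intro u hu
    exact hS u hu


theorem stmt13 (k : Type) [Field k] [IsAlgClosed k] (s m : ℕ) (hs : 2 < s)
    (f : FreeAlgebra k (Fin m ⊕ Fin 2))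
    (hf : f ∈ faGens k (Fin m ⊕ Fin 2) ^ (s - 1))
    (β γ : k) (hβ : β ≠ 0) (hγ : γ ≠ 0)
    (v : Fin s → FreeAlgebra k (Fin m ⊕ Fin 2))
    (hv : ∀ i, v i ∈ faGens k (Fin m ⊕ Fin 2))
    (heq : β • (FreeAlgebra.ι k (Sum.inr 0 : Fin m ⊕ Fin 2) * f) +
        γ • (f * FreeAlgebra.ι k (Sum.inr 1 : Fin m ⊕ Fin 2)) = (List.ofFn v).prod)
    (hne : (List.ofFn v).prod ≠ 0) :
    ∃ (α : k) (p : ℕ), p ≤ s - 1 ∧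
      f = α • (FreeAlgebra.ι k (Sum.inr 0 : Fin m ⊕ Fin 2) ^ p *
        FreeAlgebra.ι k (Sum.inr 1 : Fin m ⊕ Fin 2) ^ (s - 1 - p)) := by
  classical
  set y : Fin m ⊕ Fin 2 := Sum.inr 0 with hydef
  set z : Fin m ⊕ Fin 2 := Sum.inr 1 with hzdef
  set e := (FreeAlgebra.equivMonoidAlgebraFreeMonoid :
    FreeAlgebra k (Fin m ⊕ Fin 2) ≃ₐ[k] MonoidAlgebra k (FreeMonoid (Fin m ⊕ Fin 2))) with hedef
  have he : ∀ x : Fin m ⊕ Fin 2, e (FreeAlgebra.ι k x) = MonoidAlgebra.single (FreeMonoid.of x) (1:k) := by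
    intro x
    simp [hedef, FreeAlgebra.equivMonoidAlgebraFreeMonoid]
  have hS : ∀ u ∈ Set.range (fun x : Fin m ⊕ Fin 2 => MonoidAlgebra.single (FreeMonoid.of x) (1:k)),
      ∀ w ∈ u.coeff.support, w.length = 1 := by
    rintro u ⟨x, rfl⟩ w hw
    have h2 := Finsupp.support_single_subset hw
    rw [Finset.mem_singleton] at h2
    rw [h2, length_of]
  have hmapgens : Submodule.map e.toAlgHom.toLinearMap (faGens k (Fin m ⊕ Fin 2)) =
      Submodule.span k (Set.range (fun x : Fin m ⊕ Fin 2 => MonoidAlgebra.single (FreeMonoid.of x) (1:k))) := by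
    rw [faGens, Submodule.map_span]
    congr 1
    rw [← Set.range_comp]
    exact congrArg Set.range (funext fun x => he x)
  have hfM : ∀ w ∈ (e f).coeff.support, w.length = s - 1 := by
    have h1 : e f ∈ Submodule.map e.toAlgHom.toLinearMap (faGens k (Fin m ⊕ Fin 2) ^ (s-1)) :=
      Submodule.mem_map_of_mem hf
    rw [Submodule.map_pow, hmapgens] at h1
    exact span_pow_le_Wdeg _ (fun u hu => hS u hu) (s-1) h1
  have hvM : ∀ i, ∀ w ∈ (e (v i)).coeff.support, w.length = 1 := by
    intro i
    have h1 : e (v i) ∈ Submodule.map e.toAlgHom.toLinearMap (faGens k (Fin m ⊕ Fin 2)) :=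
      Submodule.mem_map_of_mem (hv i)
    rw [hmapgens] at h1
    exact span_pow_le_Wdeg _ (fun u hu => hS u hu) 1 (by rwa [pow_one])
  have heqM : β • (MonoidAlgebra.single (FreeMonoid.of y) 1 * e f) +
      γ • (e f * MonoidAlgebra.single (FreeMonoid.of z) 1) =
      (List.ofFn (⇑e ∘ v)).prod := by
    have h2 := congrArg e heq
    rw [map_add, map_smul, map_smul, map_mul, map_mul, he, he, map_list_prod,
      List.map_ofFn] at h2
    exact h2
  have hlen : (List.ofFn (⇑e ∘ v)).length = (s - 1) + 1 := by
    rw [List.length_ofFn]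
    omega
  have hneM : (List.ofFn (⇑e ∘ v)).prod ≠ 0 := by
    intro h0
    apply hne
    have h3 : e ((List.ofFn v).prod) = e 0 := by
      rw [map_list_prod, List.map_ofFn, map_zero]
      exact h0
    exact e.injective h3
  obtain ⟨α, p, hp, hgp⟩ := key_lemma y z β γ hβ hγ (s-1) (e f) hfM
    (List.ofFn (⇑e ∘ v)) hlen
    (by
      intro u hu w hw
      obtain ⟨i, rfl⟩ := List.mem_ofFn.1 hu
      exact hvM i w hw)
    heqM hneM
  refine ⟨α, p, hp, ?_⟩
  apply e.injective
  rw [hgp, map_smul, map_mul, map_pow, map_pow, he, he]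

end
end
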